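/- arXiv:1202.6219 — 8 statements merged into one kernel-verified Lean document; each statement's English description precedes it below -/
import Mathlib

section
/- Let G be a digraph on n vertices with minimum semidegree δ⁰(G) ≥ (1/2+ε)n, where 0 < ν ≤ τ ≤ ε < 1 and ε ≥ 2ν/τ. Then G is a robust (ν,τ)-outexpander, i.e., for every set S ⊆ V(G) with τn ≤ |S| ≤ (1-τ)n, the set of vertices with at least νn inneighbours in S has size at least |S| + νn. -/
open Finset
open scoped Classical

/-- The out-degree of a vertex in a digraph. -/
noncomputable def outDeg {V : Type*} [Fintype V] (G : V → V → Prop) (x : V) : ℕ :=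
  (Finset.univ.filter (fun y => G x y)).card

/-- The in-degree of a vertex in a digraph. -/
noncomputable def inDeg {V : Type*} [Fintype V] (G : V → V → Prop) (x : V) : ℕ :=
  (Finset.univ.filter (fun y => G y x)).card

/-- The ν-robust outneighbourhood of a set `S`: all vertices with at least
`ν * n` inneighbours in `S`. -/
noncomputable def robustOutNbhd {V : Type*} [Fintype V] (G : V → V → Prop) (ν : ℝ)
    (S : Finset V) : Finset V :=
  Finset.univ.filter (fun x => ν * (Fintype.card V : ℝ) ≤ ((S.filter (fun y => G y x)).card : ℝ))

/-- `G` is a robust `(ν,τ)`-outexpander. -/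
def IsRobustOutexpander {V : Type*} [Fintype V] (G : V → V → Prop) (ν τ : ℝ) : Prop :=
  ∀ S : Finset V, τ * (Fintype.card V : ℝ) ≤ (S.card : ℝ) →
    (S.card : ℝ) ≤ (1 - τ) * (Fintype.card V : ℝ) →
    (S.card : ℝ) + ν * (Fintype.card V : ℝ) ≤ ((robustOutNbhd G ν S).card : ℝ)

/-- Lemma on regular digraphs being robust outexpanders.
If `G` is a digraph on `n` vertices with minimum semidegree at least `(1/2+ε)n`,
where `0 < ν ≤ τ ≤ ε < 1` and `ε ≥ 2ν/τ`, then `G` is a robust `(ν,τ)`-outexpander. -/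
theorem stmt0 {V : Type*} [Fintype V] (G : V → V → Prop) (ν τ ε : ℝ)
    (hν : 0 < ν) (hντ : ν ≤ τ) (hτε : τ ≤ ε) (hε : ε < 1) (hratio : 2 * ν / τ ≤ ε)
    (hdeg : ∀ x : V, (1 / 2 + ε) * (Fintype.card V : ℝ) ≤ (outDeg G x : ℝ) ∧
      (1 / 2 + ε) * (Fintype.card V : ℝ) ≤ (inDeg G x : ℝ)) :
    IsRobustOutexpander G ν τ := by
  intro S hS1 hS2
  set n : ℝ := (Fintype.card V : ℝ) with hn
  have hτ : 0 < τ := lt_of_lt_of_le hν hντ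
  have hετ : 2 * ν ≤ ε * τ := by
    rw [div_le_iff₀ hτ] at hratio; linarith
  have hε2ν : 2 * ν ≤ ε := by nlinarith
  rcases Nat.eq_zero_or_pos (Fintype.card V) with h0 | hpos
  · have : S = ∅ := Finset.eq_empty_of_forall_notMem (fun x _ => by
      have := Fintype.card_eq_zero_iff.mp h0
      exact this.elim x)
    subst this
    simp only [Finset.card_empty, Nat.cast_zero, zero_add]
    have : n = 0 := by simp [hn, h0]
    rw [this]
    simpa using (Nat.cast_nonneg (robustOutNbhd G ν ∅).card)
  have hn0 : 0 < n := by rw [hn]; exact_mod_cast hpos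
  set RN := robustOutNbhd G ν S with hRN
  by_cases hcase : (S.card : ℝ) ≤ (1 / 2 + ε / 2 - ν) * n
  · -- counting argument
    have key : (∑ x : V, ((S.filter (fun y => G y x)).card : ℝ))
        = ∑ y ∈ S, (outDeg G y : ℝ) := by
      norm_cast
      simp only [Finset.card_filter, outDeg]
      exact Finset.sum_comm
    have hlow : (S.card : ℝ) * ((1 / 2 + ε) * n) ≤ ∑ y ∈ S, (outDeg G y : ℝ) := by
      have := Finset.card_nsmul_le_sum S (fun y => (outDeg G y : ℝ)) ((1 / 2 + ε) * n)
        (fun y _ => (hdeg y).1)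
      simpa [nsmul_eq_mul] using this
    have hsplit : (∑ x : V, ((S.filter (fun y => G y x)).card : ℝ))
        = (∑ x ∈ RN, ((S.filter (fun y => G y x)).card : ℝ))
          + ∑ x ∈ Finset.univ.filter
              (fun x => ¬ ν * n ≤ ((S.filter (fun y => G y x)).card : ℝ)),
              ((S.filter (fun y => G y x)).card : ℝ) := by
      rw [hRN, robustOutNbhd]
      exact (Finset.sum_filter_add_sum_filter_not Finset.univ _ _).symm
    have h1 : (∑ x ∈ RN, ((S.filter (fun y => G y x)).card : ℝ))
        ≤ (RN.card : ℝ) * (S.card : ℝ) := by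
      have := Finset.sum_le_card_nsmul RN (fun x => ((S.filter (fun y => G y x)).card : ℝ))
        ((S.card : ℝ)) (fun x _ => Nat.cast_le.mpr (Finset.card_filter_le S _))
      simpa [nsmul_eq_mul] using this
    have h2 : (∑ x ∈ Finset.univ.filter
              (fun x => ¬ ν * n ≤ ((S.filter (fun y => G y x)).card : ℝ)),
              ((S.filter (fun y => G y x)).card : ℝ)) ≤ n * (ν * n) := by
      have hb := Finset.sum_le_card_nsmul (Finset.univ.filter
          (fun x => ¬ ν * n ≤ ((S.filter (fun y => G y x)).card : ℝ)))
          (fun x => ((S.filter (fun y => G y x)).card : ℝ)) (ν * n)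
          (fun x hx => le_of_lt (not_le.mp (Finset.mem_filter.mp hx).2))
      rw [nsmul_eq_mul] at hb
      refine hb.trans ?_
      have hcard : ((Finset.univ.filter
          (fun x => ¬ ν * n ≤ ((S.filter (fun y => G y x)).card : ℝ))).card : ℝ) ≤ n := by
        rw [hn]; exact_mod_cast Finset.card_filter_le _ _
      have : (0:ℝ) ≤ ν * n := by positivity
      nlinarith
    have hmain : (S.card : ℝ) * ((1 / 2 + ε) * n) ≤ (RN.card : ℝ) * (S.card : ℝ) + n * (ν * n) := by
      rw [← key] at hlow
      rw [hsplit] at hlow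
      linarith
    have hSpos : τ * n ≤ (S.card : ℝ) := hS1
    have hSpos' : 0 < (S.card : ℝ) := lt_of_lt_of_le (by positivity) hS1
    have hεpos : 0 < ε := lt_of_lt_of_le hν (le_trans hντ hτε)
    have hfinal : ((S.card : ℝ) + ν * n) * (S.card : ℝ) ≤ (RN.card : ℝ) * (S.card : ℝ) := by
      nlinarith [mul_le_mul_of_nonneg_right hcase hSpos'.le,
        mul_le_mul_of_nonneg_right hετ (mul_self_nonneg n),
        mul_le_mul_of_nonneg_right (mul_le_mul_of_nonneg_left hS1 hεpos.le) hn0.le]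
    exact le_of_mul_le_mul_right hfinal hSpos'
  · -- S is large: every vertex is in RN
    push_neg at hcase
    have hall : RN = Finset.univ := by
      rw [hRN, robustOutNbhd]
      refine Finset.filter_true_of_mem (fun x _ => ?_)
      have hin := (hdeg x).2
      have hinter : (S.card : ℝ) + (inDeg G x : ℝ) - n
          ≤ ((S.filter (fun y => G y x)).card : ℝ) := by
        have heq : S.filter (fun y => G y x) = S ∩ Finset.univ.filter (fun y => G y x) := by
          ext y; simp
        have hU : (S ∪ Finset.univ.filter (fun y => G y x)).card ≤ Fintype.card V :=
          Finset.card_le_univ _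
        have hIU : (S ∩ Finset.univ.filter (fun y => G y x)).card
            + (S ∪ Finset.univ.filter (fun y => G y x)).card
            = S.card + (Finset.univ.filter (fun y => G y x)).card :=
          Finset.card_inter_add_card_union _ _
        rw [heq]
        have : (inDeg G x : ℕ) = (Finset.univ.filter (fun y => G y x)).card := rfl
        push_cast [inDeg]
        have hU' : ((S ∪ Finset.univ.filter (fun y => G y x)).card : ℝ) ≤ n := by
          rw [hn]; exact_mod_cast hU
        have hIU' : ((S ∩ Finset.univ.filter (fun y => G y x)).card : ℝ)
            + ((S ∪ Finset.univ.filter (fun y => G y x)).card : ℝ)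
            = (S.card : ℝ) + ((Finset.univ.filter (fun y => G y x)).card : ℝ) := by
          exact_mod_cast hIU
        linarith
      nlinarith
    rw [hall]
    have : ((Finset.univ : Finset V).card : ℝ) = n := by
      simp [hn]
    rw [this]
    nlinarith
end

section
/- Let R be a robust (ν,τ)-outexpander on k vertices with δ⁰(R) ≥ 2τk and ν ≤ τ ≤ 1/3, and let C be a Hamilton cycle in R. Then for any vertices A, B of R and any set V' of vertices with |V'| ≤ νk/4, there is a chord sequence from A to B in R containing at most 3/ν edges whose interior avoids V'. -/
open Finset
open scoped Classical

/-- Reachability by a chord sequence of `i` edges from `A` whose interior avoids `V'`. -/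
def ChordReach {V : Type*} (R : V → V → Prop) (σ : Equiv.Perm V) (A : V) (V' : Finset V)
    (i : ℕ) (x : V) : Prop :=
  ∃ W : ℕ → V, W 0 = A ∧ W i = x ∧ (∀ j < i, R (σ.symm (W j)) (W (j + 1))) ∧
    (∀ j, 0 < j → j < i → W j ∉ V' ∧ σ.symm (W j) ∉ V')

lemma chordReach_extend {V : Type*} {R : V → V → Prop} {σ : Equiv.Perm V} {A : V}
    {V' : Finset V} {i : ℕ} {x y : V} (hx : ChordReach R σ A V' i x)
    (hx1 : x ∉ V') (hx2 : σ.symm x ∉ V') (hy : R (σ.symm x) y) :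
    ChordReach R σ A V' (i + 1) y := by
  obtain ⟨W, h0, hi, hE, hI⟩ := hx
  refine ⟨fun j => if j ≤ i then W j else y, by simp [h0], by simp, ?_, ?_⟩
  · intro j hj
    rcases lt_or_eq_of_le (Nat.lt_succ_iff.mp hj) with h | h
    · simpa [Nat.le_of_lt h, Nat.succ_le_of_lt h] using hE j h
    · subst h
      simpa [hi] using hy
  · intro j hj0 hj
    rcases lt_or_eq_of_le (Nat.lt_succ_iff.mp hj) with h | h
    · simpa [Nat.le_of_lt h] using hI j hj0 h
    · subst h
      simpa [hi] using ⟨hx1, hx2⟩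

/-- The set of endpoints of chord sequences of `i` edges from `A`, avoiding `V'`
and whose cycle-predecessor also avoids `V'`. -/
noncomputable def ChordSet {V : Type*} [Fintype V] (R : V → V → Prop) (σ : Equiv.Perm V)
    (A : V) (V' : Finset V) (i : ℕ) : Finset V :=
  Finset.univ.filter (fun x => ChordReach R σ A V' i x ∧ x ∉ V' ∧ σ.symm x ∉ V')

/-- Lemma: chord sequences avoiding a small set.
`R` is a robust `(ν,τ)`-outexpander on `k` vertices with `δ⁰(R) ≥ 2τk` and `ν ≤ τ ≤ 1/3`.
A Hamilton cycle `C` of `R` is encoded by its successor permutation `σ`: a single cycle all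
of whose edges `x → σ x` lie in `R`. A chord sequence from `A` to `B` is encoded by a
sequence `W 0 = A, W 1, …, W t = B` whose chord edges are `σ⁻¹(W i) → W (i+1) ∈ E(R)`;
its interior consists of the vertices `W i` and `σ⁻¹(W i)` for `0 < i < t`.
Given any `A`, `B` and a set `V'` with `|V'| ≤ νk/4`, there is such a chord sequence with
at most `3/ν` edges whose interior avoids `V'`. -/
theorem stmt4 {V : Type*} [Fintype V] (R : V → V → Prop) (ν τ : ℝ)
    (hν : 0 < ν) (hντ : ν ≤ τ) (hτ : τ ≤ 1 / 3)
    (hR : IsRobustOutexpander R ν τ)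
    (hdeg : ∀ x : V, 2 * τ * (Fintype.card V : ℝ) ≤ (outDeg R x : ℝ) ∧
      2 * τ * (Fintype.card V : ℝ) ≤ (inDeg R x : ℝ))
    (σ : Equiv.Perm V) (hham : ∀ x, R x (σ x)) (hcyc : ∀ x y, σ.SameCycle x y)
    (A B : V) (V' : Finset V) (hV' : (V'.card : ℝ) ≤ ν * (Fintype.card V : ℝ) / 4) :
    ∃ (t : ℕ) (W : ℕ → V), W 0 = A ∧ W t = B ∧
      (∀ i < t, R (σ.symm (W i)) (W (i + 1))) ∧
      (t : ℝ) ≤ 3 / ν ∧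
      (∀ i, 0 < i → i < t → W i ∉ V' ∧ σ.symm (W i) ∉ V') := by
  classical
  have hne : Nonempty V := ⟨A⟩
  set k : ℝ := (Fintype.card V : ℝ) with hkdef
  have hk1 : (1:ℝ) ≤ k := by
    have : 1 ≤ Fintype.card V := Fintype.card_pos
    rw [hkdef]
    exact_mod_cast this
  have hk0 : (0:ℝ) < k := by linarith
  have hτ0 : (0:ℝ) < τ := lt_of_lt_of_le hν hντ
  have hνk : (0:ℝ) < ν * k := mul_pos hν hk0
  have hνττ : ν * k ≤ τ * k := mul_le_mul_of_nonneg_right hντ hk0.le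
  -- the forbidden set
  set F : Finset V := V' ∪ V'.image (fun z => σ z) with hF
  have hFcard : (F.card : ℝ) ≤ ν * k / 2 := by
    have h1 : F.card ≤ V'.card + (V'.image (fun z => σ z)).card := Finset.card_union_le _ _
    have h2 : (V'.image (fun z => σ z)).card ≤ V'.card := Finset.card_image_le
    have h3 : (F.card : ℝ) ≤ (V'.card : ℝ) + (V'.card : ℝ) := by
      have := le_trans h1 (Nat.add_le_add_left h2 _)
      exact_mod_cast this
    linarith
  have hFmem : ∀ y : V, y ∉ F ↔ (y ∉ V' ∧ σ.symm y ∉ V') := by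
    intro y
    rw [hF, Finset.mem_union, not_or]
    constructor
    · rintro ⟨h1, h2⟩
      refine ⟨h1, fun hc => h2 ?_⟩
      exact Finset.mem_image.mpr ⟨σ.symm y, hc, σ.apply_symm_apply y⟩
    · rintro ⟨h1, h2⟩
      refine ⟨h1, fun hc => ?_⟩
      obtain ⟨a, ha, hay⟩ := Finset.mem_image.mp hc
      exact h2 (by rw [← hay, σ.symm_apply_apply]; exact ha)
  have hcard_le : ∀ i : ℕ, ((ChordSet R σ A V' i).card : ℝ) ≤ k := by
    intro i
    rw [hkdef]
    exact_mod_cast Finset.card_le_univ _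
  -- base case: the first chord-set is large
  have hbase : 3/2 * τ * k ≤ ((ChordSet R σ A V' 1).card : ℝ) := by
    have hsub : (Finset.univ.filter (fun y => R (σ.symm A) y)) \ F ⊆ ChordSet R σ A V' 1 := by
      intro y hy
      rw [Finset.mem_sdiff, Finset.mem_filter] at hy
      obtain ⟨⟨-, hRy⟩, hyF⟩ := hy
      have hm := (hFmem y).mp hyF
      refine Finset.mem_filter.mpr ⟨Finset.mem_univ _, ?_, hm.1, hm.2⟩
      refine ⟨fun j => if j = 0 then A else y, by simp, by simp, ?_, ?_⟩
      · intro j hj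
        interval_cases j
        simpa using hRy
      · intro j h1 h2
        omega
    have hd := (hdeg (σ.symm A)).1
    have hdD : 2 * τ * k ≤ (((Finset.univ.filter (fun y => R (σ.symm A) y)).card : ℕ) : ℝ) := hd
    have h2 := Finset.card_le_card_sdiff_add_card
      (s := Finset.univ.filter (fun y => R (σ.symm A) y)) (t := F)
    have h3 := Finset.card_le_card hsub
    have hc2 : (((Finset.univ.filter (fun y => R (σ.symm A) y)).card : ℕ) : ℝ) ≤
        (((Finset.univ.filter (fun y => R (σ.symm A) y)) \ F).card : ℝ) + (F.card : ℝ) := by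
      exact_mod_cast h2
    have hc3 : ((((Finset.univ.filter (fun y => R (σ.symm A) y)) \ F).card : ℕ) : ℝ) ≤
        ((ChordSet R σ A V' 1).card : ℝ) := by exact_mod_cast h3
    linarith
  -- growth step
  have hgrow : ∀ i : ℕ, τ * k ≤ ((ChordSet R σ A V' i).card : ℝ) →
      ((ChordSet R σ A V' i).card : ℝ) ≤ (1 - τ) * k →
      ((ChordSet R σ A V' i).card : ℝ) + ν * k / 2 ≤ ((ChordSet R σ A V' (i+1)).card : ℝ) := by
    intro i hlo hhi
    set S := (ChordSet R σ A V' i).image (fun z => σ.symm z) with hS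
    have hScard : (S.card : ℝ) = ((ChordSet R σ A V' i).card : ℝ) := by
      rw [hS, Finset.card_image_of_injective _ σ.symm.injective]
    have hexp := hR S (by rw [hScard]; exact hlo) (by rw [hScard]; exact hhi)
    rw [hScard] at hexp
    have hsub : robustOutNbhd R ν S \ F ⊆ ChordSet R σ A V' (i+1) := by
      intro y hy
      rw [Finset.mem_sdiff] at hy
      obtain ⟨hyR, hyF⟩ := hy
      have hm := (hFmem y).mp hyF
      rw [robustOutNbhd, Finset.mem_filter] at hyR
      have hposn : (0:ℝ) < ((S.filter (fun z => R z y)).card : ℝ) := lt_of_lt_of_le hνk hyR.2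
      have hnonempty : (S.filter (fun z => R z y)).Nonempty := by
        rw [← Finset.card_pos]
        exact_mod_cast hposn
      obtain ⟨z, hz⟩ := hnonempty
      rw [Finset.mem_filter] at hz
      obtain ⟨hzS, hzy⟩ := hz
      rw [hS, Finset.mem_image] at hzS
      obtain ⟨x, hxX, hxz⟩ := hzS
      rw [ChordSet, Finset.mem_filter] at hxX
      obtain ⟨-, hreach, hx1, hx2⟩ := hxX
      refine Finset.mem_filter.mpr ⟨Finset.mem_univ _, ?_, hm.1, hm.2⟩
      exact chordReach_extend hreach hx1 hx2 (hxz ▸ hzy)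
    have h2 := Finset.card_le_card_sdiff_add_card (s := robustOutNbhd R ν S) (t := F)
    have h3 := Finset.card_le_card hsub
    have hc2 : ((robustOutNbhd R ν S).card : ℝ) ≤
        ((robustOutNbhd R ν S \ F).card : ℝ) + (F.card : ℝ) := by exact_mod_cast h2
    have hc3 : ((robustOutNbhd R ν S \ F).card : ℝ) ≤ ((ChordSet R σ A V' (i+1)).card : ℝ) := by
      exact_mod_cast h3
    linarith
  -- main induction
  have key : ∀ n : ℕ, (∃ m ≤ n + 1, (1 - τ) * k < ((ChordSet R σ A V' m).card : ℝ)) ∨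
      (τ * k ≤ ((ChordSet R σ A V' (n+1)).card : ℝ) ∧
        ((n : ℝ) + 3) * (ν * k / 2) ≤ ((ChordSet R σ A V' (n+1)).card : ℝ)) := by
    intro n
    induction n with
    | zero =>
      right
      have hτν : 3/2 * (ν * k) ≤ 3/2 * (τ * k) := by linarith
      constructor
      · nlinarith
      · push_cast
        nlinarith
    | succ n ih =>
      rcases ih with ⟨m, hm, hcard⟩ | ⟨h1, h2⟩
      · exact Or.inl ⟨m, le_trans hm (by omega), hcard⟩
      · by_cases hbig : (1 - τ) * k < ((ChordSet R σ A V' (n+1)).card : ℝ)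
        · exact Or.inl ⟨n+1, by omega, hbig⟩
        · right
          push_neg at hbig
          have hg := hgrow (n+1) h1 hbig
          refine ⟨by linarith, ?_⟩
          have he : (((n:ℝ)+1) + 3) * (ν * k / 2) = ((n:ℝ) + 3) * (ν * k / 2) + ν * k / 2 := by
            ring
          push_cast
          linarith
  -- choose the step where the chord-set gets huge
  set N : ℕ := ⌈(2:ℝ)/ν⌉₊ with hN
  obtain ⟨m, hmle, hmbig⟩ : ∃ m ≤ N + 1, (1 - τ) * k < ((ChordSet R σ A V' m).card : ℝ) := by
    rcases key N with h | ⟨-, h2⟩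
    · exact h
    · exfalso
      have hle := hcard_le (N + 1)
      have hceil : (2:ℝ)/ν ≤ (N : ℝ) := Nat.le_ceil _
      have e1 : ((2:ℝ)/ν + 3) * (ν * k / 2) = k + 3 * (ν * k / 2) := by
        field_simp
      have e2 : 0 ≤ (((N:ℝ)) - 2/ν) * (ν * k / 2) := by
        apply mul_nonneg (by linarith)
        positivity
      have e3 : ((N:ℝ) + 3) * (ν * k / 2) =
          ((2:ℝ)/ν + 3) * (ν * k / 2) + (((N:ℝ)) - 2/ν) * (ν * k / 2) := by ring
      linarith
  -- connect to B
  have hTcard : 2 * τ * k ≤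
      (((Finset.univ.filter (fun x => R x B)).image (fun z => σ z)).card : ℝ) := by
    rw [Finset.card_image_of_injective _ σ.injective]
    exact (hdeg B).2
  have hint : ((ChordSet R σ A V' m) ∩
      ((Finset.univ.filter (fun x => R x B)).image (fun z => σ z))).Nonempty := by
    rw [← Finset.card_pos]
    by_contra hcon
    push_neg at hcon
    interval_cases h : ((ChordSet R σ A V' m) ∩
      ((Finset.univ.filter (fun x => R x B)).image (fun z => σ z))).card
    have hu := Finset.card_union_add_card_inter (ChordSet R σ A V' m)
      ((Finset.univ.filter (fun x => R x B)).image (fun z => σ z))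
    rw [h] at hu
    have huu : ((ChordSet R σ A V' m) ∪
        ((Finset.univ.filter (fun x => R x B)).image (fun z => σ z))).card ≤ Fintype.card V :=
      Finset.card_le_univ _
    have hc1 : ((ChordSet R σ A V' m).card : ℝ) +
        (((Finset.univ.filter (fun x => R x B)).image (fun z => σ z)).card : ℝ) ≤ k := by
      rw [hkdef]
      have := le_trans (Nat.le_of_eq hu.symm) (by omega : ((ChordSet R σ A V' m) ∪
        ((Finset.univ.filter (fun x => R x B)).image (fun z => σ z))).card + 0 ≤ Fintype.card V)
      exact_mod_cast this
    nlinarith [mul_pos hτ0 hk0]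
  obtain ⟨x, hx⟩ := hint
  rw [Finset.mem_inter] at hx
  obtain ⟨hxX, hxT⟩ := hx
  obtain ⟨z, hz, hzx⟩ := Finset.mem_image.mp hxT
  rw [Finset.mem_filter] at hz
  have hRB : R (σ.symm x) B := by
    rw [← hzx, σ.symm_apply_apply]
    exact hz.2
  rw [ChordSet, Finset.mem_filter] at hxX
  obtain ⟨-, hreach, hx1, hx2⟩ := hxX
  obtain ⟨W, h0, hB, hE, hI⟩ := chordReach_extend hreach hx1 hx2 hRB
  refine ⟨m + 1, W, h0, hB, hE, ?_, hI⟩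
  -- the length bound
  have hceil : (N : ℝ) < 2/ν + 1 := by
    rw [hN]
    exact Nat.ceil_lt_add_one (by positivity)
  have hmN : (m : ℝ) ≤ (N : ℝ) + 1 := by exact_mod_cast hmle
  have h3ν : 3 * ν ≤ 1 := by linarith
  have hfin : (2:ℝ)/ν + 3 ≤ 3/ν := by
    have hdiff : (3:ℝ)/ν - (2/ν + 3) = (1 - 3*ν)/ν := by
      field_simp
      ring
    have : (0:ℝ) ≤ (1 - 3*ν)/ν := div_nonneg (by linarith) hν.le
    linarith
  push_cast
  linarith
end

section
/- Suppose 0 < 1/m ≪ ε ≤ d' ≤ d ≪ 1. Let G be a bipartite graph with vertex classes A and B each of size m, and let G' be obtained from G by removing at most d'm vertices from each class and at most d'm edges incident to each remaining vertex. If G is ε-regular of density at least d, then G' is 2√(d')-regular of density at least d − 2√(d'). -/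
open Finset
open scoped Classical

/-- Number of edges of a bipartite graph `G` between `X` and `Y`. -/
noncomputable def eCnt {A B : Type*} [Fintype A] [Fintype B] (G : A → B → Prop)
    (X : Finset A) (Y : Finset B) : ℕ :=
  ((X ×ˢ Y).filter (fun p => G p.1 p.2)).card

/-- Density of the bipartite graph `G` between `X` and `Y`. -/
noncomputable def dens {A B : Type*} [Fintype A] [Fintype B] (G : A → B → Prop)
    (X : Finset A) (Y : Finset B) : ℝ :=
  (eCnt G X Y : ℝ) / ((X.card : ℝ) * (Y.card : ℝ))

/-- `G` restricted to the pair `(A', B')` is ε-regular. -/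
def EpsRegularOn {A B : Type*} [Fintype A] [Fintype B] (G : A → B → Prop)
    (A' : Finset A) (B' : Finset B) (ε : ℝ) : Prop :=
  ∀ X : Finset A, X ⊆ A' → ∀ Y : Finset B, Y ⊆ B' →
    ε * (A'.card : ℝ) ≤ (X.card : ℝ) → ε * (B'.card : ℝ) ≤ (Y.card : ℝ) →
    |dens G X Y - dens G A' B'| < ε

set_option maxHeartbeats 1000000

private lemma eCnt_mono {A B : Type*} [Fintype A] [Fintype B] {G G' : A → B → Prop}
    (h : ∀ a b, G' a b → G a b) (X : Finset A) (Y : Finset B) :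
    eCnt G' X Y ≤ eCnt G X Y := by
  apply Finset.card_le_card
  apply Finset.monotone_filter_right
  intro p _ hp
  exact h _ _ hp

private lemma eCnt_le_add {A B : Type*} [Fintype A] [Fintype B] {G G' : A → B → Prop}
    (X : Finset A) (Y : Finset B) :
    eCnt G X Y ≤ eCnt G' X Y +
      ((X ×ˢ Y).filter (fun p => G p.1 p.2 ∧ ¬ G' p.1 p.2)).card := by
  have hsub : (X ×ˢ Y).filter (fun p => G p.1 p.2) ⊆
      (X ×ˢ Y).filter (fun p => G' p.1 p.2) ∪
      (X ×ˢ Y).filter (fun p => G p.1 p.2 ∧ ¬ G' p.1 p.2) := by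
    intro p hp
    simp only [mem_filter, mem_union] at *
    by_cases hG' : G' p.1 p.2
    · exact Or.inl ⟨hp.1, hG'⟩
    · exact Or.inr ⟨hp.1, hp.2, hG'⟩
  calc eCnt G X Y ≤ _ := Finset.card_le_card hsub
  _ ≤ _ := Finset.card_union_le _ _

private lemma removed_card_le {m : ℕ} {G G' : Fin m → Fin m → Prop}
    {A' B' X Y : Finset (Fin m)} {d' : ℝ}
    (hX : X ⊆ A') (hY : Y ⊆ B')
    (hrem : ∀ a ∈ A', ((B'.filter (fun b => G a b ∧ ¬ G' a b)).card : ℝ) ≤ d' * m) :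
    ((((X ×ˢ Y).filter (fun p => G p.1 p.2 ∧ ¬ G' p.1 p.2)).card : ℝ))
      ≤ X.card * (d' * m) := by
  set R := (X ×ˢ Y).filter (fun p => G p.1 p.2 ∧ ¬ G' p.1 p.2) with hR
  have hcard : R.card = ∑ a ∈ X, (R.filter (fun p => p.1 = a)).card := by
    apply Finset.card_eq_sum_card_fiberwise
    intro p hp
    simp only [hR, mem_coe, mem_filter, mem_product] at hp
    exact hp.1.1
  have hfib : ∀ a ∈ X, ((R.filter (fun p => p.1 = a)).card : ℝ)
      ≤ ((B'.filter (fun b => G a b ∧ ¬ G' a b)).card : ℝ) := by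
    intro a ha
    have : (R.filter (fun p => p.1 = a)).card
        ≤ (B'.filter (fun b => G a b ∧ ¬ G' a b)).card := by
      apply Finset.card_le_card_of_injOn (fun p => p.2)
      · intro p hp
        simp only [hR, mem_coe, mem_filter, mem_product] at hp ⊢
        obtain ⟨⟨⟨hpX, hpY⟩, hG, hG'⟩, hfst⟩ := hp
        subst hfst
        exact ⟨hY hpY, hG, hG'⟩
      · intro p hp q hq hpq
        simp only [hR, mem_coe, mem_filter] at hp hq
        exact Prod.ext (hp.2.trans hq.2.symm) hpq
    exact_mod_cast this
  calc (R.card : ℝ) = ∑ a ∈ X, ((R.filter (fun p => p.1 = a)).card : ℝ) := by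
        rw [hcard]; push_cast; ring
  _ ≤ ∑ a ∈ X, d' * m := by
        apply Finset.sum_le_sum
        intro a ha
        exact (hfib a ha).trans (hrem a (hX ha))
  _ = X.card * (d' * m) := by rw [Finset.sum_const, nsmul_eq_mul]

private lemma dens_pair {m : ℕ} {G G' : Fin m → Fin m → Prop}
    {A' B' X Y : Finset (Fin m)} {d' : ℝ}
    (h : ∀ a b, G' a b → G a b)
    (hX : X ⊆ A') (hY : Y ⊆ B')
    (hXpos : 0 < (X.card : ℝ)) (hYpos : 0 < (Y.card : ℝ))
    (hrem : ∀ a ∈ A', ((B'.filter (fun b => G a b ∧ ¬ G' a b)).card : ℝ) ≤ d' * m) :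
    dens G X Y - d' * m / Y.card ≤ dens G' X Y ∧ dens G' X Y ≤ dens G X Y := by
  have hxy : 0 < (X.card : ℝ) * (Y.card : ℝ) := mul_pos hXpos hYpos
  constructor
  · have h1 : (eCnt G X Y : ℝ) ≤ (eCnt G' X Y : ℝ) + X.card * (d' * m) := by
      have := removed_card_le hX hY hrem
      have h2 : (eCnt G X Y : ℝ) ≤ (eCnt G' X Y : ℝ) +
          ((((X ×ˢ Y).filter (fun p => G p.1 p.2 ∧ ¬ G' p.1 p.2)).card : ℝ)) := by
        exact_mod_cast eCnt_le_add X Y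
      linarith
    have key : dens G X Y - dens G' X Y ≤ d' * m / Y.card := by
      unfold _root_.dens
      rw [div_sub_div_same, div_le_iff₀ hxy]
      have : d' * ↑m / ↑Y.card * (↑X.card * ↑Y.card) = X.card * (d' * m) := by
        field_simp
      rw [this]
      linarith
    linarith
  · unfold _root_.dens
    gcongr
    exact_mod_cast eCnt_mono h X Y


/-- robustness of ε-regularity under small perturbations.
There is `d₀ > 0` such that: whenever `0 < ε ≤ d' ≤ d ≤ d₀` there is `m₀` such that for
all `m ≥ m₀` the following holds. Let `G` be a bipartite graph with vertex classes of size
`m` (both `Fin m`), which is ε-regular of density at least `d`. Let `G'` be obtained from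
`G` by removing at most `d'm` vertices from each class (leaving classes `A'`, `B'`) and at
most `d'm` edges incident to each remaining vertex. Then `G'` (on `A', B'`) is
`2√d'`-regular of density at least `d − 2√d'`. -/
theorem stmt6 : ∃ d₀ : ℝ, 0 < d₀ ∧ ∀ ε d' d : ℝ, 0 < ε → ε ≤ d' → d' ≤ d → d ≤ d₀ →
    ∃ m₀ : ℕ, ∀ m : ℕ, m₀ ≤ m →
    ∀ (G G' : Fin m → Fin m → Prop) (A' B' : Finset (Fin m)),
      (∀ a b, G' a b → G a b) →
      (m : ℝ) - d' * (m : ℝ) ≤ (A'.card : ℝ) →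
      (m : ℝ) - d' * (m : ℝ) ≤ (B'.card : ℝ) →
      (∀ a ∈ A', ((B'.filter (fun b => G a b ∧ ¬ G' a b)).card : ℝ) ≤ d' * (m : ℝ)) →
      (∀ b ∈ B', ((A'.filter (fun a => G a b ∧ ¬ G' a b)).card : ℝ) ≤ d' * (m : ℝ)) →
      EpsRegularOn G Finset.univ Finset.univ ε →
      d ≤ dens G Finset.univ Finset.univ →
      EpsRegularOn G' A' B' (2 * Real.sqrt d') ∧
        d - 2 * Real.sqrt d' ≤ dens G' A' B' := by
  refine ⟨1/16, by norm_num, ?_⟩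
  intro ε d' d hε hεd' hd'd hd
  refine ⟨1, ?_⟩
  intro m hm G G' A' B' hsub hA' hB' hremA hremB hreg hdens
  have hd'pos : 0 < d' := lt_of_lt_of_le hε hεd'
  set s := Real.sqrt d' with hsdef
  have hs : 0 < s := Real.sqrt_pos.mpr hd'pos
  have hs2 : s * s = d' := Real.mul_self_sqrt hd'pos.le
  have hd'16 : d' ≤ 1/16 := hd'd.trans hd
  have hs4 : s ≤ 1/4 := by
    have h1 : s ≤ Real.sqrt (1/16) := Real.sqrt_le_sqrt hd'16
    rwa [show (1/16:ℝ) = (1/4)^2 by norm_num, Real.sqrt_sq (by norm_num)] at h1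
  have hm1 : (1:ℝ) ≤ (m:ℝ) := by exact_mod_cast hm
  have hmono : (0:ℝ) ≤ (1/16 - d') * (m:ℝ) :=
    mul_nonneg (by linarith) (by linarith)
  have hcardA' : (15/16) * (m:ℝ) ≤ (A'.card : ℝ) := by nlinarith [hmono]
  have hcardB' : (15/16) * (m:ℝ) ≤ (B'.card : ℝ) := by nlinarith [hmono]
  have hA'pos : 0 < (A'.card : ℝ) := by linarith
  have hB'pos : 0 < (B'.card : ℝ) := by linarith
  have hUniv : (((Finset.univ : Finset (Fin m))).card : ℝ) = (m:ℝ) := by simp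
  set D := dens G Finset.univ Finset.univ with hD
  have hεs : ε ≤ (1/4) * s := by
    have := mul_le_mul_of_nonneg_right hs4 hs.le
    linarith
  -- main estimate for any valid pair
  have key : ∀ X Y : Finset (Fin m), X ⊆ A' → Y ⊆ B' →
      2 * s * (A'.card : ℝ) ≤ (X.card : ℝ) → 2 * s * (B'.card : ℝ) ≤ (Y.card : ℝ) →
      D - ε - (8/15) * s < dens G' X Y ∧ dens G' X Y < D + ε := by
    intro X Y hXA hYB hXc hYc
    have h2s : (0:ℝ) ≤ 2 * s := by linarith
    have hXm : (15/8) * s * (m:ℝ) ≤ (X.card : ℝ) := by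
      have := mul_le_mul_of_nonneg_left hcardA' h2s
      linarith
    have hYm : (15/8) * s * (m:ℝ) ≤ (Y.card : ℝ) := by
      have := mul_le_mul_of_nonneg_left hcardB' h2s
      linarith
    have hsm : 0 < s * (m:ℝ) := mul_pos hs (by linarith)
    have hXpos : 0 < (X.card : ℝ) := by nlinarith [hsm]
    have hYpos : 0 < (Y.card : ℝ) := by nlinarith [hsm]
    have hεm : ε * (m:ℝ) ≤ (1/4) * (s * (m:ℝ)) :=
      le_trans (mul_le_mul_of_nonneg_right hεs (by linarith)) (by linarith [le_of_eq (mul_assoc (1/4:ℝ) s (m:ℝ))])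
    have hregXY : |dens G X Y - D| < ε := by
      apply hreg X (Finset.subset_univ X) Y (Finset.subset_univ Y)
      · rw [hUniv]; nlinarith [hεm, hXm, hsm]
      · rw [hUniv]; nlinarith [hεm, hYm, hsm]
    rw [abs_sub_lt_iff] at hregXY
    obtain ⟨hlo, hhi⟩ := dens_pair hsub hXA hYB hXpos hYpos hremA
    have hdiv : d' * (m:ℝ) / (Y.card : ℝ) ≤ (8/15) * s := by
      rw [div_le_iff₀ hYpos]
      have h := mul_le_mul_of_nonneg_left hYm (show (0:ℝ) ≤ (8/15) * s by linarith)
      calc d' * (m:ℝ) = (8/15) * s * ((15/8) * s * (m:ℝ)) := by rw [← hs2]; ring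
      _ ≤ (8/15) * s * (Y.card : ℝ) := h
    constructor <;> linarith
  have hA'self : 2 * s * (A'.card : ℝ) ≤ (A'.card : ℝ) := by nlinarith [hA'pos, hs4]
  have hB'self : 2 * s * (B'.card : ℝ) ≤ (B'.card : ℝ) := by nlinarith [hB'pos, hs4]
  obtain ⟨hAB'lo, hAB'hi⟩ := key A' B' (subset_refl _) (subset_refl _) hA'self hB'self
  constructor
  · intro X hXA Y hYB hXc hYc
    obtain ⟨hXYlo, hXYhi⟩ := key X Y hXA hYB hXc hYc
    rw [abs_sub_lt_iff]
    constructor <;> linarith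
  · have hDd : d ≤ D := hdens
    linarith
end

section
/- Let G be an oriented graph on n vertices (no 2-cycles) with δ⁺(G) + δ⁻(G) + δ(G) ≥ 3n/2 + εn, where 0 < 1/n ≪ ν ≪ τ ≤ ε/2 ≤ 1. Then G is a robust (ν,τ)-outexpander. In particular, every r-regular oriented graph with r ≥ 3n/8 + εn is a robust (ν,τ)-outexpander. -/
open Finset
open scoped Classical

noncomputable def eE {V : Type*} [Fintype V] (G : V → V → Prop) (X Y : Finset V) : ℕ :=
  ∑ x ∈ X, ∑ y ∈ Y, if G x y then 1 else 0

section auxE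
variable {V : Type*} [Fintype V] [DecidableEq V] {G : V → V → Prop}

lemma eE_le_card (X Y : Finset V) : eE G X Y ≤ X.card * Y.card := by
  unfold eE
  calc ∑ x ∈ X, ∑ y ∈ Y, (if G x y then 1 else 0)
      ≤ ∑ _x ∈ X, Y.card := by
        refine Finset.sum_le_sum fun x _ => ?_
        calc ∑ y ∈ Y, (if G x y then 1 else 0) ≤ ∑ _y ∈ Y, 1 :=
              Finset.sum_le_sum fun y _ => by split <;> omega
          _ = Y.card := by simp
    _ = X.card * Y.card := by simp [mul_comm]

lemma eE_swap (X Y : Finset V) :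
    eE G X Y = ∑ y ∈ Y, (X.filter (fun x => G x y)).card := by
  unfold eE
  rw [Finset.sum_comm]
  refine Finset.sum_congr rfl fun y _ => ?_
  rw [Finset.card_filter]

lemma eE_row (X Y : Finset V) :
    eE G X Y = ∑ x ∈ X, (Y.filter (fun y => G x y)).card := by
  unfold eE
  refine Finset.sum_congr rfl fun x _ => ?_
  rw [Finset.card_filter]

lemma eE_union_right {Y₁ Y₂ : Finset V} (h : Disjoint Y₁ Y₂) (X : Finset V) :
    eE G X (Y₁ ∪ Y₂) = eE G X Y₁ + eE G X Y₂ := by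
  unfold eE
  rw [← Finset.sum_add_distrib]
  exact Finset.sum_congr rfl fun x _ => Finset.sum_union h

lemma eE_union_left {X₁ X₂ : Finset V} (h : Disjoint X₁ X₂) (Y : Finset V) :
    eE G (X₁ ∪ X₂) Y = eE G X₁ Y + eE G X₂ Y := by
  unfold eE; exact Finset.sum_union h

lemma eE_mono_left {X X' : Finset V} (h : X ⊆ X') (Y : Finset V) :
    eE G X Y ≤ eE G X' Y :=
  Finset.sum_le_sum_of_subset h

lemma eE_oriented (hG : ∀ x y, ¬ (G x y ∧ G y x)) (X : Finset V) :
    2 * eE G X X ≤ X.card * X.card := by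
  unfold eE
  have h2 : ∑ x ∈ X, ∑ y ∈ X, (if G x y then 1 else 0)
      = ∑ x ∈ X, ∑ y ∈ X, (if G y x then 1 else 0) := Finset.sum_comm
  calc 2 * ∑ x ∈ X, ∑ y ∈ X, (if G x y then 1 else 0)
      = (∑ x ∈ X, ∑ y ∈ X, (if G x y then 1 else 0)) +
        ∑ x ∈ X, ∑ y ∈ X, (if G y x then 1 else 0) := by rw [two_mul, h2]
    _ = ∑ x ∈ X, ∑ y ∈ X, ((if G x y then 1 else 0) + (if G y x then 1 else 0)) := by
        rw [← Finset.sum_add_distrib]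
        exact Finset.sum_congr rfl fun x _ => (Finset.sum_add_distrib).symm
    _ ≤ ∑ x ∈ X, ∑ y ∈ X, 1 := by
        refine Finset.sum_le_sum fun x _ => Finset.sum_le_sum fun y _ => ?_
        have hxy := hG x y
        by_cases h1 : G x y <;> by_cases h2 : G y x <;>
          simp [h1, h2] <;> exact hxy ⟨h1, h2⟩
    _ = X.card * X.card := by simp [mul_comm]

lemma sum_outDeg (X : Finset V) : ∑ x ∈ X, outDeg G x = eE G X Finset.univ := by
  unfold outDeg eE
  exact Finset.sum_congr rfl fun x _ => Finset.card_filter _ _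

lemma sum_inDeg (Y : Finset V) : ∑ y ∈ Y, inDeg G y = eE G Finset.univ Y := by
  rw [eE_swap]; rfl

end auxE

set_option maxHeartbeats 2000000 in
/-- Lemma: dense oriented graphs are robust outexpanders.
With the hierarchy `0 < 1/n ≪ ν ≪ τ ≤ ε/2 ≤ 1`: every oriented graph `G` on `n` vertices
(no loops or 2-cycles) with `δ⁺(G) + δ⁻(G) + δ(G) ≥ 3n/2 + εn` is a robust
`(ν,τ)`-outexpander. (The minima are encoded by quantifying over all simultaneous lower
bounds `a ≤ δ⁺(G)`, `b ≤ δ⁻(G)`, `c ≤ δ(G)` with `a + b + c ≥ 3n/2 + εn`.) -/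
theorem stmt9 : ∀ ε : ℝ, 0 < ε → ε ≤ 2 → ∀ τ : ℝ, 0 < τ → τ ≤ ε / 2 →
    ∃ ν₀ : ℝ, 0 < ν₀ ∧ ∀ ν : ℝ, 0 < ν → ν ≤ ν₀ →
    ∃ n₀ : ℕ, ∀ n : ℕ, n₀ ≤ n →
    ∀ G : Fin n → Fin n → Prop, (∀ x y, ¬ (G x y ∧ G y x)) →
    ∀ a b c : ℝ,
      (∀ x, a ≤ (outDeg G x : ℝ)) →
      (∀ x, b ≤ (inDeg G x : ℝ)) →
      (∀ x, c ≤ (outDeg G x : ℝ) + (inDeg G x : ℝ)) →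
      3 * (n : ℝ) / 2 + ε * (n : ℝ) ≤ a + b + c →
      IsRobustOutexpander G ν τ := by
  intro ε hε0 hε2 τ hτ0 hτε
  have hτ1 : τ ≤ 1 := by linarith
  refine ⟨ε^2*τ/5000, by positivity, ?_⟩
  intro ν hν0 hνle
  refine ⟨⌈(1:ℝ)/ν⌉₊ + 4, ?_⟩
  intro n hn G hG a b c ha hb hc hsum
  intro S hS1 hS2
  simp only [Fintype.card_fin] at hS1 hS2 ⊢
  by_contra hcon
  push_neg at hcon

  -- basic numeric facts
  have hn4 : (4:ℕ) ≤ n := le_trans (by omega) hn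
  have hN0 : (0:ℝ) < n := by exact_mod_cast Nat.pos_of_ne_zero (by omega)
  have hνn1 : (1:ℝ) ≤ ν * n := by
    have h1 : ((1:ℝ)/ν) ≤ (⌈(1:ℝ)/ν⌉₊ : ℝ) := Nat.le_ceil _
    have h2 : ((⌈(1:ℝ)/ν⌉₊ + 4 : ℕ) : ℝ) ≤ n := Nat.cast_le.mpr hn
    push_cast at h2
    have h3 : (1:ℝ)/ν ≤ n := by linarith
    calc (1:ℝ) = ν * (1/ν) := by field_simp
      _ ≤ ν * n := by apply mul_le_mul_of_nonneg_left h3 (le_of_lt hν0)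
  have hνa : ν ≤ ε*τ/2500 := by nlinarith
  have hνb : ν ≤ ε/2500 := by nlinarith
  have hνc : ν ≤ ε^2/5000 := by nlinarith
  have hντ : ν < τ := by nlinarith
  -- sets
  set R : Finset (Fin n) := robustOutNbhd G ν S with hRdef
  set T : Finset (Fin n) := S \ R with hTdef
  set K : Finset (Fin n) := S ∩ R with hKdef
  set W : Finset (Fin n) := R \ S with hWdef
  set U : Finset (Fin n) := Finset.univ \ (S ∪ R) with hUdef
  have hmemR : ∀ v : Fin n, v ∈ R ↔ ν * (n:ℝ) ≤ ((S.filter (fun y => G y v)).card : ℝ) := by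
    intro v
    simp [hRdef, robustOutNbhd, Fintype.card_fin]
  have hnotR : ∀ v : Fin n, v ∉ R → ((S.filter (fun y => G y v)).card : ℝ) < ν * n := by
    intro v hv
    by_contra hle
    exact hv ((hmemR v).mpr (le_of_not_gt hle))
  -- disjointness and partition
  have dTK : Disjoint T K := by
    rw [Finset.disjoint_left]
    intro x hx hx2
    exact (Finset.mem_sdiff.mp hx).2 (Finset.mem_inter.mp hx2).2
  have uTK : T ∪ K = S := Finset.sdiff_union_inter S R
  have dKW : Disjoint K W := by
    rw [Finset.disjoint_left]
    intro x hx hx2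
    exact (Finset.mem_sdiff.mp hx2).2 (Finset.mem_inter.mp hx).1
  have uKW : K ∪ W = R := by
    rw [hKdef, hWdef, Finset.inter_comm, Finset.union_comm]
    exact Finset.sdiff_union_inter R S
  have dSW : Disjoint S W := Finset.disjoint_sdiff
  have uSW : S ∪ W = S ∪ R := Finset.union_sdiff_self_eq_union
  have dU : Disjoint (S ∪ R) U := Finset.disjoint_sdiff
  have uU : (S ∪ R) ∪ U = Finset.univ := by
    rw [hUdef, Finset.union_sdiff_of_subset (Finset.subset_univ _)]
  -- real size abbreviations
  set t : ℝ := (T.card : ℝ) with htdef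
  set k : ℝ := (K.card : ℝ) with hkdef
  set w : ℝ := (W.card : ℝ) with hwdef
  set u : ℝ := (U.card : ℝ) with hudef
  set s : ℝ := (S.card : ℝ) with hsdef
  set ρ : ℝ := (R.card : ℝ) with hρdef
  have ht0 : 0 ≤ t := Nat.cast_nonneg _
  have hk0 : 0 ≤ k := Nat.cast_nonneg _
  have hw0 : 0 ≤ w := Nat.cast_nonneg _
  have hu0 : 0 ≤ u := Nat.cast_nonneg _
  have htk : t + k = s := by
    rw [htdef, hkdef, hsdef, ← Nat.cast_add, ← Finset.card_union_of_disjoint dTK, uTK]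
  have hkw : k + w = ρ := by
    rw [hkdef, hwdef, hρdef, ← Nat.cast_add, ← Finset.card_union_of_disjoint dKW, uKW]
  have hparts : s + w + u = (n:ℝ) := by
    have h1 : S.card + W.card = (S ∪ R).card := by
      rw [← Finset.card_union_of_disjoint dSW, uSW]
    have h2 : (S ∪ R).card + U.card = n := by
      rw [← Finset.card_union_of_disjoint dU, uU, Finset.card_univ, Fintype.card_fin]
    rw [hsdef, hwdef, hudef, ← Nat.cast_add, h1, ← Nat.cast_add, h2]
  have hwt : w ≤ t + ν*n := by linarith
  -- edges out of S into sets avoiding R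
  have hout : ∀ Y : Finset (Fin n), (∀ v ∈ Y, v ∉ R) → (eE G S Y : ℝ) ≤ Y.card * (ν*n) := by
    intro Y hY
    rw [eE_swap]
    push_cast
    calc ∑ y ∈ Y, ((S.filter (fun x => G x y)).card : ℝ)
        ≤ ∑ _y ∈ Y, ν*n := Finset.sum_le_sum fun y hy => le_of_lt (hnotR y (hY y hy))
      _ = Y.card * (ν*n) := by rw [Finset.sum_const, nsmul_eq_mul]
  have houtsum : ∀ X : Finset (Fin n), a * X.card ≤ (eE G X Finset.univ : ℝ) := by
    intro X
    rw [← sum_outDeg]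
    push_cast
    calc a * X.card = ∑ _x ∈ X, a := by rw [Finset.sum_const, nsmul_eq_mul, mul_comm]
      _ ≤ ∑ x ∈ X, (outDeg G x : ℝ) := Finset.sum_le_sum fun x _ => ha x
  have hinsum : ∀ Y : Finset (Fin n), b * Y.card ≤ (eE G Finset.univ Y : ℝ) := by
    intro Y
    rw [← sum_inDeg]
    push_cast
    calc b * Y.card = ∑ _y ∈ Y, b := by rw [Finset.sum_const, nsmul_eq_mul, mul_comm]
      _ ≤ ∑ y ∈ Y, (inDeg G y : ℝ) := Finset.sum_le_sum fun y _ => hb y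
  -- decomposition of edge counts
  have hdecOut : ∀ X : Finset (Fin n),
      (eE G X Finset.univ : ℝ) = eE G X T + eE G X K + eE G X W + eE G X U := by
    intro X
    have e1 : eE G X Finset.univ = eE G X (S ∪ R) + eE G X U := by
      rw [← uU]; exact eE_union_right dU X
    have e2 : eE G X (S ∪ R) = eE G X S + eE G X W := by
      rw [← uSW]; exact eE_union_right dSW X
    have e3 : eE G X S = eE G X T + eE G X K := by
      rw [← uTK]; exact eE_union_right dTK X
    rw [e1, e2, e3]; push_cast; ring
  have hdecIn : (eE G Finset.univ U : ℝ) = eE G S U + eE G W U + eE G U U := by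
    have e1 : eE G Finset.univ U = eE G (S ∪ R) U + eE G U U := by
      rw [← uU]; exact eE_union_left dU U
    have e2 : eE G (S ∪ R) U = eE G S U + eE G W U := by
      rw [← uSW]; exact eE_union_left dSW U
    rw [e1, e2]; push_cast; ring

  -- memberships outside R
  have hTnotR : ∀ v ∈ T, v ∉ R := fun v hv => (Finset.mem_sdiff.mp hv).2
  have hUnotR : ∀ v ∈ U, v ∉ R := by
    intro v hv
    have := (Finset.mem_sdiff.mp hv).2
    intro hvR
    exact this (Finset.mem_union_right _ hvR)
  have heST : (eE G S T : ℝ) ≤ t * (ν*n) := hout T hTnotR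
  have heSU : (eE G S U : ℝ) ≤ u * (ν*n) := hout U hUnotR
  -- F1 : out-edges of K
  have hF1 : a * k ≤ k*k/2 + k*w + ν*n*(t+u) := by
    have h0 : a * k ≤ (eE G K Finset.univ : ℝ) := houtsum K
    have hd := hdecOut K
    have h1 : (eE G K T : ℝ) ≤ eE G S T := by
      exact_mod_cast eE_mono_left (Finset.inter_subset_left) T
    have h2 : (eE G K U : ℝ) ≤ eE G S U := by
      exact_mod_cast eE_mono_left (Finset.inter_subset_left) U
    have h3 : 2 * (eE G K K : ℝ) ≤ k * k := by
      rw [hkdef]; exact_mod_cast eE_oriented hG K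
    have h4 : (eE G K W : ℝ) ≤ k * w := by
      rw [hkdef, hwdef]; exact_mod_cast eE_le_card K W
    linarith
  -- F2 : out-edges of S
  have hF2 : a * s ≤ k*s + w*s + ν*n*(t+u) := by
    have h0 : a * s ≤ (eE G S Finset.univ : ℝ) := houtsum S
    have hd := hdecOut S
    have h3 : (eE G S K : ℝ) ≤ s * k := by
      rw [hsdef, hkdef]; exact_mod_cast eE_le_card S K
    have h4 : (eE G S W : ℝ) ≤ s * w := by
      rw [hsdef, hwdef]; exact_mod_cast eE_le_card S W
    linarith
  -- F3 : out-edges of R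
  have hF3 : a * ρ ≤ ρ*ρ/2 + w*t + ρ*u + ν*n*t := by
    have h0 : a * ρ ≤ (eE G R Finset.univ : ℝ) := houtsum R
    have hd := hdecOut R
    have h1 : (eE G R T : ℝ) = eE G K T + eE G W T := by
      rw [← uKW, eE_union_left dKW T]; push_cast; ring
    have h1a : (eE G K T : ℝ) ≤ eE G S T := by
      exact_mod_cast eE_mono_left (Finset.inter_subset_left) T
    have h1b : (eE G W T : ℝ) ≤ w * t := by
      rw [hwdef, htdef]; exact_mod_cast eE_le_card W T
    have h2 : (eE G R K : ℝ) + eE G R W = eE G R R := by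
      have := eE_union_right (G := G) dKW R
      rw [uKW] at this
      exact_mod_cast this.symm
    have h3 : 2 * (eE G R R : ℝ) ≤ ρ * ρ := by
      rw [hρdef]; exact_mod_cast eE_oriented hG R
    have h4 : (eE G R U : ℝ) ≤ ρ * u := by
      rw [hρdef, hudef]; exact_mod_cast eE_le_card R U
    linarith
  -- F4 : in-edges of U
  have hF4 : b * u ≤ w*u + u*u/2 + ν*n*u := by
    have h0 : b * u ≤ (eE G Finset.univ U : ℝ) := hinsum U
    have h2 : (eE G W U : ℝ) ≤ w * u := by
      rw [hwdef, hudef]; exact_mod_cast eE_le_card W U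
    have h3 : 2 * (eE G U U : ℝ) ≤ u * u := by
      rw [hudef]; exact_mod_cast eE_oriented hG U
    linarith [hdecIn, heSU]
  -- F5 : a vertex outside R
  have hRn : R.card < n := by
    have h1 : ρ < (n:ℝ) := by linarith [mul_pos (sub_pos.mpr hντ) hN0]
    rw [hρdef] at h1
    exact_mod_cast h1
  have hF5 : b ≤ (n:ℝ) - s + ν*n := by
    have hne : (Finset.univ \ R).Nonempty := by
      rw [← Finset.card_pos, Finset.card_sdiff_of_subset (Finset.subset_univ R), Finset.card_univ,
        Fintype.card_fin]
      omega
    obtain ⟨v, hv⟩ := hne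
    have hvR : v ∉ R := (Finset.mem_sdiff.mp hv).2
    have hsplit : inDeg G v ≤ (S.filter (fun y => G y v)).card + (n - S.card) := by
      unfold inDeg
      have : Finset.univ.filter (fun y => G y v)
          ⊆ S.filter (fun y => G y v) ∪ (Finset.univ \ S) := by
        intro y hy
        rcases Finset.mem_filter.mp hy with ⟨-, hGy⟩
        by_cases hyS : y ∈ S
        · exact Finset.mem_union_left _ (Finset.mem_filter.mpr ⟨hyS, hGy⟩)
        · exact Finset.mem_union_right _ (Finset.mem_sdiff.mpr ⟨Finset.mem_univ _, hyS⟩)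
      calc (Finset.univ.filter (fun y => G y v)).card
          ≤ (S.filter (fun y => G y v) ∪ (Finset.univ \ S)).card := Finset.card_le_card this
        _ ≤ (S.filter (fun y => G y v)).card + (Finset.univ \ S).card := Finset.card_union_le _ _
        _ = (S.filter (fun y => G y v)).card + (n - S.card) := by
            rw [Finset.card_sdiff_of_subset (Finset.subset_univ S), Finset.card_univ, Fintype.card_fin]
    have hcast : (inDeg G v : ℝ) ≤ ((S.filter (fun y => G y v)).card : ℝ) + ((n:ℝ) - s) := by
      have hSn : S.card ≤ n := by
        have := Finset.card_le_card (Finset.subset_univ S)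
        rwa [Finset.card_univ, Fintype.card_fin] at this
      have := (Nat.cast_le (α := ℝ)).mpr hsplit
      push_cast [Nat.cast_sub hSn] at this
      rw [hsdef]
      convert this using 2 <;> push_cast <;> ring
    have := hnotR v hvR
    have := hb v
    linarith

  -- pointwise bounds from a low-degree vertex of T
  have hPt : T.Nonempty → (c ≤ (n:ℝ) - t + 3*(ν*n)) ∧ (a + b + c ≤ 2*((n:ℝ) - t + 3*(ν*n))) := by
    intro hTne
    have hTT : (eE G T T : ℝ) = ∑ x ∈ T, ((T.filter (fun y => G x y)).card : ℝ) := by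
      rw [eE_row]; push_cast; rfl
    have havg : ∑ x ∈ T, ((T.filter (fun y => G x y)).card : ℝ) ≤ ∑ _x ∈ T, ν*n := by
      rw [Finset.sum_const, nsmul_eq_mul, ← hTT]
      have h1 : (eE G T T : ℝ) ≤ eE G S T := by
        exact_mod_cast eE_mono_left Finset.sdiff_subset T
      rw [htdef] at heST
      linarith
    obtain ⟨x, hxT, hxfew⟩ := Finset.exists_le_of_sum_le hTne havg
    -- neighbourhood geometry
    set A : Finset (Fin n) := Finset.univ.filter (fun y => G x y) with hAdef
    set B : Finset (Fin n) := Finset.univ.filter (fun y => G y x) with hBdef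
    have hdout : outDeg G x = A.card := rfl
    have hdin : inDeg G x = B.card := rfl
    have dAB : Disjoint A B := by
      rw [Finset.disjoint_left]
      intro y hy hy2
      exact hG x y ⟨(Finset.mem_filter.mp hy).2, (Finset.mem_filter.mp hy2).2⟩
    set C : Finset (Fin n) := T \ (A ∪ B ∪ {x}) with hCdef
    have dABC : Disjoint (A ∪ B) C := by
      rw [Finset.disjoint_left]
      intro y hy hy2
      exact (Finset.mem_sdiff.mp hy2).2 (Finset.mem_union_left _ hy)
    have hcards : A.card + B.card + C.card ≤ n := by
      have h1 : (A ∪ B ∪ C).card ≤ n := by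
        have := Finset.card_le_card (Finset.subset_univ (A ∪ B ∪ C))
        rwa [Finset.card_univ, Fintype.card_fin] at this
      rw [Finset.card_union_of_disjoint dABC, Finset.card_union_of_disjoint dAB] at h1
      exact h1
    have hTsub : T ⊆ C ∪ (T.filter (fun y => G x y)) ∪ (T.filter (fun y => G y x)) ∪ {x} := by
      intro y hy
      by_cases hyC : y ∈ A ∪ B ∪ {x}
      · rcases Finset.mem_union.mp hyC with hyab | hyx
        · rcases Finset.mem_union.mp hyab with hyA | hyB
          · exact Finset.mem_union_left _ (Finset.mem_union_left _ (Finset.mem_union_right _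
              (Finset.mem_filter.mpr ⟨hy, (Finset.mem_filter.mp hyA).2⟩)))
          · exact Finset.mem_union_left _ (Finset.mem_union_right _
              (Finset.mem_filter.mpr ⟨hy, (Finset.mem_filter.mp hyB).2⟩))
        · exact Finset.mem_union_right _ hyx
      · exact Finset.mem_union_left _ (Finset.mem_union_left _ (Finset.mem_union_left _
          (Finset.mem_sdiff.mpr ⟨hy, hyC⟩)))
    have hTcard : T.card ≤ C.card + (T.filter (fun y => G x y)).card
        + (T.filter (fun y => G y x)).card + 1 := by
      calc T.card ≤ (C ∪ (T.filter (fun y => G x y)) ∪ (T.filter (fun y => G y x)) ∪ {x}).card :=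
            Finset.card_le_card hTsub
        _ ≤ (C ∪ (T.filter (fun y => G x y)) ∪ (T.filter (fun y => G y x))).card + ({x} : Finset (Fin n)).card :=
            Finset.card_union_le _ _
        _ ≤ (C ∪ (T.filter (fun y => G x y))).card + (T.filter (fun y => G y x)).card + 1 := by
            have := Finset.card_union_le (C ∪ (T.filter (fun y => G x y))) (T.filter (fun y => G y x))
            simp only [Finset.card_singleton]
            omega
        _ ≤ C.card + (T.filter (fun y => G x y)).card + (T.filter (fun y => G y x)).card + 1 := by
            have := Finset.card_union_le C (T.filter (fun y => G x y))
            omega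
    -- in-degree of x inside T is small
    have hxin : ((T.filter (fun y => G y x)).card : ℝ) < ν*n := by
      have hsub : (T.filter (fun y => G y x)) ⊆ (S.filter (fun y => G y x)) := by
        apply Finset.filter_subset_filter
        rw [hTdef]; exact Finset.sdiff_subset
      have h1 : ((T.filter (fun y => G y x)).card : ℝ) ≤ ((S.filter (fun y => G y x)).card : ℝ) := by
        exact_mod_cast Finset.card_le_card hsub
      have h2 := hnotR x (hTnotR x hxT)
      linarith
    -- combine: outDeg x + inDeg x ≤ n - t + 3νn
    have hkey : (outDeg G x : ℝ) + (inDeg G x : ℝ) ≤ (n:ℝ) - t + 3*(ν*n) := by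
      have hc1 : (A.card : ℝ) + B.card + C.card ≤ (n:ℝ) := by exact_mod_cast hcards
      have hc2 : t ≤ (C.card:ℝ) + ((T.filter (fun y => G x y)).card : ℝ)
          + ((T.filter (fun y => G y x)).card : ℝ) + 1 := by
        rw [htdef]; exact_mod_cast hTcard
      rw [hdout, hdin]
      push_cast
      linarith
    exact ⟨le_trans (hc x) hkey, by linarith [ha x, hb x, hc x]⟩
  have hF6 : c ≤ (n:ℝ) - t + 3*(ν*n) := by
    rcases Finset.eq_empty_or_nonempty T with hTe | hTne
    · have ht00 : t = 0 := by rw [htdef, hTe]; simp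
      have x : Fin n := ⟨0, by omega⟩
      have hAB : outDeg G x + inDeg G x ≤ n := by
        have dAB : Disjoint (Finset.univ.filter (fun y => G x y)) (Finset.univ.filter (fun y => G y x)) := by
          rw [Finset.disjoint_left]
          intro y hy hy2
          exact hG x y ⟨(Finset.mem_filter.mp hy).2, (Finset.mem_filter.mp hy2).2⟩
        have h1 : (Finset.univ.filter (fun y => G x y) ∪ Finset.univ.filter (fun y => G y x)).card ≤ n := by
          have := Finset.card_le_card (Finset.subset_univ
            (Finset.univ.filter (fun y => G x y) ∪ Finset.univ.filter (fun y => G y x)))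
          rwa [Finset.card_univ, Fintype.card_fin] at this
        rw [Finset.card_union_of_disjoint dAB] at h1
        exact h1
      have h2 : (outDeg G x : ℝ) + inDeg G x ≤ (n:ℝ) := by exact_mod_cast hAB
      have h3 := hc x
      rw [ht00]
      have h4 : (0:ℝ) ≤ 3*(ν*n) := by positivity
      linarith
    · exact (hPt hTne).1

  -- handy scalar facts
  have hεn : 0 < ε*n := mul_pos hε0 hN0
  have hνn0 : 0 < ν*n := mul_pos hν0 hN0
  have hvn : ν*n ≤ ε/2500*n := mul_le_mul_of_nonneg_right hνb hN0.le
  have hεn2 : ε*n ≤ 2*n := mul_le_mul_of_nonneg_right hε2 hN0.le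
  have htun : t + u ≤ (n:ℝ) := by linarith only [hparts, htk, hk0, hw0]
  have htn : t ≤ (n:ℝ) := by linarith only [hparts, htk, hk0, hw0, hu0]
  -- final case analysis
  by_cases hI : (n:ℝ)/4 ≤ t
  · -- Case I : S \ R is large
    have hTne : T.Nonempty := by
      rw [← Finset.card_pos]
      by_contra h
      push_neg at h
      have h2 : T.card = 0 := by omega
      have h3 : t = 0 := by rw [htdef, h2]; simp
      linarith only [h3, hI, hN0]
    obtain ⟨-, h7⟩ := hPt hTne
    linarith only [h7, hI, hsum, hvn, hεn]
  · push_neg at hI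
    by_cases hIII : k < ε*n/50
    · -- Case III : S ∩ R is small
      have hs0 : 0 < s := lt_of_lt_of_le (mul_pos hτ0 hN0) hS1
      have haIII : a ≤ k + w + ε*n/2500 := by
        apply le_of_mul_le_mul_right _ hs0
        have e1 : ν*n*(t+u) ≤ ν*n*n := mul_le_mul_of_nonneg_left htun hνn0.le
        have e2 : ν*n*n ≤ ε*τ/2500*n*n :=
          mul_le_mul_of_nonneg_right (mul_le_mul_of_nonneg_right hνa hN0.le) hN0.le
        have e3 : ε*n/2500*(τ*n) ≤ ε*n/2500*s :=
          mul_le_mul_of_nonneg_left hS1 (by positivity)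
        calc a * s ≤ k*s + w*s + ν*n*(t+u) := hF2
          _ ≤ (k + w + ε*n/2500) * s := by nlinarith only [e1, e2, e3]
      have hu_pos : (0:ℝ) < u := by
        linarith only [hparts, htk, hI, hIII, hwt, hvn, hεn2, hN0]
      have hbIII : b ≤ w + u/2 + ν*n := by
        apply le_of_mul_le_mul_right _ hu_pos
        calc b * u ≤ w*u + u*u/2 + ν*n*u := hF4
          _ = (w + u/2 + ν*n) * u := by ring
      linarith only [haIII, hbIII, hF6, hsum, hwt, hparts, htk, hIII, hvn, hεn]
    · push_neg at hIII
      have hk_pos : 0 < k := lt_of_lt_of_le (by positivity) hIII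
      rcases Nat.eq_zero_or_pos U.card with hU0 | hU1
      · -- Case IV : everything is S ∪ R
        have hu00 : u = 0 := by rw [hudef, hU0]; simp
        have hρn : ρ = (n:ℝ) - t := by
          linarith only [hparts, htk, hkw, hu00]
        have hρ_pos : 0 < ρ := by linarith only [hρn, hI, hN0]
        have haIV : a ≤ ρ/2 + t/3 + 3*(ν*n) := by
          apply le_of_mul_le_mul_right _ hρ_pos
          have p1 : w*t ≤ (t + ν*n)*t := mul_le_mul_of_nonneg_right hwt ht0
          have p2 : t*t ≤ (n:ℝ)/4*t := mul_le_mul_of_nonneg_right hI.le ht0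
          have p3 : ν*n*t ≤ ν*n*((n:ℝ)/4) := mul_le_mul_of_nonneg_left hI.le hνn0.le
          calc a * ρ ≤ ρ*ρ/2 + w*t + ρ*u + ν*n*t := hF3
            _ ≤ (ρ/2 + t/3 + 3*(ν*n)) * ρ := by
                rw [hρn, hu00]
                nlinarith only [p1, p2, p3, ht0, hνn0, hN0, hI]
        linarith only [haIV, hF5, hF6, hρn, hu00, hparts, htk, hwt, hvn, hεn, hsum, ht0]
      · -- Case II : the generic case
        have hu_pos : (0:ℝ) < u := by
          rw [hudef]
          exact_mod_cast hU1
        have haII : a ≤ k/2 + w + ε*n/100 := by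
          apply le_of_mul_le_mul_right _ hk_pos
          have e1 : ν*n*(t+u) ≤ ν*n*n := mul_le_mul_of_nonneg_left htun hνn0.le
          have e2 : ν*n*n ≤ ε^2/5000*n*n :=
            mul_le_mul_of_nonneg_right (mul_le_mul_of_nonneg_right hνc hN0.le) hN0.le
          have e3 : ε*n/100*(ε*n/50) ≤ ε*n/100*k :=
            mul_le_mul_of_nonneg_left hIII (by positivity)
          calc a * k ≤ k*k/2 + k*w + ν*n*(t+u) := hF1
            _ ≤ (k/2 + w + ε*n/100) * k := by nlinarith only [e1, e2, e3]
        have hbII : b ≤ w + u/2 + ν*n := by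
          apply le_of_mul_le_mul_right _ hu_pos
          calc b * u ≤ w*u + u*u/2 + ν*n*u := hF4
            _ = (w + u/2 + ν*n) * u := by ring
        linarith only [haII, hbII, hF6, hsum, hparts, htk, hwt, hvn, hεn]
end

section
/- Suppose 1/m ≪ ε, d ≪ 1/C ≤ 1. Let G = (U,V) be a bipartite graph with vertex classes U and V of size m such that: all but at most εm vertices in V have degree at least (1−ε)dm; every pair of distinct vertices in V has at most Cd²m common neighbours; and at most εm² pairs of distinct vertices in V have at least (1+ε)d²m common neighbours. Then for all X ⊆ U and Y ⊆ V with |X|, |Y| ≥ ε^{1/6}m, the density satisfies d(X,Y) = (1 ± ε^{1/6})d. -/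
open Finset
open scoped Classical

set_option maxHeartbeats 2000000 in
/-- Lemma: codegree criterion for sparse regularity.
With the hierarchy `1/m ≪ ε, d ≪ 1/C ≤ 1`: let `G` be a bipartite graph with vertex
classes `U` and `V` of size `m` (both `Fin m`; `G u v` means `u ∈ U` is joined to
`v ∈ V`). Suppose all but at most `εm` vertices of `V` have degree at least `(1−ε)dm`,
every pair of distinct vertices of `V` has at most `Cd²m` common neighbours, and at most
`εm²` ordered pairs of distinct vertices of `V` are bad (have at least `(1+ε)d²m` common
neighbours). Then for all `X ⊆ U`, `Y ⊆ V` with `|X|, |Y| ≥ ε^{1/6} m` the density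
satisfies `d(X,Y) = (1 ± ε^{1/6})d`. -/
theorem stmt10 : ∀ C : ℝ, 1 ≤ C → ∃ ε₀ : ℝ, 0 < ε₀ ∧ ∀ ε d : ℝ,
    0 < ε → ε ≤ ε₀ → 0 < d → d ≤ ε₀ →
    ∃ m₀ : ℕ, ∀ m : ℕ, m₀ ≤ m → ∀ G : Fin m → Fin m → Prop,
    (((Finset.univ : Finset (Fin m)).filter (fun v =>
        ((Finset.univ.filter (fun u => G u v)).card : ℝ) < (1 - ε) * d * (m : ℝ))).card : ℝ)
      ≤ ε * (m : ℝ) →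
    (∀ v v' : Fin m, v ≠ v' →
        ((Finset.univ.filter (fun u => G u v ∧ G u v')).card : ℝ) ≤ C * d ^ 2 * (m : ℝ)) →
    ((((Finset.univ : Finset (Fin m)) ×ˢ (Finset.univ : Finset (Fin m))).filter
        (fun p : Fin m × Fin m => p.1 ≠ p.2 ∧ (1 + ε) * d ^ 2 * (m : ℝ) ≤
          ((Finset.univ.filter (fun u => G u p.1 ∧ G u p.2)).card : ℝ))).card : ℝ)
      ≤ ε * (m : ℝ) ^ 2 →
    ∀ X Y : Finset (Fin m),
      ε ^ ((1 : ℝ) / 6) * (m : ℝ) ≤ (X.card : ℝ) →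
      ε ^ ((1 : ℝ) / 6) * (m : ℝ) ≤ (Y.card : ℝ) →
      (1 - ε ^ ((1 : ℝ) / 6)) * d ≤ dens G X Y ∧
        dens G X Y ≤ (1 + ε ^ ((1 : ℝ) / 6)) * d := by
  intro C hC
  have hC7 : (0:ℝ) < C + 6 := by linarith
  refine ⟨(C + 6)⁻¹ ^ (6:ℕ), by positivity, ?_⟩
  intro ε d hε hεle hd hdle
  refine ⟨⌈1 / (ε * d ^ 2)⌉₊ + 1, ?_⟩
  intro m hm G hdeg hcod hbad X Y hX hY
  set n : ℝ := (m : ℝ) with hn_def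
  have hm1 : 1 ≤ m := le_trans (Nat.le_add_left 1 _) hm
  have hn0 : (0:ℝ) < n := by rw [hn_def]; exact_mod_cast hm1
  have hn1 : (1:ℝ) ≤ n := by rw [hn_def]; exact_mod_cast hm1
  -- m is large
  have hmbig : 1 / (ε * d ^ 2) ≤ n := by
    have h1 : (⌈1 / (ε * d ^ 2)⌉₊ : ℝ) ≤ n := by
      rw [hn_def]; exact_mod_cast le_trans (Nat.le_succ _) hm
    exact le_trans (Nat.le_ceil _) h1
  have hn2 : n ^ 2 ≤ ε * d ^ 2 * n ^ 3 := by
    have h1 : 1 ≤ n * (ε * d ^ 2) := by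
      rw [div_le_iff₀ (by positivity)] at hmbig
      linarith only [hmbig]
    calc n ^ 2 = n ^ 2 * 1 := by ring
      _ ≤ n ^ 2 * (n * (ε * d ^ 2)) :=
          mul_le_mul_of_nonneg_left h1 (by positivity)
      _ = ε * d ^ 2 * n ^ 3 := by ring
  -- the parameter η
  set η : ℝ := ε ^ ((1:ℝ)/6) with hη_def
  have hη0 : 0 < η := Real.rpow_pos_of_pos hε _
  have hη6 : η ^ (6:ℕ) = ε := by
    rw [hη_def, ← Real.rpow_natCast (ε ^ ((1:ℝ)/6)) 6, ← Real.rpow_mul hε.le]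
    norm_num
  have hηC : η ≤ (C + 6)⁻¹ := by
    refine le_of_pow_le_pow_left₀ (n := 6) (by norm_num) (by positivity) ?_
    rw [hη6]; exact hεle
  have hη1 : η ≤ 1 := le_trans hηC (by rw [inv_le_one_iff₀]; right; linarith)
  have hε1 : ε ≤ 1 := by
    calc ε ≤ (C+6)⁻¹ ^ (6:ℕ) := hεle
    _ ≤ 1 ^ (6:ℕ) := by
        apply pow_le_pow_left₀ (by positivity)
        rw [inv_le_one_iff₀]; right; linarith
    _ = 1 := one_pow _
  have hkey : (C + 6) * ε ≤ η ^ 5 := by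
    have h1 : (C + 6) * η ≤ 1 := by
      have := mul_le_mul_of_nonneg_left hηC hC7.le
      rwa [mul_inv_cancel₀ hC7.ne'] at this
    calc (C + 6) * ε = ((C + 6) * η) * η ^ 5 := by rw [← hη6]; ring
    _ ≤ 1 * η ^ 5 := by
        apply mul_le_mul_of_nonneg_right h1 (by positivity)
    _ = η ^ 5 := one_mul _
  set x : ℝ := (X.card : ℝ) with hx_def
  set y : ℝ := (Y.card : ℝ) with hy_def
  have hx0 : 0 < x := lt_of_lt_of_le (by positivity) hX
  have hy0 : 0 < y := lt_of_lt_of_le (by positivity) hY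
  have hxn : x ≤ n := by rw [hx_def, hn_def]; exact_mod_cast (Finset.card_le_univ X).trans_eq (by simp)
  have hyn : y ≤ n := by rw [hy_def, hn_def]; exact_mod_cast (Finset.card_le_univ Y).trans_eq (by simp)
  -- indicator function
  set I : Fin m → Fin m → ℝ := fun u v => if G u v then 1 else 0 with hI_def
  have hI0 : ∀ u v, 0 ≤ I u v := by intro u v; rw [hI_def]; positivity
  -- degrees
  set degY : Fin m → ℝ := fun u => ((Y.filter (fun v => G u v)).card : ℝ) with hdegY_def
  set deg : Fin m → ℝ := fun v => ((Finset.univ.filter (fun u => G u v)).card : ℝ) with hdeg_def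
  set cod : Fin m → Fin m → ℝ :=
    fun v v' => ((Finset.univ.filter (fun u => G u v ∧ G u v')).card : ℝ) with hcod_def
  have hdegY_eq : ∀ u, degY u = ∑ v ∈ Y, I u v := by
    intro u
    rw [hdegY_def]
    simp only [Finset.card_filter]
    push_cast
    rfl
  have hdeg_eq : ∀ v, deg v = ∑ u, I u v := by
    intro v
    rw [hdeg_def]
    simp only [Finset.card_filter]
    push_cast
    rfl
  have hcod_eq : ∀ v v', cod v v' = ∑ u, I u v * I u v' := by
    intro v v'
    rw [hcod_def]
    simp only [Finset.card_filter]
    push_cast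
    refine Finset.sum_congr rfl fun u _ => ?_
    by_cases h1 : G u v <;> by_cases h2 : G u v' <;> simp [hI_def, h1, h2]
  have hcod_le_n : ∀ v v', cod v v' ≤ n := by
    intro v v'
    show ((Finset.univ.filter (fun u => G u v ∧ G u v')).card : ℝ) ≤ n
    rw [hn_def]
    exact_mod_cast (Finset.card_filter_le _ _).trans_eq (by simp)

  have hdeg0 : ∀ v, 0 ≤ deg v := by intro v; rw [hdeg_def]; positivity
  -- edge count
  set E : ℝ := (eCnt G X Y : ℝ) with hE_def
  have hE_eq : E = ∑ u ∈ X, degY u := by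
    rw [hE_def, eCnt, Finset.card_filter]
    push_cast
    rw [Finset.sum_product]
    refine Finset.sum_congr rfl fun u _ => ?_
    rw [hdegY_eq]
  -- double counting total degree
  have hT_eq : ∑ u, degY u = ∑ v ∈ Y, deg v := by
    simp only [hdegY_eq, hdeg_eq]
    exact Finset.sum_comm
  -- second moment via codegrees
  have hS2_eq : ∑ u, (degY u) ^ 2 = ∑ p ∈ Y ×ˢ Y, cod p.1 p.2 := by
    rw [Finset.sum_product]
    simp only [hdegY_eq, hcod_eq, sq, Finset.sum_mul_sum]
    rw [Finset.sum_comm]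
    refine Finset.sum_congr rfl fun v _ => ?_
    rw [Finset.sum_comm]
  -- bound the codegree sum
  have hS2_le : ∑ p ∈ Y ×ˢ Y, cod p.1 p.2
      ≤ n * y + ε * C * d ^ 2 * n ^ 3 + (1 + ε) * d ^ 2 * n * y ^ 2 := by
    classical
    rw [← Finset.sum_filter_add_sum_filter_not (Y ×ˢ Y) (fun p => p.1 = p.2)]
    have hdiag : ∑ p ∈ (Y ×ˢ Y).filter (fun p => p.1 = p.2), cod p.1 p.2 ≤ y * n := by
      have hcard : (((Y ×ˢ Y).filter (fun p => p.1 = p.2)).card : ℝ) ≤ y := by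
        rw [hy_def]
        exact_mod_cast Finset.card_le_card_of_injOn (fun p : Fin m × Fin m => p.1)
          (by intro p hp; simp only [Finset.mem_coe, Finset.mem_filter, Finset.mem_product] at hp
              exact hp.1.1)
          (by intro p hp q hq h
              simp only [Finset.mem_coe, Finset.mem_filter] at hp hq
              exact Prod.ext h (by rw [← hp.2, ← hq.2]; exact h))
      calc ∑ p ∈ (Y ×ˢ Y).filter (fun p => p.1 = p.2), cod p.1 p.2
          ≤ ∑ _p ∈ (Y ×ˢ Y).filter (fun p => p.1 = p.2), n :=
            Finset.sum_le_sum fun p _ => hcod_le_n _ _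
        _ = (((Y ×ˢ Y).filter (fun p => p.1 = p.2)).card : ℝ) * n := by
            rw [Finset.sum_const, nsmul_eq_mul]
        _ ≤ y * n := mul_le_mul_of_nonneg_right hcard hn0.le
    have hoff : ∑ p ∈ (Y ×ˢ Y).filter (fun p => ¬ p.1 = p.2), cod p.1 p.2
        ≤ ε * C * d ^ 2 * n ^ 3 + (1 + ε) * d ^ 2 * n * y ^ 2 := by
      set Q := (Y ×ˢ Y).filter (fun p => ¬ p.1 = p.2) with hQ_def
      rw [← Finset.sum_filter_add_sum_filter_not Q
        (fun p => (1 + ε) * d ^ 2 * n ≤ cod p.1 p.2)]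
      have hbadpart : ∑ p ∈ Q.filter (fun p => (1 + ε) * d ^ 2 * n ≤ cod p.1 p.2),
          cod p.1 p.2 ≤ ε * C * d ^ 2 * n ^ 3 := by
        have hsub : Q.filter (fun p => (1 + ε) * d ^ 2 * n ≤ cod p.1 p.2) ⊆
            ((Finset.univ : Finset (Fin m)) ×ˢ (Finset.univ : Finset (Fin m))).filter
              (fun p : Fin m × Fin m => p.1 ≠ p.2 ∧ (1 + ε) * d ^ 2 * (m : ℝ) ≤
                ((Finset.univ.filter (fun u => G u p.1 ∧ G u p.2)).card : ℝ)) := by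
          intro p hp
          simp only [hQ_def, Finset.mem_filter, Finset.mem_product] at hp ⊢
          exact ⟨⟨Finset.mem_univ _, Finset.mem_univ _⟩, hp.1.2, hp.2⟩
        have hcard : ((Q.filter (fun p => (1 + ε) * d ^ 2 * n ≤ cod p.1 p.2)).card : ℝ)
            ≤ ε * n ^ 2 := le_trans (by exact_mod_cast Finset.card_le_card hsub) hbad
        calc ∑ p ∈ Q.filter (fun p => (1 + ε) * d ^ 2 * n ≤ cod p.1 p.2), cod p.1 p.2
            ≤ ∑ p ∈ Q.filter (fun p => (1 + ε) * d ^ 2 * n ≤ cod p.1 p.2),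
                C * d ^ 2 * n := by
              refine Finset.sum_le_sum fun p hp => ?_
              simp only [hQ_def, Finset.mem_filter, Finset.mem_product] at hp
              exact hcod _ _ hp.1.2
          _ = ((Q.filter (fun p => (1 + ε) * d ^ 2 * n ≤ cod p.1 p.2)).card : ℝ)
                * (C * d ^ 2 * n) := by rw [Finset.sum_const, nsmul_eq_mul]
          _ ≤ (ε * n ^ 2) * (C * d ^ 2 * n) :=
              mul_le_mul_of_nonneg_right hcard (by positivity)
          _ = ε * C * d ^ 2 * n ^ 3 := by ring
      have hgoodpart : ∑ p ∈ Q.filter (fun p => ¬ ((1 + ε) * d ^ 2 * n ≤ cod p.1 p.2)),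
          cod p.1 p.2 ≤ (1 + ε) * d ^ 2 * n * y ^ 2 := by
        have hcard : ((Q.filter (fun p => ¬ ((1 + ε) * d ^ 2 * n ≤ cod p.1 p.2))).card : ℝ)
            ≤ y ^ 2 := by
          have h1 : (Q.filter (fun p => ¬ ((1 + ε) * d ^ 2 * n ≤ cod p.1 p.2))).card
              ≤ (Y ×ˢ Y).card :=
            Finset.card_le_card (le_trans (Finset.filter_subset _ _)
              (Finset.filter_subset _ _))
          rw [Finset.card_product] at h1
          calc ((Q.filter (fun p => ¬ ((1 + ε) * d ^ 2 * n ≤ cod p.1 p.2))).card : ℝ)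
              ≤ ((Y.card * Y.card : ℕ) : ℝ) := by exact_mod_cast h1
            _ = y ^ 2 := by rw [hy_def]; push_cast; ring
        calc ∑ p ∈ Q.filter (fun p => ¬ ((1 + ε) * d ^ 2 * n ≤ cod p.1 p.2)), cod p.1 p.2
            ≤ ∑ _p ∈ Q.filter (fun p => ¬ ((1 + ε) * d ^ 2 * n ≤ cod p.1 p.2)),
                (1 + ε) * d ^ 2 * n := by
              refine Finset.sum_le_sum fun p hp => ?_
              simp only [Finset.mem_filter] at hp
              exact (not_le.mp hp.2).le
          _ = ((Q.filter (fun p => ¬ ((1 + ε) * d ^ 2 * n ≤ cod p.1 p.2))).card : ℝ)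
                * ((1 + ε) * d ^ 2 * n) := by rw [Finset.sum_const, nsmul_eq_mul]
          _ ≤ y ^ 2 * ((1 + ε) * d ^ 2 * n) :=
              mul_le_mul_of_nonneg_right hcard (by positivity)
          _ = (1 + ε) * d ^ 2 * n * y ^ 2 := by ring
      linarith only [hbadpart, hgoodpart]
    linarith only [hdiag, hoff]
  -- lower bound on total degree
  have hT_ge : (y - ε * n) * ((1 - ε) * d * n) ≤ ∑ v ∈ Y, deg v := by
    classical
    set Bd := (Finset.univ : Finset (Fin m)).filter (fun v =>
      ((Finset.univ.filter (fun u => G u v)).card : ℝ) < (1 - ε) * d * (m : ℝ)) with hBd_def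
    have hBdcard : (Bd.card : ℝ) ≤ ε * n := hdeg
    have hYB : (y - ε * n) ≤ ((Y \ Bd).card : ℝ) := by
      have h1 : Y.card ≤ (Y \ Bd).card + Bd.card := Finset.card_le_card_sdiff_add_card
      have h2 : ((Y.card : ℕ) : ℝ) ≤ ((Y \ Bd).card : ℝ) + (Bd.card : ℝ) := by
        exact_mod_cast h1
      rw [← hy_def] at h2
      linarith only [h2, hBdcard]
    have hstep : ∀ v ∈ Y \ Bd, (1 - ε) * d * n ≤ deg v := by
      intro v hv
      have hv2 := (Finset.mem_sdiff.mp hv).2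
      rw [hBd_def] at hv2
      simp only [Finset.mem_filter, Finset.mem_univ, true_and, not_lt] at hv2
      exact hv2
    calc (y - ε * n) * ((1 - ε) * d * n)
        ≤ ((Y \ Bd).card : ℝ) * ((1 - ε) * d * n) := by
          exact mul_le_mul_of_nonneg_right hYB
            (mul_nonneg (mul_nonneg (by linarith) hd.le) hn0.le)
      _ ≤ ∑ v ∈ Y \ Bd, deg v := by
          rw [← nsmul_eq_mul]
          exact Finset.card_nsmul_le_sum _ _ _ hstep
      _ ≤ ∑ v ∈ Y, deg v :=
          Finset.sum_le_sum_of_subset_of_nonneg (Finset.sdiff_subset)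
            (fun v _ _ => hdeg0 v)
  -- the variance bound
  set D : ℝ := ∑ u, (degY u - d * y) ^ 2 with hD_def
  have hD_exp : D = (∑ u, (degY u) ^ 2) - 2 * d * y * (∑ u, degY u) + d ^ 2 * y ^ 2 * n := by
    rw [hD_def]
    have h1 : ∀ u : Fin m, (degY u - d * y) ^ 2
        = (degY u) ^ 2 - 2 * d * y * degY u + d ^ 2 * y ^ 2 := by intro u; ring
    rw [Finset.sum_congr rfl (fun u _ => h1 u)]
    rw [Finset.sum_add_distrib, Finset.sum_sub_distrib, ← Finset.mul_sum,
      Finset.sum_const, Finset.card_univ, nsmul_eq_mul]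
    simp only [Fintype.card_fin, hn_def]
    ring
  have hD_le : D ≤ (C + 6) * ε * d ^ 2 * n ^ 3 := by
    have h1 : 2 * d * y * ((y - ε * n) * ((1 - ε) * d * n)) ≤ 2 * d * y * (∑ v ∈ Y, deg v) :=
      mul_le_mul_of_nonneg_left hT_ge (by positivity)
    have hS2' : ∑ u, (degY u) ^ 2
        ≤ n * y + ε * C * d ^ 2 * n ^ 3 + (1 + ε) * d ^ 2 * n * y ^ 2 := by
      rw [hS2_eq]; exact hS2_le
    have hT' : (y - ε * n) * ((1 - ε) * d * n) ≤ ∑ u, degY u := by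
      rw [hT_eq]; exact hT_ge
    have h1' : 2 * d * y * ((y - ε * n) * ((1 - ε) * d * n)) ≤ 2 * d * y * (∑ u, degY u) :=
      mul_le_mul_of_nonneg_left hT' (by positivity)
    have h2 : D ≤ (n * y + ε * C * d ^ 2 * n ^ 3 + (1 + ε) * d ^ 2 * n * y ^ 2)
        - 2 * d * y * ((y - ε * n) * ((1 - ε) * d * n)) + d ^ 2 * y ^ 2 * n := by
      rw [hD_exp]
      linarith only [hS2', h1']
    have h3 : (n * y + ε * C * d ^ 2 * n ^ 3 + (1 + ε) * d ^ 2 * n * y ^ 2)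
        - 2 * d * y * ((y - ε * n) * ((1 - ε) * d * n)) + d ^ 2 * y ^ 2 * n
        ≤ n ^ 2 + (C + 5) * ε * d ^ 2 * n ^ 3 := by
      have e1 : (0:ℝ) ≤ ε := hε.le
      have e3 : (0:ℝ) ≤ y := hy0.le
      have e4 : (0:ℝ) ≤ n := hn0.le
      have key : (n * y + ε * C * d ^ 2 * n ^ 3 + (1 + ε) * d ^ 2 * n * y ^ 2)
          - 2 * d * y * ((y - ε * n) * ((1 - ε) * d * n)) + d ^ 2 * y ^ 2 * n
          = n * y + ε * C * d ^ 2 * n ^ 3 + 3 * ε * d ^ 2 * n * y ^ 2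
            + 2 * ε * (1 - ε) * d ^ 2 * n ^ 2 * y := by ring
      rw [key]
      have b1 : n * y ≤ n ^ 2 := by
        calc n * y ≤ n * n := mul_le_mul_of_nonneg_left hyn e4
          _ = n ^ 2 := by ring
      have b2 : 3 * ε * d ^ 2 * n * y ^ 2 ≤ 3 * ε * d ^ 2 * n * n ^ 2 := by
        have h5 : y ^ 2 ≤ n ^ 2 := by
          apply pow_le_pow_left₀ e3 hyn
        have h0 : (0:ℝ) ≤ 3 * ε * d ^ 2 * n := by positivity
        exact mul_le_mul_of_nonneg_left h5 h0
      have b3 : 2 * ε * (1 - ε) * d ^ 2 * n ^ 2 * y ≤ 2 * ε * d ^ 2 * n ^ 2 * n := by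
        have h5 : (1 - ε) * y ≤ n := by
          calc (1 - ε) * y ≤ 1 * y :=
                mul_le_mul_of_nonneg_right (by linarith only [hε]) e3
            _ = y := one_mul y
            _ ≤ n := hyn
        have h0 : (0:ℝ) ≤ 2 * ε * d ^ 2 * n ^ 2 := by positivity
        calc 2 * ε * (1 - ε) * d ^ 2 * n ^ 2 * y
            = (2 * ε * d ^ 2 * n ^ 2) * ((1 - ε) * y) := by ring
          _ ≤ (2 * ε * d ^ 2 * n ^ 2) * n := mul_le_mul_of_nonneg_left h5 h0
          _ = 2 * ε * d ^ 2 * n ^ 2 * n := by ring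
      linarith only [b1, b2, b3]
    have h4 : n ^ 2 + (C + 5) * ε * d ^ 2 * n ^ 3 ≤ (C + 6) * ε * d ^ 2 * n ^ 3 := by
      linarith only [hn2]
    linarith only [h2, h3, h4]
  -- Cauchy-Schwarz
  have hCS : (E - d * x * y) ^ 2 ≤ x * D := by
    have h1 : E - d * x * y = ∑ u ∈ X, (degY u - d * y) := by
      rw [Finset.sum_sub_distrib, ← hE_eq, Finset.sum_const, nsmul_eq_mul]
      ring
    have h2 : (∑ u ∈ X, (degY u - d * y)) ^ 2 ≤ X.card * ∑ u ∈ X, (degY u - d * y) ^ 2 :=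
      sq_sum_le_card_mul_sum_sq
    have h3 : ∑ u ∈ X, (degY u - d * y) ^ 2 ≤ D := by
      rw [hD_def]
      exact Finset.sum_le_sum_of_subset_of_nonneg (Finset.subset_univ X)
        (fun u _ _ => sq_nonneg _)
    calc (E - d * x * y) ^ 2 = (∑ u ∈ X, (degY u - d * y)) ^ 2 := by rw [h1]
      _ ≤ X.card * ∑ u ∈ X, (degY u - d * y) ^ 2 := h2
      _ ≤ x * D := by
          rw [hx_def]
          apply mul_le_mul_of_nonneg_left h3 (by positivity)
  -- combine
  have hfinal : (E - d * x * y) ^ 2 ≤ (η * d * x * y) ^ 2 := by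
    have hmain : (C + 6) * ε * n ^ 3 ≤ η ^ 2 * (x * y ^ 2) := by
      calc (C + 6) * ε * n ^ 3 ≤ η ^ 5 * n ^ 3 :=
            mul_le_mul_of_nonneg_right hkey (by positivity)
        _ = η ^ 2 * ((η * n) * (η * n) ^ 2) := by ring
        _ ≤ η ^ 2 * (x * y ^ 2) := by
            have hy2 : (η * n) ^ 2 ≤ y ^ 2 := by
              apply pow_le_pow_left₀ (by positivity) hY
            have hxx : η * n ≤ x := hX
            apply mul_le_mul_of_nonneg_left _ (by positivity)
            exact mul_le_mul hxx hy2 (by positivity) hx0.le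
    calc (E - d * x * y) ^ 2 ≤ x * D := hCS
      _ ≤ x * ((C + 6) * ε * d ^ 2 * n ^ 3) :=
          mul_le_mul_of_nonneg_left hD_le hx0.le
      _ = d ^ 2 * x * ((C + 6) * ε * n ^ 3) := by ring
      _ ≤ d ^ 2 * x * (η ^ 2 * (x * y ^ 2)) :=
          mul_le_mul_of_nonneg_left hmain (by positivity)
      _ = (η * d * x * y) ^ 2 := by ring
  have hb0 : (0:ℝ) ≤ η * d * x * y := by positivity
  obtain ⟨habs2, habs1⟩ := abs_le_of_sq_le_sq' hfinal hb0
  have hxy : (0:ℝ) < x * y := by positivity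
  have hdens : dens G X Y = E / (x * y) := by
    rw [_root_.dens, hE_def, hx_def, hy_def]
  constructor
  · rw [hdens, le_div_iff₀ hxy]
    nlinarith only [habs2]
  · rw [hdens, div_le_iff₀ hxy]
    nlinarith only [habs1]
end

section
/- Let q ∈ ℕ, and suppose 0 < 1/n ≪ ε ≪ ν ≤ τ ≪ α < 1 and 1/n ≪ ξ ≤ qν²/3. Let G be a digraph on n vertices with δ⁰(G) ≥ αn which is a robust (ν,τ)-outexpander. Let Q be a multidigraph on V(G) containing at least q edges from x to y whenever xy ∈ E(G). For every vertex x let n⁺ₓ, n⁻ₓ ∈ ℕ satisfy (1−ε)ξn ≤ n⁺ₓ, n⁻ₓ ≤ (1+ε)ξn with Σₓ n⁺ₓ = Σₓ n⁻ₓ. Then Q contains a spanning submultidigraph Q' with d⁺_{Q'}(x) = n⁺ₓ and d⁻_{Q'}(x) = n⁻ₓ for every vertex x. -/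
open Finset
open scoped Classical

section FlowAux
variable {n : ℕ} {Q : Fin n → Fin n → ℕ} {np nm : Fin n → ℕ}

abbrev Edg (Q : Fin n → Fin n → ℕ) := Σ x : Fin n, Σ y : Fin n, Fin (Q x y)
abbrev FlowL (Q : Fin n → Fin n → ℕ) (np : Fin n → ℕ) := (Σ x : Fin n, Fin (np x)) ⊕ Edg Q
abbrev FlowR (Q : Fin n → Fin n → ℕ) (nm : Fin n → ℕ) := (Σ y : Fin n, Fin (nm y)) ⊕ Edg Q

noncomputable def flowT (Q : Fin n → Fin n → ℕ) (np nm : Fin n → ℕ) :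
    FlowL Q np → Finset (FlowR Q nm) := fun l =>
  match l with
  | .inl st => univ.filter (fun r => ∃ y k, r = .inr ⟨st.1, y, k⟩)
  | .inr σ => insert (.inr σ) (univ.filter (fun r => ∃ j, r = .inl ⟨σ.2.1, j⟩))

lemma getLeft_inj {α β : Type*} (a b : α ⊕ β) (ha : a.isLeft = true) (hb : b.isLeft = true)
    (h : a.getLeft ha = b.getLeft hb) : a = b := by
  cases a <;> cases b <;> simp_all

lemma card_stub_filter {m : ℕ} (f : Fin m → ℕ) (x : Fin m) :
    (((univ : Finset (Σ i : Fin m, Fin (f i)))).filter (fun st => st.1 = x)).card = f x := by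
  have himg : ((univ : Finset (Σ i : Fin m, Fin (f i))).filter (fun st => st.1 = x)) =
      (univ : Finset (Fin (f x))).image (fun i => (⟨x, i⟩ : Σ i, Fin (f i))) := by
    ext ⟨x', j⟩
    simp only [mem_filter, mem_univ, true_and, mem_image]
    constructor
    · rintro rfl
      exact ⟨j, rfl⟩
    · rintro ⟨i, h⟩
      rw [Sigma.mk.inj_iff] at h
      exact h.1.symm
  rw [himg, card_image_of_injective, card_univ, Fintype.card_fin]
  intro i j hij
  exact eq_of_heq (Sigma.mk.inj_iff.mp hij).2

lemma exists_flow (hsum : ∑ x, np x = ∑ x, nm x)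
    (hall : ∀ s : Finset (FlowL Q np), s.card ≤ (s.biUnion (flowT Q np nm)).card) :
    ∃ Q' : Fin n → Fin n → ℕ, (∀ x y, Q' x y ≤ Q x y) ∧
      (∀ x, ∑ y, Q' x y = np x) ∧ (∀ y, ∑ x, Q' x y = nm y) := by
  obtain ⟨g, hginj, hgmem⟩ :=
    (Finset.all_card_le_biUnion_card_iff_exists_injective (flowT Q np nm)).mp hall
  have hcard : Fintype.card (FlowL Q np) = Fintype.card (FlowR Q nm) := by
    simp [Fintype.card_sum, Fintype.card_sigma, hsum]
  have hbij : Function.Bijective g := (Fintype.bijective_iff_injective_and_card g).2 ⟨hginj, hcard⟩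
  set e := Equiv.ofBijective g hbij with he
  have hge : ∀ l, g l = e l := fun l => rfl
  have stubfact : ∀ (st : Σ x : Fin n, Fin (np x)), ∃ y k, g (.inl st) = .inr ⟨st.1, y, k⟩ := by
    intro st
    have := hgmem (.inl st)
    rw [flowT, mem_filter] at this
    exact this.2
  have vfact : ∀ σ : Edg Q, g (.inr σ) = .inr σ ∨ ∃ j, g (.inr σ) = .inl ⟨σ.2.1, j⟩ := by
    intro σ
    have := hgmem (.inr σ)
    rw [flowT, mem_insert] at this
    rcases this with h | h
    · exact Or.inl h
    · exact Or.inr (mem_filter.1 h).2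
  have prefact : ∀ σ : Edg Q, e.symm (.inr σ) = .inr σ ∨
      ∃ i, e.symm (.inr σ) = .inl ⟨σ.1, i⟩ := by
    intro σ
    have hl : g (e.symm (.inr σ)) = .inr σ := by rw [hge]; exact e.apply_symm_apply _
    rcases hl' : e.symm (.inr σ) with st | σ'
    · right
      rw [hl'] at hl
      obtain ⟨y, k, hyk⟩ := stubfact st
      rw [hyk] at hl
      have h2 : (⟨st.1, y, k⟩ : Edg Q) = σ := Sum.inr_injective hl
      rcases st with ⟨x, i⟩
      have hx : x = σ.1 := by rw [← h2]
      subst hx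
      exact ⟨i, rfl⟩
    · left
      rw [hl'] at hl
      rcases vfact σ' with h | ⟨j, h⟩
      · have hσσ : σ' = σ := Sum.inr_injective (h.symm.trans hl)
        rw [hσσ]
      · rw [h] at hl; exact absurd hl (by simp)
  have stubprefact : ∀ (st : Σ y : Fin n, Fin (nm y)), ∃ σ : Edg Q,
      e.symm (.inl st) = .inr σ ∧ σ.2.1 = st.1 := by
    intro st
    have hl : g (e.symm (.inl st)) = .inl st := by rw [hge]; exact e.apply_symm_apply _
    rcases hl' : e.symm (.inl st) with st' | σ
    · rw [hl'] at hl
      obtain ⟨y, k, hyk⟩ := stubfact st'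
      rw [hyk] at hl
      exact absurd hl (by simp)
    · rw [hl'] at hl
      rcases vfact σ with h | ⟨j, h⟩
      · rw [h] at hl; exact absurd hl (by simp)
      · rw [h] at hl
        refine ⟨σ, rfl, ?_⟩
        have := Sum.inl_injective hl
        rw [← this]
  have iffkey : ∀ σ : Edg Q, (e.symm (.inr σ)).isLeft = true ↔ (g (.inr σ)).isLeft = true := by
    intro σ
    have h1 : g (.inr σ) = .inr σ ↔ e.symm (.inr σ) = .inr σ := by
      rw [hge]
      constructor
      · intro h; rw [← h]; exact e.symm_apply_apply _
      · intro h; conv_lhs => rw [← h]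
        exact e.apply_symm_apply _
    constructor
    · intro h
      rcases vfact σ with h2 | ⟨j, h2⟩
      · rw [h1] at h2; rw [h2] at h; simp at h
      · rw [h2]; rfl
    · intro h
      rcases prefact σ with h2 | ⟨i, h2⟩
      · rw [← h1] at h2; rw [h2] at h; simp at h
      · rw [h2]; rfl
  refine ⟨fun x y => (univ.filter (fun σ : Edg Q =>
      σ.1 = x ∧ σ.2.1 = y ∧ (g (.inr σ)).isLeft = true)).card, ?_, ?_, ?_⟩
  · -- capacity
    intro x y
    have hsub : (univ.filter (fun σ : Edg Q =>
        σ.1 = x ∧ σ.2.1 = y ∧ (g (.inr σ)).isLeft = true)) ⊆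
        (univ : Finset (Fin (Q x y))).image (fun k => (⟨x, y, k⟩ : Edg Q)) := by
      intro σ hσ
      obtain ⟨x', y', k⟩ := σ
      obtain ⟨-, h1, h2, -⟩ := mem_filter.1 hσ
      dsimp at h1 h2
      subst h1; subst h2
      exact mem_image.2 ⟨k, mem_univ _, rfl⟩
    calc _ ≤ _ := card_le_card hsub
      _ ≤ (univ : Finset (Fin (Q x y))).card := card_image_le
      _ = Q x y := by simp
  · -- row sums
    intro x
    have hfib : (univ.filter (fun σ : Edg Q =>
        σ.1 = x ∧ (g (.inr σ)).isLeft = true)).card =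
        ∑ y, (univ.filter (fun σ : Edg Q =>
          σ.1 = x ∧ σ.2.1 = y ∧ (g (.inr σ)).isLeft = true)).card := by
      rw [card_eq_sum_card_fiberwise (f := fun σ : Edg Q => σ.2.1) (t := univ)
        (fun σ _ => mem_univ _)]
      refine Finset.sum_congr rfl (fun y _ => ?_)
      rw [filter_filter]
      congr 1
      ext σ
      simp only [mem_filter, mem_univ, true_and]
      tauto
    rw [← hfib]
    have hrw : (univ.filter (fun σ : Edg Q => σ.1 = x ∧ (g (.inr σ)).isLeft = true)) =
        (univ.filter (fun σ : Edg Q => σ.1 = x ∧ (e.symm (.inr σ)).isLeft = true)) := by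
      ext σ
      simp only [mem_filter, mem_univ, true_and]
      rw [iffkey σ]
    rw [hrw, ← card_stub_filter np x]
    refine card_bij (fun σ hσ => (e.symm (.inr σ)).getLeft (mem_filter.1 hσ).2.2) ?_ ?_ ?_
    · intro σ hσ
      obtain ⟨-, h1, h2⟩ := mem_filter.1 hσ
      rcases prefact σ with h | ⟨i, h⟩
      · rw [h] at h2; simp at h2
      · simp only [mem_filter, mem_univ, true_and]
        have hgl : (e.symm (Sum.inr σ)).getLeft (mem_filter.1 hσ).2.2 = ⟨σ.1, i⟩ := by
          simp [h]
        rw [hgl, h1]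
    · intro σ1 h1 σ2 h2 heq
      have := getLeft_inj _ _ (mem_filter.1 h1).2.2 (mem_filter.1 h2).2.2 heq
      exact Sum.inr_injective (e.symm.injective this)
    · intro st hst
      obtain ⟨y, k, hyk⟩ := stubfact st
      refine ⟨⟨st.1, y, k⟩, ?_, ?_⟩
      · have hsymm : e.symm (.inr ⟨st.1, y, k⟩) = .inl st := by
          rw [← hyk, hge]; exact e.symm_apply_apply _
        simp only [mem_filter, mem_univ, true_and]
        refine ⟨(mem_filter.1 hst).2, ?_⟩
        rw [hsymm]; rfl
      · have hsymm : e.symm (.inr ⟨st.1, y, k⟩) = .inl st := by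
          rw [← hyk, hge]; exact e.symm_apply_apply _
        simp [hsymm]
  · -- column sums
    intro y
    have hfib : (univ.filter (fun σ : Edg Q =>
        σ.2.1 = y ∧ (g (.inr σ)).isLeft = true)).card =
        ∑ x, (univ.filter (fun σ : Edg Q =>
          σ.1 = x ∧ σ.2.1 = y ∧ (g (.inr σ)).isLeft = true)).card := by
      rw [card_eq_sum_card_fiberwise (f := fun σ : Edg Q => σ.1) (t := univ)
        (fun σ _ => mem_univ _)]
      refine Finset.sum_congr rfl (fun x _ => ?_)
      rw [filter_filter]
      congr 1
      ext σ
      simp only [mem_filter, mem_univ, true_and]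
      tauto
    rw [← hfib, ← card_stub_filter nm y]
    refine card_bij (fun σ hσ => (g (.inr σ)).getLeft (mem_filter.1 hσ).2.2) ?_ ?_ ?_
    · intro σ hσ
      obtain ⟨-, h1, h2⟩ := mem_filter.1 hσ
      rcases vfact σ with h | ⟨j, h⟩
      · rw [h] at h2; simp at h2
      · simp only [mem_filter, mem_univ, true_and]
        have hgl : (g (Sum.inr σ)).getLeft (mem_filter.1 hσ).2.2 = ⟨σ.2.1, j⟩ := by
          simp [h]
        rw [hgl, h1]
    · intro σ1 h1 σ2 h2 heq
      have := getLeft_inj _ _ (mem_filter.1 h1).2.2 (mem_filter.1 h2).2.2 heq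
      exact Sum.inr_injective (hginj this)
    · intro st hst
      obtain ⟨σ, hσ, hσy⟩ := stubprefact st
      have hgσ : g (.inr σ) = .inl st := by
        rw [hge, ← hσ]; exact e.apply_symm_apply _
      refine ⟨σ, ?_, ?_⟩
      · simp only [mem_filter, mem_univ, true_and]
        refine ⟨by rw [hσy]; exact (mem_filter.1 hst).2, ?_⟩
        rw [hgσ]; rfl
      · simp [hgσ]
lemma flow_hall
    (hGH : ∀ A B : Finset (Fin n),
      ∑ x ∈ A, np x ≤ (∑ x ∈ A, ∑ y ∈ B, Q x y) + ∑ y ∈ Bᶜ, nm y) :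
    ∀ s : Finset (FlowL Q np), s.card ≤ (s.biUnion (flowT Q np nm)).card := by
  intro s
  set A : Finset (Fin n) := univ.filter (fun x => ∃ i : Fin (np x), Sum.inl ⟨x, i⟩ ∈ s) with hA
  set B' : Finset (Fin n) := univ.filter (fun y => ∃ x k, Sum.inr (⟨x, y, k⟩ : Edg Q) ∈ s) with hB'
  set Vex : Finset (Edg Q) := univ.filter (fun σ => σ.1 ∉ A ∧ Sum.inr σ ∈ s) with hVex
  set VA : Finset (Edg Q) := univ.filter (fun σ => σ.1 ∈ A ∧ Sum.inr σ ∈ s) with hVA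
  -- upper bound for #s
  have hsub : s ⊆ ((A.sigma (fun x => (univ : Finset (Fin (np x))))).image Sum.inl) ∪
      ((VA ∪ Vex).image Sum.inr) := by
    intro l hl
    rcases l with st | σ
    · apply mem_union_left
      refine mem_image.2 ⟨st, ?_, rfl⟩
      rcases st with ⟨x, i⟩
      exact mem_sigma.2 ⟨mem_filter.2 ⟨mem_univ _, ⟨i, hl⟩⟩, mem_univ _⟩
    · apply mem_union_right
      refine mem_image.2 ⟨σ, ?_, rfl⟩
      by_cases hσ : σ.1 ∈ A
      · exact mem_union_left _ (mem_filter.2 ⟨mem_univ _, hσ, hl⟩)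
      · exact mem_union_right _ (mem_filter.2 ⟨mem_univ _, hσ, hl⟩)
  have hcard_s : s.card ≤ (∑ x ∈ A, np x) + (VA.card + Vex.card) := by
    calc s.card ≤ _ := card_le_card hsub
    _ ≤ ((A.sigma (fun x => (univ : Finset (Fin (np x))))).image Sum.inl).card +
        ((VA ∪ Vex).image Sum.inr).card := card_union_le _ _
    _ ≤ (∑ x ∈ A, np x) + (VA.card + Vex.card) := by
        gcongr
        · rw [card_image_of_injective _ Sum.inl_injective, card_sigma]
          simp
        · calc ((VA ∪ Vex).image Sum.inr).card ≤ (VA ∪ Vex).card := card_image_le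
            _ ≤ VA.card + Vex.card := card_union_le _ _
  have hVAle : VA.card ≤ ∑ x ∈ A, ∑ y ∈ B', Q x y := by
    have : VA ⊆ A.sigma (fun x => B'.sigma (fun y => (univ : Finset (Fin (Q x y))))) := by
      intro σ hσ
      rcases σ with ⟨x, y, k⟩
      rw [hVA, mem_filter] at hσ
      refine mem_sigma.2 ⟨hσ.2.1, mem_sigma.2 ⟨?_, mem_univ _⟩⟩
      exact mem_filter.2 ⟨mem_univ _, ⟨x, k, hσ.2.2⟩⟩
    calc VA.card ≤ _ := card_le_card this
      _ = ∑ x ∈ A, ∑ y ∈ B', Q x y := by rw [card_sigma]; congr 1; ext x; rw [card_sigma]; simp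
  -- lower bound for the neighbourhood
  set N := s.biUnion (flowT Q np nm) with hN
  have hSb : ((B'.sigma (fun y => (univ : Finset (Fin (nm y))))).image (Sum.inl : (Σ y : Fin n, Fin (nm y)) → FlowR Q nm)) ⊆ N := by
    intro r hr
    rcases mem_image.1 hr with ⟨st, hst, rfl⟩
    rcases st with ⟨y, j⟩
    rcases mem_sigma.1 hst with ⟨hy, -⟩
    rcases mem_filter.1 hy with ⟨-, x, k, hxk⟩
    refine mem_biUnion.2 ⟨Sum.inr ⟨x, y, k⟩, hxk, ?_⟩
    simp [flowT]
  have hUA : ((A.sigma (fun x => (univ : Finset (Σ y : Fin n, Fin (Q x y))))).image (Sum.inr : Edg Q → FlowR Q nm)) ⊆ N := by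
    intro r hr
    rcases mem_image.1 hr with ⟨σ, hσ, rfl⟩
    rcases σ with ⟨x, yk⟩
    rcases mem_sigma.1 hσ with ⟨hx, -⟩
    rcases mem_filter.1 hx with ⟨-, i, hi⟩
    refine mem_biUnion.2 ⟨Sum.inl ⟨x, i⟩, hi, ?_⟩
    rcases yk with ⟨y, k⟩
    simp [flowT]
  have hUex : (Vex.image (Sum.inr : Edg Q → FlowR Q nm)) ⊆ N := by
    intro r hr
    rcases mem_image.1 hr with ⟨σ, hσ, rfl⟩
    rcases mem_filter.1 hσ with ⟨-, -, hs⟩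
    refine mem_biUnion.2 ⟨Sum.inr σ, hs, ?_⟩
    simp [flowT]
  have hdisj1 : Disjoint ((A.sigma (fun x => (univ : Finset (Σ y : Fin n, Fin (Q x y))))).image (Sum.inr : Edg Q → FlowR Q nm))
      (Vex.image (Sum.inr : Edg Q → FlowR Q nm)) := by
    rw [disjoint_left]
    rintro r hr1 hr2
    rcases mem_image.1 hr1 with ⟨σ, hσ, rfl⟩
    rcases mem_image.1 hr2 with ⟨σ', hσ', heq⟩
    have : σ' = σ := Sum.inr_injective heq
    subst this
    exact (mem_filter.1 hσ').2.1 (mem_sigma.1 hσ).1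
  have hdisj2 : Disjoint ((B'.sigma (fun y => (univ : Finset (Fin (nm y))))).image (Sum.inl : (Σ y : Fin n, Fin (nm y)) → FlowR Q nm))
      (((A.sigma (fun x => (univ : Finset (Σ y : Fin n, Fin (Q x y))))).image (Sum.inr : Edg Q → FlowR Q nm)) ∪ (Vex.image (Sum.inr : Edg Q → FlowR Q nm))) := by
    rw [disjoint_left]
    rintro r hr1 hr2
    rcases mem_image.1 hr1 with ⟨st, -, rfl⟩
    rcases mem_union.1 hr2 with h | h <;> rcases mem_image.1 h with ⟨σ, -, heq⟩ <;> exact absurd heq (by simp)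
  have hcard_N : (∑ y ∈ B', nm y) + ((∑ x ∈ A, ∑ y, Q x y) + Vex.card) ≤ N.card := by
    have h1 : (((B'.sigma (fun y => (univ : Finset (Fin (nm y))))).image (Sum.inl : (Σ y : Fin n, Fin (nm y)) → FlowR Q nm)) ∪
        (((A.sigma (fun x => (univ : Finset (Σ y : Fin n, Fin (Q x y))))).image (Sum.inr : Edg Q → FlowR Q nm)) ∪ (Vex.image (Sum.inr : Edg Q → FlowR Q nm)))) ⊆ N :=
      union_subset hSb (union_subset hUA hUex)
    calc (∑ y ∈ B', nm y) + ((∑ x ∈ A, ∑ y, Q x y) + Vex.card)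
        = (((B'.sigma (fun y => (univ : Finset (Fin (nm y))))).image (Sum.inl : (Σ y : Fin n, Fin (nm y)) → FlowR Q nm)) ∪
          (((A.sigma (fun x => (univ : Finset (Σ y : Fin n, Fin (Q x y))))).image (Sum.inr : Edg Q → FlowR Q nm)) ∪ (Vex.image (Sum.inr : Edg Q → FlowR Q nm)))).card := by
          rw [card_union_of_disjoint hdisj2, card_union_of_disjoint hdisj1]
          congr 1
          · rw [card_image_of_injective _ Sum.inl_injective, card_sigma]; simp
          congr 1
          · rw [card_image_of_injective _ Sum.inr_injective, card_sigma]
            refine Finset.sum_congr rfl (fun x _ => ?_)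
            simp
          · rw [card_image_of_injective _ Sum.inr_injective]
      _ ≤ N.card := card_le_card h1
  -- combine
  have hkey := hGH A B'ᶜ
  rw [compl_compl] at hkey
  have hsplit : ∑ x ∈ A, ∑ y, Q x y = (∑ x ∈ A, ∑ y ∈ B', Q x y) + ∑ x ∈ A, ∑ y ∈ B'ᶜ, Q x y := by
    rw [← Finset.sum_add_distrib]
    refine Finset.sum_congr rfl (fun x _ => ?_)
    rw [← Finset.sum_add_sum_compl B']
  omega


end FlowAux

lemma GH_holds {n : ℕ} (hn : 1 ≤ n) {α τ ν ε ξ : ℝ} {q : ℕ} (hq : 0 < q)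
    (hα : 0 < α) (hν : 0 < ν) (hντ : ν ≤ τ) (hτα : τ ≤ α / 4) (hτhalf : τ ≤ 1 / 2)
    (hε0 : 0 < ε) (hε : ε ≤ ν / 5)
    (hξ0 : 0 < ξ) (hξq : ξ ≤ (q : ℝ) * ν ^ 2 / 3)
    (G : Fin n → Fin n → Prop)
    (hdeg : ∀ x, α * (n : ℝ) ≤ (outDeg G x : ℝ) ∧ α * (n : ℝ) ≤ (inDeg G x : ℝ))
    (hexp : IsRobustOutexpander G ν τ)
    (Q : Fin n → Fin n → ℕ) (hQ : ∀ x y, G x y → q ≤ Q x y)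
    (np nm : Fin n → ℕ)
    (hbound : ∀ x, (1 - ε) * ξ * (n : ℝ) ≤ (np x : ℝ) ∧ (np x : ℝ) ≤ (1 + ε) * ξ * (n : ℝ) ∧
          (1 - ε) * ξ * (n : ℝ) ≤ (nm x : ℝ) ∧ (nm x : ℝ) ≤ (1 + ε) * ξ * (n : ℝ))
    (hsum : (∑ x, np x) = (∑ x, nm x)) :
    ∀ A B : Finset (Fin n),
      ∑ x ∈ A, np x ≤ (∑ x ∈ A, ∑ y ∈ B, Q x y) + ∑ y ∈ Bᶜ, nm y := by
  intro A B
  set N : ℝ := (n : ℝ) with hNdef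
  clear_value N
  have hN1 : (1 : ℝ) ≤ N := by rw [hNdef]; exact_mod_cast hn
  have hN0 : (0 : ℝ) < N := lt_of_lt_of_le one_pos hN1
  have hq1 : (1 : ℝ) ≤ (q : ℝ) := by exact_mod_cast hq
  have hε110 : ε ≤ 1 / 10 := by linarith
  have hτ0 : 0 ≤ τ := le_trans hν.le hντ
  have hν2 : ν ^ 2 ≤ α / 8 := by
    have h1 : τ * τ ≤ (α / 4) * (1 / 2) := mul_le_mul hτα hτhalf hτ0 (by linarith)
    have h2 : ν * ν ≤ τ * τ := mul_le_mul hντ hντ hν.le hτ0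
    linarith [h1, h2]
  have hq0' : (0 : ℝ) ≤ (q : ℝ) := Nat.cast_nonneg _
  have hconst : (1 + ε) * ξ ≤ (q : ℝ) * α / 2 := by
    have h1 : (q : ℝ) * ν ^ 2 ≤ (q : ℝ) * (α / 8) := mul_le_mul_of_nonneg_left hν2 hq0'
    have h2 : ε * ξ ≤ (1 / 10) * ξ := mul_le_mul_of_nonneg_right hε110 hξ0.le
    have h3 : (0 : ℝ) ≤ (q : ℝ) * α := mul_nonneg hq0' hα.le
    linarith [h1, h2, h3]
  set a : ℝ := (A.card : ℝ) with hadef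
  set c : ℝ := (Bᶜ.card : ℝ) with hcdef
  set b : ℝ := (B.card : ℝ) with hbdef
  clear_value a b c
  have ha0 : 0 ≤ a := by rw [hadef]; positivity
  have hc0 : 0 ≤ c := by rw [hcdef]; positivity
  have hb0 : 0 ≤ b := by rw [hbdef]; positivity
  have haN : a ≤ N := by
    have := card_le_card (subset_univ A)
    have h2 : A.card ≤ n := by simpa using this
    rw [hadef, hNdef]; exact_mod_cast h2
  have hbN : b ≤ N := by
    have := card_le_card (subset_univ B)
    have h2 : B.card ≤ n := by simpa using this
    rw [hbdef, hNdef]; exact_mod_cast h2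
  have hcN : c ≤ N := by
    have := card_le_card (subset_univ Bᶜ)
    have h2 : Bᶜ.card ≤ n := by simpa using this
    rw [hcdef, hNdef]; exact_mod_cast h2
  -- real versions of sums
  set Sp : ℝ := ∑ x ∈ A, (np x : ℝ) with hSpdef
  set Sm : ℝ := ∑ y ∈ Bᶜ, (nm y : ℝ) with hSmdef
  set SQ : ℝ := ∑ x ∈ A, ∑ y ∈ B, (Q x y : ℝ) with hSQdef
  clear_value Sp Sm SQ
  suffices h : Sp ≤ SQ + Sm by
    rw [hSpdef, hSmdef, hSQdef] at h
    exact_mod_cast h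
  have hSp : Sp ≤ a * ((1 + ε) * ξ * N) := by
    rw [hSpdef, hadef]
    calc ∑ x ∈ A, (np x : ℝ) ≤ ∑ _x ∈ A, (1 + ε) * ξ * N :=
          Finset.sum_le_sum (fun x _ => (hbound x).2.1)
      _ = (↑(A.card) : ℝ) * ((1 + ε) * ξ * N) := by rw [Finset.sum_const, nsmul_eq_mul]
  have hSm : c * ((1 - ε) * ξ * N) ≤ Sm := by
    rw [hSmdef, hcdef]
    calc (↑(Bᶜ.card) : ℝ) * ((1 - ε) * ξ * N) = ∑ _y ∈ Bᶜ, (1 - ε) * ξ * N := by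
          rw [Finset.sum_const, nsmul_eq_mul]
      _ ≤ ∑ y ∈ Bᶜ, (nm y : ℝ) := Finset.sum_le_sum (fun y _ => (hbound y).2.2.1)
  have hSQ0 : 0 ≤ SQ := by
    rw [hSQdef]
    exact Finset.sum_nonneg fun x _ => Finset.sum_nonneg fun y _ => Nat.cast_nonneg _
  have hSm0 : 0 ≤ Sm := by
    rw [hSmdef]
    exact Finset.sum_nonneg fun y _ => Nat.cast_nonneg _
  have hξN0 : 0 ≤ ξ * N := le_of_lt (mul_pos hξ0 hN0)
  -- edge counts
  set eg : ℕ := ∑ x ∈ A, (B.filter (fun y => G x y)).card with hegdef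
  clear_value eg
  have hqe : (q : ℝ) * (eg : ℝ) ≤ SQ := by
    have hnat : q * eg ≤ ∑ x ∈ A, ∑ y ∈ B, Q x y := by
      rw [hegdef, Finset.mul_sum]
      refine Finset.sum_le_sum (fun x _ => ?_)
      calc q * (B.filter (fun y => G x y)).card
          = ∑ y ∈ B.filter (fun y => G x y), q := by rw [Finset.sum_const, smul_eq_mul, mul_comm]
        _ ≤ ∑ y ∈ B.filter (fun y => G x y), Q x y :=
            Finset.sum_le_sum (fun y hy => hQ x y (mem_filter.1 hy).2)
        _ ≤ ∑ y ∈ B, Q x y :=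
            Finset.sum_le_sum_of_subset_of_nonneg (filter_subset _ _) (fun _ _ _ => Nat.zero_le _)
    rw [hSQdef]
    push_cast
    exact_mod_cast hnat
  by_cases hcase1 : (1 + ε) * a ≤ (1 - ε) * c
  · -- small A relative to Bᶜ
    have : Sp ≤ Sm := by
      calc Sp ≤ a * ((1 + ε) * ξ * N) := hSp
        _ = ((1 + ε) * a) * (ξ * N) := by ring
        _ ≤ ((1 - ε) * c) * (ξ * N) := mul_le_mul_of_nonneg_right hcase1 hξN0
        _ = c * ((1 - ε) * ξ * N) := by ring
        _ ≤ Sm := hSm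
    linarith
  push_neg at hcase1
  by_cases hcase2 : a < τ * N
  · -- A small: min outdegree argument
    have hεc : ε * c ≤ 1 / 10 * c := mul_le_mul_of_nonneg_right hε110 hc0
    have hεa : ε * a ≤ 1 / 10 * a := mul_le_mul_of_nonneg_right hε110 ha0
    have hca : c < 2 * a := by linarith [hεc, hεa, hcase1]
    have hτN : τ * N ≤ α / 4 * N := mul_le_mul_of_nonneg_right hτα hN0.le
    have hcA : c < α / 2 * N := by linarith [hca, hcase2, hτN]
    have hfil : ∀ x : Fin n, α * N - c ≤ ((B.filter (fun y => G x y)).card : ℝ) := by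
      intro x
      have hsub : univ.filter (fun y => G x y) ⊆ (B.filter (fun y => G x y)) ∪ Bᶜ := by
        intro y hy
        rcases mem_filter.1 hy with ⟨-, hGy⟩
        by_cases hyB : y ∈ B
        · exact mem_union_left _ (mem_filter.2 ⟨hyB, hGy⟩)
        · exact mem_union_right _ (mem_compl.2 hyB)
      have hnat : outDeg G x ≤ (B.filter (fun y => G x y)).card + Bᶜ.card := by
        calc outDeg G x ≤ ((B.filter (fun y => G x y)) ∪ Bᶜ).card := card_le_card hsub
          _ ≤ _ := card_union_le _ _
      have hcast : (outDeg G x : ℝ) ≤ ((B.filter (fun y => G x y)).card : ℝ) + (Bᶜ.card : ℝ) := by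
        exact_mod_cast hnat
      rw [← hcdef] at hcast
      have := (hdeg x).1
      linarith
    have hegl : a * (α * N - c) ≤ (eg : ℝ) := by
      have : (eg : ℝ) = ∑ x ∈ A, ((B.filter (fun y => G x y)).card : ℝ) := by
        rw [hegdef]; push_cast; ring
      rw [this]
      rw [hadef]
      calc (↑(A.card) : ℝ) * (α * N - c) = ∑ _x ∈ A, (α * N - c) := by
            rw [Finset.sum_const, nsmul_eq_mul]
        _ ≤ _ := Finset.sum_le_sum (fun x _ => hfil x)
    have hmid : a * ((1 + ε) * ξ * N) ≤ (q : ℝ) * (a * (α * N - c)) := by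
      have t1 : (1 + ε) * ξ * N ≤ ((q : ℝ) * α / 2) * N := mul_le_mul_of_nonneg_right hconst hN0.le
      have t2 : (q : ℝ) * (α / 2 * N) ≤ (q : ℝ) * (α * N - c) :=
        mul_le_mul_of_nonneg_left (by linarith [hcA]) hq0'
      have h1 : (1 + ε) * ξ * N ≤ (q : ℝ) * (α * N - c) := by linarith [t1, t2]
      calc a * ((1 + ε) * ξ * N) ≤ a * ((q : ℝ) * (α * N - c)) :=
            mul_le_mul_of_nonneg_left h1 ha0
        _ = (q : ℝ) * (a * (α * N - c)) := by ring
    have hqa : (q : ℝ) * (a * (α * N - c)) ≤ (q : ℝ) * eg :=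
      mul_le_mul_of_nonneg_left hegl (by positivity)
    linarith
  push_neg at hcase2
  -- swap form of the edge count
  have hswap : eg = ∑ y ∈ B, (A.filter (fun x => G x y)).card := by
    rw [hegdef]
    have h1 : ∀ x ∈ A, (B.filter (fun y => G x y)).card = ∑ y ∈ B, if G x y then 1 else 0 :=
      fun x _ => Finset.card_filter _ _
    rw [Finset.sum_congr rfl h1, Finset.sum_comm]
    refine Finset.sum_congr rfl (fun y _ => ?_)
    exact (Finset.card_filter _ _).symm
  have hegswapR : (eg : ℝ) = ∑ y ∈ B, ((A.filter (fun x => G x y)).card : ℝ) := by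
    rw [hswap]; push_cast; ring
  by_cases hcase3 : (1 - τ) * N < a
  · -- A huge: min indegree argument
    have hAc : (Aᶜ.card : ℝ) = N - a := by
      have h1 : Aᶜ.card = n - A.card := by
        rw [card_compl]; simp
      rw [h1, Nat.cast_sub (by simpa using card_le_card (subset_univ A)), ← hNdef, ← hadef]
    have hfil : ∀ y : Fin n, α * N - (N - a) ≤ ((A.filter (fun x => G x y)).card : ℝ) := by
      intro y
      have hsub : univ.filter (fun x => G x y) ⊆ (A.filter (fun x => G x y)) ∪ Aᶜ := by
        intro x hx
        rcases mem_filter.1 hx with ⟨-, hGx⟩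
        by_cases hxA : x ∈ A
        · exact mem_union_left _ (mem_filter.2 ⟨hxA, hGx⟩)
        · exact mem_union_right _ (mem_compl.2 hxA)
      have hnat : inDeg G y ≤ (A.filter (fun x => G x y)).card + Aᶜ.card := by
        calc inDeg G y ≤ ((A.filter (fun x => G x y)) ∪ Aᶜ).card := card_le_card hsub
          _ ≤ _ := card_union_le _ _
      have hcast : (inDeg G y : ℝ) ≤ ((A.filter (fun x => G x y)).card : ℝ) + (Aᶜ.card : ℝ) := by
        exact_mod_cast hnat
      rw [hAc] at hcast
      have := (hdeg y).2
      linarith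
    have hegl : b * (α * N - (N - a)) ≤ (eg : ℝ) := by
      rw [hegswapR, hbdef]
      calc (↑(B.card) : ℝ) * (α * N - (N - a)) = ∑ _y ∈ B, (α * N - (N - a)) := by
            rw [Finset.sum_const, nsmul_eq_mul]
        _ ≤ _ := Finset.sum_le_sum (fun y _ => hfil y)
    -- Sp ≤ SB + Sm where SB = ∑_{y ∈ B} nm y
    set SB : ℝ := ∑ y ∈ B, (nm y : ℝ) with hSBdef
    have htot : Sp ≤ SB + Sm := by
      have h1 : Sp ≤ ∑ x, (np x : ℝ) := by
        rw [hSpdef]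
        exact Finset.sum_le_sum_of_subset_of_nonneg (subset_univ A) (fun _ _ _ => Nat.cast_nonneg _)
      have h2 : (∑ x, (np x : ℝ)) = ∑ x, (nm x : ℝ) := by exact_mod_cast hsum
      have h3 : (∑ x, (nm x : ℝ)) = SB + Sm := by
        rw [hSBdef, hSmdef, Finset.sum_add_sum_compl]
      linarith
    have hSB : SB ≤ b * ((1 + ε) * ξ * N) := by
      rw [hSBdef, hbdef]
      calc ∑ y ∈ B, (nm y : ℝ) ≤ ∑ _y ∈ B, (1 + ε) * ξ * N :=
            Finset.sum_le_sum (fun y _ => (hbound y).2.2.2)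
        _ = (↑(B.card) : ℝ) * ((1 + ε) * ξ * N) := by rw [Finset.sum_const, nsmul_eq_mul]
    have hmid : b * ((1 + ε) * ξ * N) ≤ (q : ℝ) * (b * (α * N - (N - a))) := by
      have hNa : N - a < τ * N := by linarith [hcase3]
      have hτN : τ * N ≤ α / 4 * N := mul_le_mul_of_nonneg_right hτα hN0.le
      have t1 : (1 + ε) * ξ * N ≤ ((q : ℝ) * α / 2) * N := mul_le_mul_of_nonneg_right hconst hN0.le
      have t2 : (q : ℝ) * (α / 2 * N) ≤ (q : ℝ) * (α * N - (N - a)) :=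
        mul_le_mul_of_nonneg_left (by linarith [hNa, hτN]) hq0'
      have h1 : (1 + ε) * ξ * N ≤ (q : ℝ) * (α * N - (N - a)) := by linarith [t1, t2]
      calc b * ((1 + ε) * ξ * N) ≤ b * ((q : ℝ) * (α * N - (N - a))) :=
            mul_le_mul_of_nonneg_left h1 hb0
        _ = (q : ℝ) * (b * (α * N - (N - a))) := by ring
    have hqb : (q : ℝ) * (b * (α * N - (N - a))) ≤ (q : ℝ) * eg :=
      mul_le_mul_of_nonneg_left hegl (by positivity)
    linarith
  push_neg at hcase3
  -- middle range: robust expansion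
  set RN : Finset (Fin n) := robustOutNbhd G ν A with hRNdef
  have hcardV : ((Fintype.card (Fin n)) : ℝ) = N := by simp [hNdef]
  have hexpA : a + ν * N ≤ (RN.card : ℝ) := by
    have h1 := hexp A (by rw [hcardV, ← hadef]; exact hcase2) (by rw [hcardV, ← hadef]; exact hcase3)
    rw [hcardV, ← hadef] at h1
    exact h1
  have hRNB : (RN.card : ℝ) - c ≤ ((RN ∩ B).card : ℝ) := by
    have hsub : RN ⊆ (RN ∩ B) ∪ Bᶜ := by
      intro y hy
      by_cases hyB : y ∈ B
      · exact mem_union_left _ (mem_inter.2 ⟨hy, hyB⟩)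
      · exact mem_union_right _ (mem_compl.2 hyB)
    have hnat : RN.card ≤ (RN ∩ B).card + Bᶜ.card := by
      calc RN.card ≤ ((RN ∩ B) ∪ Bᶜ).card := card_le_card hsub
        _ ≤ _ := card_union_le _ _
    have := (Nat.cast_le (α := ℝ)).2 hnat
    push_cast at this
    linarith
  have hfil : ∀ y ∈ RN ∩ B, ν * N ≤ ((A.filter (fun x => G x y)).card : ℝ) := by
    intro y hy
    have := mem_filter.1 (mem_inter.1 hy).1
    rw [hcardV] at this
    exact this.2
  have hegl : ((RN ∩ B).card : ℝ) * (ν * N) ≤ (eg : ℝ) := by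
    rw [hegswapR]
    calc ((RN ∩ B).card : ℝ) * (ν * N) = ∑ _y ∈ RN ∩ B, ν * N := by
          rw [Finset.sum_const, nsmul_eq_mul]
      _ ≤ ∑ y ∈ RN ∩ B, ((A.filter (fun x => G x y)).card : ℝ) :=
          Finset.sum_le_sum hfil
      _ ≤ ∑ y ∈ B, ((A.filter (fun x => G x y)).card : ℝ) :=
          Finset.sum_le_sum_of_subset_of_nonneg inter_subset_right
            (fun _ _ _ => Nat.cast_nonneg _)
  have hcma : c - a ≤ ν * N / 2 := by
    have hεc : ε * c ≤ ν / 5 * N := by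
      calc ε * c ≤ ε * N := mul_le_mul_of_nonneg_left hcN hε0.le
        _ ≤ ν / 5 * N := mul_le_mul_of_nonneg_right hε hN0.le
    have hεa : ε * a ≤ ν / 5 * N := by
      calc ε * a ≤ ε * N := mul_le_mul_of_nonneg_left haN hε0.le
        _ ≤ ν / 5 * N := mul_le_mul_of_nonneg_right hε hN0.le
    linarith [hεc, hεa, hcase1, mul_nonneg hν.le hN0.le]
  have hRNB2 : ν * N / 2 ≤ ((RN ∩ B).card : ℝ) := by linarith
  have hegbig : ν * N / 2 * (ν * N) ≤ (eg : ℝ) := by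
    have h0 : (0 : ℝ) ≤ ν * N := by positivity
    have h2 : ν * N / 2 * (ν * N) ≤ ((RN ∩ B).card : ℝ) * (ν * N) :=
      mul_le_mul_of_nonneg_right hRNB2 h0
    linarith [hegl]
  have hfinal : Sp ≤ (q : ℝ) * eg := by
    have hq3 : 3 * ξ ≤ (q : ℝ) * ν ^ 2 := by linarith
    have hSp2 : a * ((1 + ε) * ξ * N) ≤ N * ((1 + ε) * ξ * N) :=
      mul_le_mul_of_nonneg_right haN (by positivity)
    have h1 : Sp ≤ (1 + ε) * ξ * N * N := by linarith [hSp, hSp2]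
    have hεξ : ε * ξ ≤ 1 / 2 * ξ := mul_le_mul_of_nonneg_right (by linarith) hξ0.le
    have hεξN : ε * ξ * N ^ 2 ≤ 1 / 2 * ξ * N ^ 2 :=
      mul_le_mul_of_nonneg_right hεξ (sq_nonneg N)
    have h3ξN : 3 * ξ * (N ^ 2 / 2) ≤ ((q : ℝ) * ν ^ 2) * (N ^ 2 / 2) :=
      mul_le_mul_of_nonneg_right hq3 (by positivity)
    have h2 : (q : ℝ) * (ν * N / 2 * (ν * N)) ≤ (q : ℝ) * eg :=
      mul_le_mul_of_nonneg_left hegbig hq0'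
    linarith [h1, hεξN, h3ξN, h2]
  linarith

/-- Lemma: prescribed degree sequences in robust outexpanders.
With the hierarchy `0 < 1/n ≪ ε ≪ ν ≤ τ ≪ α < 1` and `1/n ≪ ξ ≤ qν²/3`: let `G` be a
digraph on `n` vertices with `δ⁰(G) ≥ αn` which is a robust `(ν,τ)`-outexpander, and let
`Q` be a multidigraph on the same vertex set (given by edge multiplicities) containing at
least `q` edges from `x` to `y` whenever `x → y ∈ E(G)`. If `n⁺ₓ, n⁻ₓ ∈ ℕ` satisfy
`(1−ε)ξn ≤ n⁺ₓ, n⁻ₓ ≤ (1+ε)ξn` and `Σ n⁺ₓ = Σ n⁻ₓ`, then `Q` has a spanning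
submultidigraph `Q'` with `d⁺_{Q'}(x) = n⁺ₓ` and `d⁻_{Q'}(x) = n⁻ₓ` for every `x`. -/

theorem stmt12 : ∀ α : ℝ, 0 < α → α < 1 →
    ∃ τ₀ : ℝ, 0 < τ₀ ∧ ∀ τ ν : ℝ, 0 < ν → ν ≤ τ → τ ≤ τ₀ →
    ∃ ε₀ : ℝ, 0 < ε₀ ∧ ∀ ε : ℝ, 0 < ε → ε ≤ ε₀ →
    ∃ (n₀ : ℕ) (Cξ : ℝ), 0 < Cξ ∧ ∀ n : ℕ, n₀ ≤ n →
    ∀ q : ℕ, 0 < q → ∀ ξ : ℝ, Cξ / (n : ℝ) ≤ ξ → ξ ≤ (q : ℝ) * ν ^ 2 / 3 →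
    ∀ G : Fin n → Fin n → Prop,
    (∀ x, α * (n : ℝ) ≤ (outDeg G x : ℝ) ∧ α * (n : ℝ) ≤ (inDeg G x : ℝ)) →
    IsRobustOutexpander G ν τ →
    ∀ Q : Fin n → Fin n → ℕ, (∀ x y, G x y → q ≤ Q x y) →
    ∀ np nm : Fin n → ℕ,
    (∀ x, (1 - ε) * ξ * (n : ℝ) ≤ (np x : ℝ) ∧ (np x : ℝ) ≤ (1 + ε) * ξ * (n : ℝ) ∧
          (1 - ε) * ξ * (n : ℝ) ≤ (nm x : ℝ) ∧ (nm x : ℝ) ≤ (1 + ε) * ξ * (n : ℝ)) →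
    (∑ x, np x) = (∑ x, nm x) →
    ∃ Q' : Fin n → Fin n → ℕ, (∀ x y, Q' x y ≤ Q x y) ∧
      (∀ x, (∑ y, Q' x y) = np x ∧ (∑ y, Q' y x) = nm x) := by
  intro α hα0 hα1
  refine ⟨min (α / 4) (1 / 2), by positivity, fun τ ν hν hντ hττ₀ => ?_⟩
  refine ⟨ν / 5, by positivity, fun ε hε0 hεε₀ => ?_⟩
  refine ⟨1, 1, one_pos, fun n hn q hq ξ hξlow hξhigh G hdeg hexp Q hQ np nm hbound hsum => ?_⟩
  have hτα : τ ≤ α / 4 := le_trans hττ₀ (min_le_left _ _)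
  have hτhalf : τ ≤ 1 / 2 := le_trans hττ₀ (min_le_right _ _)
  have hn0 : (0 : ℝ) < (n : ℝ) := by exact_mod_cast Nat.lt_of_lt_of_le Nat.zero_lt_one hn
  have hξ0 : 0 < ξ := lt_of_lt_of_le (by positivity) hξlow
  have hGH := GH_holds hn hq hα0 hν hντ hτα hτhalf hε0 hεε₀ hξ0 hξhigh G hdeg hexp Q hQ
    np nm hbound hsum
  obtain ⟨Q', h1, h2, h3⟩ := exists_flow hsum (flow_hall hGH)
  exact ⟨Q', h1, fun x => ⟨h2 x, h3 x⟩⟩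
end

section
/- Let 0 < 1/k ≪ ν ≪ τ ≪ α < 1. Suppose R is a robust (ν,τ)-outexpander on k vertices V₁,…,V_k with δ⁰(R) ≥ αk, and C = V₁…V_k is a Hamilton cycle in R. Then there exists a universal walk U for C with parameter ℓ' = 36/ν²: a closed walk in R containing, for each i, an elementary chord sequence from V_i to V_{i+1} of at most √ℓ'/2 edges, with all remaining edges of U lying on C, such that U enters and leaves every vertex V_i exactly ℓ' times. -/
open Finset
open scoped Classical

namespace UW

variable {V : Type*}

def IsWalk : V → List (V × V) → V → Prop
  | a, [], b => a = b
  | a, e :: l, b => e.1 = a ∧ IsWalk e.2 l b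

noncomputable def outC (M : Multiset (V × V)) (x : V) : ℕ :=
  (M.filter (fun e => e.1 = x)).card

noncomputable def inC (M : Multiset (V × V)) (x : V) : ℕ :=
  (M.filter (fun e => e.2 = x)).card

lemma outC_add (M N : Multiset (V × V)) (x : V) :
    outC (M + N) x = outC M x + outC N x := by
  simp [outC, Multiset.filter_add]

lemma inC_add (M N : Multiset (V × V)) (x : V) :
    inC (M + N) x = inC M x + inC N x := by
  simp [inC, Multiset.filter_add]

lemma outC_cons (e : V × V) (M : Multiset (V × V)) (x : V) :
    outC (e ::ₘ M) x = outC M x + (if e.1 = x then 1 else 0) := by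
  simp [outC, Multiset.filter_cons]
  split <;> simp [Nat.add_comm]

lemma inC_cons (e : V × V) (M : Multiset (V × V)) (x : V) :
    inC (e ::ₘ M) x = inC M x + (if e.2 = x then 1 else 0) := by
  simp [inC, Multiset.filter_cons]
  split <;> simp [Nat.add_comm]

lemma outC_le (M N : Multiset (V × V)) (h : M ≤ N) (x : V) : outC M x ≤ outC N x :=
  Multiset.card_le_card (Multiset.filter_le_filter _ h)

lemma inC_le (M N : Multiset (V × V)) (h : M ≤ N) (x : V) : inC M x ≤ inC N x :=
  Multiset.card_le_card (Multiset.filter_le_filter _ h)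

lemma isWalk_append {a b c : V} {l m : List (V × V)} (h1 : IsWalk a l b)
    (h2 : IsWalk b m c) : IsWalk a (l ++ m) c := by
  induction l generalizing a with
  | nil => simpa [IsWalk] using (h1 : a = b) ▸ h2
  | cons e l ih =>
    obtain ⟨h1a, h1b⟩ := h1
    exact ⟨h1a, ih h1b⟩

/-- Counting in/out degrees along a walk. -/
lemma isWalk_count {a b : V} {l : List (V × V)} (h : IsWalk a l b) (x : V) :
    outC (↑l) x + (if b = x then 1 else 0) = inC (↑l) x + (if a = x then 1 else 0) := by
  induction l generalizing a with
  | nil =>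
    have : a = b := h
    subst this
    simp [outC, inC]
  | cons e l ih =>
    obtain ⟨h1, h2⟩ := h
    have := ih h2
    have hcons : (↑(e :: l) : Multiset (V × V)) = e ::ₘ (↑l) := rfl
    rw [hcons, outC_cons, inC_cons]
    subst h1
    omega

lemma isWalk_closed_count {a : V} {l : List (V × V)} (h : IsWalk a l a) (x : V) :
    outC (↑l) x = inC (↑l) x := by
  have := isWalk_count h x
  omega

/-- Split a closed walk at a vertex occurring as the source of an edge. -/
lemma isWalk_split {a b : V} {l : List (V × V)} (h : IsWalk a l b) {e : V × V}
    (he : e ∈ l) : ∃ p q : List (V × V), l = p ++ q ∧ IsWalk a p e.1 ∧ IsWalk e.1 q b := by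
  induction l generalizing a with
  | nil => simp at he
  | cons f l ih =>
    obtain ⟨h1, h2⟩ := h
    rcases List.mem_cons.1 he with rfl | he'
    · exact ⟨[], e :: l, rfl, h1.symm, ⟨rfl, h2⟩⟩
    · obtain ⟨p, q, hl, hp, hq⟩ := ih h2 he'
      exact ⟨f :: p, q, by simp [hl], ⟨h1, hp⟩, hq⟩

/-- Splice a closed walk into another closed walk at a shared vertex. -/
lemma isWalk_splice {a : V} {l m : List (V × V)} {b : V} (hl : IsWalk a l a)
    (hm : IsWalk b m b) {e : V × V} (he : e ∈ l) (heb : e.1 = b) :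
    ∃ l' : List (V × V), IsWalk a l' a ∧ (↑l' : Multiset (V × V)) = ↑l + ↑m := by
  obtain ⟨p, q, hlpq, hp, hq⟩ := isWalk_split hl he
  subst heb
  refine ⟨p ++ m ++ q, isWalk_append (isWalk_append hp hm) hq, ?_⟩
  subst hlpq
  simp
  exact List.Perm.append_left p (List.perm_append_comm)

end UW

namespace UW

variable {V : Type*}

lemma cons_le_of_mem_sub {M L : Multiset (V × V)} (hL : L ≤ M) {e : V × V}
    (he : e ∈ M - L) : e ::ₘ L ≤ M := by
  rw [Multiset.le_iff_count] at *
  intro x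
  rcases eq_or_ne x e with rfl | hx
  · have h1 := Multiset.count_pos.2 he
    rw [Multiset.count_sub] at h1
    have h2 := hL x
    simp only [Multiset.count_cons_self]
    omega
  · rw [Multiset.count_cons_of_ne hx]
    exact hL x

lemma mem_le_sum {X : Type*} : ∀ (L : List (Multiset X)) (m : Multiset X), m ∈ L → m ≤ L.sum := by
  intro L
  induction L with
  | nil => intro m hm; simp at hm
  | cons h t ih =>
    intro m hm
    rcases List.mem_cons.1 hm with rfl | hm'
    · simp only [List.sum_cons]; exact le_add_right le_rfl
    · calc m ≤ t.sum := ih m hm'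
        _ ≤ (h :: t).sum := by simp only [List.sum_cons]; exact le_add_left le_rfl

lemma trail_aux (M : Multiset (V × V)) (bal : ∀ x, inC M x = outC M x) :
    ∀ (n : ℕ) (c a : V) (l : List (V × V)), IsWalk a l c → (↑l : Multiset (V × V)) ≤ M →
    l ≠ [] → Multiset.card M ≤ l.length + n →
    ∃ (a' : V) (l' : List (V × V)), l' ≠ [] ∧ IsWalk a' l' a' ∧ (↑l' : Multiset (V × V)) ≤ M := by
  intro n
  induction n with
  | zero =>
    intro c a l hw hle hne hcard
    have hful : (↑l : Multiset (V × V)) = M := by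
      apply Multiset.eq_of_le_of_card_le hle
      simpa using hcard
    by_cases hca : c = a
    · exact ⟨a, l, hne, hca ▸ hw, hle⟩
    · exfalso
      have h1 := isWalk_count hw c
      rw [if_pos rfl, if_neg (by exact fun h => hca (by simpa using h.symm))] at h1
      have h2 := bal c
      rw [← hful] at h2
      omega
  | succ n ih =>
    intro c a l hw hle hne hcard
    by_cases hca : c = a
    · exact ⟨a, l, hne, hca ▸ hw, hle⟩
    · have h1 := isWalk_count hw c
      rw [if_pos rfl, if_neg (by exact fun h => hca (by simpa using h.symm))] at h1
      have h2 : inC (↑l) c ≤ inC M c := inC_le _ _ hle c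
      have hsplit : M - ↑l + ↑l = M := tsub_add_cancel_of_le hle
      have h4 : 0 < outC (M - (↑l : Multiset (V × V))) c := by
        have h5 := outC_add (M - (↑l : Multiset (V × V))) (↑l : Multiset (V × V)) c
        rw [hsplit] at h5
        have h6 := bal c
        omega
      have h7 : ∃ e ∈ M - (↑l : Multiset (V × V)), e.1 = c := by
        unfold outC at h4
        obtain ⟨e, he⟩ := Multiset.card_pos_iff_exists_mem.1 h4
        exact ⟨e, (Multiset.mem_filter.1 he).1, (Multiset.mem_filter.1 he).2⟩
      obtain ⟨e, heM, hec⟩ := h7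
      have hwalk : IsWalk a (l ++ [e]) e.2 := isWalk_append hw ⟨hec, rfl⟩
      have hle' : (↑(l ++ [e]) : Multiset (V × V)) ≤ M := by
        have : (↑(l ++ [e]) : Multiset (V × V)) = e ::ₘ ↑l := by
          simp [Multiset.singleton_add, add_comm]
        rw [this]
        exact cons_le_of_mem_sub hle heM
      apply ih e.2 a (l ++ [e]) hwalk hle' (by simp)
      simp only [List.length_append, List.length_singleton]
      omega

lemma exists_closed_trail (M : Multiset (V × V)) (bal : ∀ x, inC M x = outC M x)
    (hM : M ≠ 0) :
    ∃ (a : V) (l : List (V × V)), l ≠ [] ∧ IsWalk a l a ∧ (↑l : Multiset (V × V)) ≤ M := by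
  obtain ⟨e, he⟩ := Multiset.exists_mem_of_ne_zero hM
  apply trail_aux M bal (Multiset.card M) e.2 e.1 [e] ⟨rfl, rfl⟩ ?_ (by simp) (by simp)
  simpa using he

lemma closed_walk_decomp :
    ∀ (n : ℕ) (M : Multiset (V × V)), Multiset.card M ≤ n → (∀ x, inC M x = outC M x) →
    ∃ ws : List (V × List (V × V)), (∀ w ∈ ws, w.2 ≠ [] ∧ IsWalk w.1 w.2 w.1) ∧
      (ws.map (fun w => (↑w.2 : Multiset (V × V)))).sum = M := by
  intro n
  induction n with
  | zero =>
    intro M hc _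
    have : M = 0 := by
      rw [← Multiset.card_eq_zero]; omega
    exact ⟨[], by simp, by simp [this]⟩
  | succ n ih =>
    intro M hc bal
    by_cases hM : M = 0
    · exact ⟨[], by simp, by simp [hM]⟩
    · obtain ⟨a, l, hne, hw, hle⟩ := exists_closed_trail M bal hM
      have hsplit : M - ↑l + ↑l = M := tsub_add_cancel_of_le hle
      have bal' : ∀ x, inC (M - (↑l : Multiset (V × V))) x = outC (M - (↑l : Multiset (V × V))) x := by
        intro x
        have h1 := outC_add (M - (↑l : Multiset (V × V))) (↑l : Multiset (V × V)) x
        have h2 := inC_add (M - (↑l : Multiset (V × V))) (↑l : Multiset (V × V)) x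
        rw [hsplit] at h1 h2
        have h3 := isWalk_closed_count hw x
        have h4 := bal x
        omega
      have hlen : 0 < l.length := List.length_pos_iff.2 hne
      have hcard' : Multiset.card (M - (↑l : Multiset (V × V))) ≤ n := by
        have := congrArg Multiset.card hsplit
        rw [Multiset.card_add] at this
        simp only [Multiset.coe_card] at this
        omega
      obtain ⟨ws, h1, h2⟩ := ih (M - (↑l : Multiset (V × V))) hcard' bal'
      refine ⟨(a, l) :: ws, ?_, ?_⟩
      · intro w hw'
        rcases List.mem_cons.1 hw' with rfl | hw''
        · exact ⟨hne, hw⟩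
        · exact h1 w hw''
      · simp only [List.map_cons, List.sum_cons, h2]
        rw [add_comm]
        exact hsplit

lemma splice_all :
    ∀ (ws : List (V × List (V × V))) (l : List (V × V)) (a : V), IsWalk a l a →
    (∀ w ∈ ws, w.2 ≠ [] ∧ IsWalk w.1 w.2 w.1) →
    (∀ w ∈ ws, ∃ e ∈ l, e.1 = w.1) →
    ∃ l' : List (V × V), IsWalk a l' a ∧
      (↑l' : Multiset (V × V)) = ↑l + (ws.map (fun w => (↑w.2 : Multiset (V × V)))).sum := by
  intro ws
  induction ws with
  | nil => intro l a hl _ _; exact ⟨l, hl, by simp⟩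
  | cons w ws ih =>
    intro l a hl hws hcov
    obtain ⟨e, hel, he1⟩ := hcov w List.mem_cons_self
    obtain ⟨hwne, hww⟩ := hws w List.mem_cons_self
    obtain ⟨l₁, hw₁, hm₁⟩ := isWalk_splice hl hww hel he1
    obtain ⟨l', hl', hm'⟩ := ih l₁ a hw₁ (fun w' hw' => hws w' (List.mem_cons_of_mem _ hw'))
      (by
        intro w' hw'
        obtain ⟨e', he'l, he'1⟩ := hcov w' (List.mem_cons_of_mem _ hw')
        refine ⟨e', ?_, he'1⟩
        have : e' ∈ (↑l₁ : Multiset (V × V)) := by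
          rw [hm₁]
          exact Multiset.mem_add.2 (Or.inl (by simpa using he'l))
        simpa using this)
    refine ⟨l', hl', ?_⟩
    rw [hm', hm₁]
    simp only [List.map_cons, List.sum_cons]
    rw [add_assoc]

theorem euler_circuit (M : Multiset (V × V)) (a : V) (base : List (V × V)) (hne : base ≠ [])
    (hbw : IsWalk a base a) (hsub : (↑base : Multiset (V × V)) ≤ M)
    (bal : ∀ x, inC M x = outC M x)
    (hcov : ∀ e ∈ M, ∃ f ∈ base, f.1 = e.1) :
    ∃ l : List (V × V), l ≠ [] ∧ IsWalk a l a ∧ (↑l : Multiset (V × V)) = M := by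
  have hsplit : M - ↑base + ↑base = M := tsub_add_cancel_of_le hsub
  have bal' : ∀ x, inC (M - (↑base : Multiset (V × V))) x = outC (M - (↑base : Multiset (V × V))) x := by
    intro x
    have h1 := outC_add (M - (↑base : Multiset (V × V))) (↑base : Multiset (V × V)) x
    have h2 := inC_add (M - (↑base : Multiset (V × V))) (↑base : Multiset (V × V)) x
    rw [hsplit] at h1 h2
    have h3 := isWalk_closed_count hbw x
    have h4 := bal x
    omega
  obtain ⟨ws, h1, h2⟩ := closed_walk_decomp (Multiset.card (M - (↑base : Multiset (V × V))))
    (M - (↑base : Multiset (V × V))) le_rfl bal'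
  have hcov' : ∀ w ∈ ws, ∃ e ∈ base, e.1 = w.1 := by
    intro w hw
    obtain ⟨hwne, hww⟩ := h1 w hw
    obtain ⟨f, l₀, hw2⟩ := List.exists_cons_of_ne_nil hwne
    have hf1 : f.1 = w.1 := by
      have := hww
      rw [hw2] at this
      exact this.1
    have hfM : f ∈ M := by
      have h5 : (↑w.2 : Multiset (V × V)) ≤ M - (↑base : Multiset (V × V)) :=
        h2 ▸ mem_le_sum _ _ (List.mem_map.2 ⟨w, hw, rfl⟩)
      have h6 : f ∈ (↑w.2 : Multiset (V × V)) := by rw [hw2]; simp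
      exact Multiset.mem_of_le (h5.trans (Multiset.sub_le_self _ _)) h6
    obtain ⟨g, hg, hg1⟩ := hcov f hfM
    exact ⟨g, hg, hg1.trans hf1⟩
  obtain ⟨l', hl', hm'⟩ := splice_all ws base a hbw h1 hcov'
  have hlbase : (↑base : Multiset (V × V)) ≤ ↑l' := by
    rw [hm']
    exact le_add_right le_rfl
  refine ⟨l', ?_, hl', ?_⟩
  · intro h
    obtain ⟨f, l₀, rfl⟩ := List.exists_cons_of_ne_nil hne
    have : f ∈ (↑l' : Multiset (V × V)) := Multiset.mem_of_le hlbase (by simp)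
    rw [h] at this
    simp at this
  · rw [hm', h2, add_comm]
    exact hsplit

end UW

namespace UW

set_option maxHeartbeats 1000000 in
lemma chord_seq_exists {k : ℕ} (R : Fin k → Fin k → Prop) (σ : Equiv.Perm (Fin k))
    (ν τ α : ℝ)
    (hν : 0 < ν) (hτ : 0 < τ) (hτα : τ ≤ α / 2) (hτhalf : τ ≤ 1 / 2) (hτltα : τ < α)
    (hνα : ν ≤ α) (hk1 : 1 ≤ k) (hνk : 1 ≤ ν * k)
    (hexp : IsRobustOutexpander R ν τ)
    (hdeg : ∀ x, α * (k : ℝ) ≤ (outDeg R x : ℝ) ∧ α * (k : ℝ) ≤ (inDeg R x : ℝ))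
    (hC : ∀ x, R x (σ x))
    (B : Finset (Fin k)) (hB : (B.card : ℝ) ≤ ν * k / 4) (v : Fin k) :
    ∃ f : ℕ → Fin k, f 0 = v ∧ f (⌈(2:ℝ)/ν⌉₊ + 2) = σ v ∧
      (∀ i < ⌈(2:ℝ)/ν⌉₊ + 2, R (σ.symm (f i)) (f (i + 1))) ∧
      (∀ j, 1 ≤ j → j < ⌈(2:ℝ)/ν⌉₊ + 2 → f j ∉ B) := by
  have hk0 : (0:ℝ) < k := by exact_mod_cast Nat.lt_of_lt_of_le Nat.zero_lt_one hk1
  set q : ℕ := ⌈(2:ℝ)/ν⌉₊ + 2 with hqdef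
  -- the reachable sets
  set A : ℕ → Finset (Fin k) := fun i => Nat.rec ((univ.filter (fun y => R (σ.symm v) y)) \ B)
    (fun _ Ai => Ai ∪ ((robustOutNbhd R ν (Finset.image σ.symm Ai)) \ B)) i with hA
  have hA0 : A 0 = (univ.filter (fun y => R (σ.symm v) y)) \ B := rfl
  have hAs : ∀ i, A (i+1) = A i ∪ ((robustOutNbhd R ν (Finset.image σ.symm (A i))) \ B) :=
    fun i => rfl
  have hAmono : ∀ i, A i ⊆ A (i+1) := fun i => by
    rw [hAs]; exact subset_union_left
  -- A i avoids B
  have disjB : ∀ i, ∀ y ∈ A i, y ∉ B := by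
    intro i
    induction i with
    | zero => intro y hy; exact (Finset.mem_sdiff.1 hy).2
    | succ i ih =>
      intro y hy
      rw [hAs] at hy
      rcases Finset.mem_union.1 hy with h | h
      · exact ih y h
      · exact (Finset.mem_sdiff.1 h).2
  -- reachability
  have reach : ∀ i, ∀ y ∈ A i, ∃ f : ℕ → Fin k, f 0 = v ∧ f (i+1) = y ∧
      (∀ j < i + 1, R (σ.symm (f j)) (f (j+1))) ∧
      (∀ j, 1 ≤ j → j ≤ i + 1 → f j ∉ B) ∧ (∀ j, i + 1 ≤ j → f j = y) := by
    intro i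
    induction i with
    | zero =>
      intro y hy
      obtain ⟨hy1, hy2⟩ := Finset.mem_sdiff.1 hy
      have hR : R (σ.symm v) y := (Finset.mem_filter.1 hy1).2
      refine ⟨fun j => if j = 0 then v else y, by simp, by simp, ?_, ?_, ?_⟩
      · intro j hj
        interval_cases j
        simpa using hR
      · intro j hj1 hj2
        have : j ≠ 0 := by omega
        simpa [this] using hy2
      · intro j hj
        have : j ≠ 0 := by omega
        simp [this]
    | succ i ih =>
      intro y hy
      rw [hAs] at hy
      rcases Finset.mem_union.1 hy with h | h
      · -- y was already reachable: pad with a "stay" step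
        obtain ⟨f, hf0, hf1, hf2, hf3, hf4⟩ := ih y h
        refine ⟨f, hf0, hf4 _ (by omega), ?_, ?_, fun j hj => hf4 j (by omega)⟩
        · intro j hj
          rcases Nat.lt_or_ge j (i+1) with hj' | hj'
          · exact hf2 j hj'
          · have hje : j = i + 1 := by omega
            subst hje
            rw [hf1, hf4 _ (by omega)]
            have := hC (σ.symm y)
            simpa using this
        · intro j hj1 hj2
          rcases Nat.lt_or_ge j (i+2) with hj' | hj'
          · exact hf3 j hj1 (by omega)
          · rw [hf4 j (by omega)]
            exact disjB i y h
      · -- expansion step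
        obtain ⟨hy1, hy2⟩ := Finset.mem_sdiff.1 h
        have hy3 := (Finset.mem_filter.1 hy1).2
        have hpos : 0 < (((Finset.image σ.symm (A i)).filter (fun z => R z y)).card : ℝ) := by
          have : (1:ℝ) ≤ ν * (Fintype.card (Fin k) : ℝ) := by
            rw [Fintype.card_fin]; exact hνk
          linarith
        have hpos' : 0 < ((Finset.image σ.symm (A i)).filter (fun z => R z y)).card := by
          exact_mod_cast hpos
        obtain ⟨z, hz⟩ := Finset.card_pos.1 hpos'
        obtain ⟨hz1, hz2⟩ := Finset.mem_filter.1 hz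
        obtain ⟨u, hu, huz⟩ := Finset.mem_image.1 hz1
        obtain ⟨f, hf0, hf1, hf2, hf3, hf4⟩ := ih u hu
        refine ⟨fun j => if j ≤ i + 1 then f j else y, by simp [hf0], by simp, ?_, ?_, ?_⟩
        · intro j hj
          rcases Nat.lt_or_ge j (i+1) with hj' | hj'
          · have e1 : j ≤ i + 1 := by omega
            have e2 : j + 1 ≤ i + 1 := by omega
            simpa [e1, e2] using hf2 j hj'
          · have hje : j = i + 1 := by omega
            subst hje
            have e1 : i + 1 ≤ i + 1 := le_rfl
            have e2 : ¬ (i + 2 ≤ i + 1) := by omega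
            simp only [e1, if_pos, if_neg e2]
            rw [hf1, huz]
            exact hz2
        · intro j hj1 hj2
          by_cases hj' : j ≤ i + 1
          · simpa [hj'] using hf3 j hj1 hj'
          · simpa [hj'] using hy2
        · intro j hj
          have : ¬ (j ≤ i + 1) := by omega
          simp [this]
  -- size lower bound for A 0
  have cardsdiff : ∀ (X : Finset (Fin k)), (X.card : ℝ) - B.card ≤ ((X \ B).card : ℝ) := by
    intro X
    have := Finset.card_le_card_sdiff_add_card (s := X) (t := B)
    have h' : (X.card : ℝ) ≤ ((X \ B).card : ℝ) + B.card := by exact_mod_cast this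
    linarith
  have cardA0 : α * k / 2 ≤ ((A 0).card : ℝ) := by
    have h2 := (hdeg (σ.symm v)).1
    have h3 : (outDeg R (σ.symm v) : ℝ) = ((univ.filter (fun y => R (σ.symm v) y)).card : ℝ) := rfl
    have h4 := cardsdiff (univ.filter (fun y => R (σ.symm v) y))
    rw [hA0]
    have hνα' : ν * k / 4 ≤ α * k / 2 := by nlinarith
    linarith
  -- growth
  have grow : ∀ i : ℕ, min (α * k / 2 + (i:ℝ) * (3 * ν / 4 * k)) ((1 - τ) * k) ≤ ((A i).card : ℝ) := by
    intro i
    induction i with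
    | zero =>
      simpa using (min_le_left _ _).trans (by simpa using cardA0)
    | succ i ih =>
      by_cases hcase : (1 - τ) * k ≤ ((A i).card : ℝ)
      · have hsub : ((A i).card : ℝ) ≤ ((A (i+1)).card : ℝ) := by
          exact_mod_cast Finset.card_le_card (hAmono i)
        exact (min_le_right _ _).trans (by linarith)
      · have hlow : τ * k ≤ ((A i).card : ℝ) := by
          have h1 : τ * k ≤ min (α * k / 2 + i * (3 * ν / 4 * k)) ((1 - τ) * k) := by
            apply le_min
            · nlinarith [Nat.cast_nonneg (α := ℝ) i]
            · nlinarith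
          linarith
        have hS : (Finset.image σ.symm (A i)).card = (A i).card :=
          Finset.card_image_of_injective _ (Equiv.injective _)
        have hexp' := hexp (Finset.image σ.symm (A i)) ?_ ?_
        · have h5 : ((A i).card : ℝ) + ν * k - ν * k / 4 ≤ ((A (i+1)).card : ℝ) := by
            have h6 := cardsdiff (robustOutNbhd R ν (Finset.image σ.symm (A i)))
            have h7 : ((robustOutNbhd R ν (Finset.image σ.symm (A i)) \ B).card : ℝ)
                ≤ ((A (i+1)).card : ℝ) := by
              have : (robustOutNbhd R ν (Finset.image σ.symm (A i)) \ B) ⊆ A (i+1) := by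
                rw [hAs]; exact subset_union_right
              exact_mod_cast Finset.card_le_card this
            rw [hS, Fintype.card_fin] at hexp'
            linarith
          rcases min_cases (α * k / 2 + i * (3 * ν / 4 * k)) ((1 - τ) * k) with ⟨hm, _⟩ | ⟨hm, _⟩
          · rw [hm] at ih
            have : α * k / 2 + (i + 1 : ℕ) * (3 * ν / 4 * k)
                ≤ ((A (i+1)).card : ℝ) := by
              push_cast
              nlinarith
            exact (min_le_left _ _).trans this
          · rw [hm] at ih
            refine (min_le_right _ _).trans ?_
            nlinarith
        · rw [hS, Fintype.card_fin]; exact hlow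
        · rw [hS, Fintype.card_fin]; linarith
  -- at time istar the set is large
  set istar : ℕ := ⌈(2:ℝ)/ν⌉₊ with histar
  have hbig : (1 - τ) * k ≤ ((A istar).card : ℝ) := by
    refine le_trans (le_min ?_ le_rfl) (grow istar)
    have h1 : (2:ℝ)/ν ≤ (istar : ℝ) := Nat.le_ceil _
    have h2 : (2:ℝ)/ν * (3 * ν / 4 * k) = 3 / 2 * k := by
      rw [div_mul_eq_mul_div, div_eq_iff (ne_of_gt hν)]; ring
    nlinarith
  -- intersect with the in-neighbourhood of σ v
  set N : Finset (Fin k) := univ.filter (fun u => R u (σ v)) with hN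
  have hNcard : α * k ≤ (N.card : ℝ) := (hdeg (σ v)).2
  have hTcard : α * k ≤ ((N.image σ).card : ℝ) := by
    rw [Finset.card_image_of_injective _ (Equiv.injective _)]
    exact hNcard
  have hinter : 0 < ((A istar ∩ N.image σ).card : ℝ) := by
    have h1 := Finset.card_union_add_card_inter (A istar) (N.image σ)
    have h2 : ((A istar ∪ N.image σ).card : ℕ) ≤ k := by
      have := Finset.card_le_univ (A istar ∪ N.image σ)
      rwa [Fintype.card_fin] at this
    have h3 : ((A istar ∪ N.image σ).card : ℝ) + ((A istar ∩ N.image σ).card : ℝ)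
        = ((A istar).card : ℝ) + ((N.image σ).card : ℝ) := by exact_mod_cast h1
    have h4 : ((A istar ∪ N.image σ).card : ℝ) ≤ k := by exact_mod_cast h2
    nlinarith
  have hinter' : 0 < (A istar ∩ N.image σ).card := by exact_mod_cast hinter
  obtain ⟨y, hy⟩ := Finset.card_pos.1 hinter'
  have hyA : y ∈ A istar := (Finset.mem_inter.1 hy).1
  have hyT : y ∈ N.image σ := (Finset.mem_inter.1 hy).2
  obtain ⟨u, hu, huy⟩ := Finset.mem_image.1 hyT
  have huR : R u (σ v) := (Finset.mem_filter.1 hu).2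
  have hsymm : σ.symm y = u := by rw [← huy]; simp
  -- build the final sequence
  obtain ⟨f, hf0, hf1, hf2, hf3, hf4⟩ := reach istar y hyA
  refine ⟨fun j => if j = q then σ v else f j, ?_, by simp, ?_, ?_⟩
  · have : (0:ℕ) ≠ q := by omega
    simp [this, hf0]
  · intro i hi
    rcases Nat.lt_or_ge i (istar + 1) with hi' | hi'
    · have e1 : i ≠ q := by omega
      have e2 : i + 1 ≠ q := by omega
      simpa [e1, e2] using hf2 i hi'
    · have hie : i = istar + 1 := by omega
      subst hie
      have e1 : istar + 1 ≠ q := by omega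
      have e2 : istar + 1 + 1 = q := by omega
      have hgoal : R ((Equiv.symm σ) (f (istar + 1))) (σ v) := by
        rw [hf1, hsymm]; exact huR
      simpa [e1, e2] using hgoal
  · intro j hj1 hj2
    have e1 : j ≠ q := by omega
    simp only [e1, if_neg]
    exact hf3 j hj1 (by omega)

end UW





namespace UW

variable {k : ℕ}

noncomputable def cnt (q : ℕ) (f : ℕ → Fin k) (x : Fin k) : ℕ :=
  ((Finset.Ico 1 q).filter (fun j => f j = x)).card

noncomputable def pick (hk : 0 < k) (q T : ℕ) (R : Fin k → Fin k → Prop)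
    (σ : Equiv.Perm (Fin k)) (prev : List (ℕ → Fin k)) (n : ℕ) : ℕ → Fin k :=
  if h : ∃ f : ℕ → Fin k, f 0 = ⟨n % k, Nat.mod_lt n hk⟩ ∧
      f q = σ ⟨n % k, Nat.mod_lt n hk⟩ ∧ (∀ i < q, R (σ.symm (f i)) (f (i+1))) ∧
      (∀ j, 1 ≤ j → j < q →
        f j ∉ Finset.univ.filter (fun x => T ≤ (prev.map (fun g => cnt q g x)).sum))
  then h.choose else (fun _ => ⟨n % k, Nat.mod_lt n hk⟩)

noncomputable def greedyL (hk : 0 < k) (q T : ℕ) (R : Fin k → Fin k → Prop)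
    (σ : Equiv.Perm (Fin k)) : ℕ → List (ℕ → Fin k)
  | 0 => []
  | n+1 => greedyL hk q T R σ n ++ [pick hk q T R σ (greedyL hk q T R σ n) n]

noncomputable def gF (hk : 0 < k) (q T : ℕ) (R : Fin k → Fin k → Prop)
    (σ : Equiv.Perm (Fin k)) (n : ℕ) : ℕ → Fin k :=
  pick hk q T R σ (greedyL hk q T R σ n) n

noncomputable def uN (hk : 0 < k) (q T : ℕ) (R : Fin k → Fin k → Prop)
    (σ : Equiv.Perm (Fin k)) (n : ℕ) (x : Fin k) : ℕ :=
  ∑ m ∈ Finset.range n, cnt q (gF hk q T R σ m) x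

lemma list_sum_map_range {X : Type*} [AddCommMonoid X] (g : ℕ → X) :
    ∀ n : ℕ, ((List.range n).map g).sum = ∑ m ∈ Finset.range n, g m := by
  intro n
  induction n with
  | zero => simp
  | succ n ih => rw [List.range_succ, Finset.sum_range_succ, List.map_append]; simp [ih]

lemma greedyL_eq (hk : 0 < k) (q T : ℕ) (R : Fin k → Fin k → Prop)
    (σ : Equiv.Perm (Fin k)) : ∀ n, greedyL hk q T R σ n = (List.range n).map (gF hk q T R σ) := by
  intro n
  induction n with
  | zero => rfl
  | succ n ih => rw [greedyL, List.range_succ, List.map_append, ← ih]; rfl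

lemma cnt_total (q : ℕ) (f : ℕ → Fin k) : ∑ x : Fin k, cnt q f x = q - 1 := by
  rw [← Nat.card_Ico 1 q]
  exact (Finset.card_eq_sum_card_fiberwise (fun j _ => Finset.mem_univ (f j))).symm

lemma uN_total (hk : 0 < k) (q T : ℕ) (R : Fin k → Fin k → Prop)
    (σ : Equiv.Perm (Fin k)) (n : ℕ) :
    ∑ x : Fin k, uN hk q T R σ n x = n * (q - 1) := by
  unfold uN
  rw [Finset.sum_comm]
  simp [cnt_total, mul_comm]

/-- The ban set at stage `n` used by `pick` is exactly the `uN`-based one. -/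
lemma pick_ban (hk : 0 < k) (q T : ℕ) (R : Fin k → Fin k → Prop)
    (σ : Equiv.Perm (Fin k)) (n : ℕ) :
    (Finset.univ.filter
      (fun x => T ≤ ((greedyL hk q T R σ n).map (fun f => cnt q f x)).sum))
      = Finset.univ.filter (fun x => T ≤ uN hk q T R σ n x) := by
  congr 1
  funext x
  rw [greedyL_eq, List.map_map, list_sum_map_range]
  rfl

end UW

namespace UW

variable {k : ℕ}

lemma ban_card (hk : 0 < k) (q T : ℕ) (R : Fin k → Fin k → Prop)
    (σ : Equiv.Perm (Fin k)) (ν : ℝ) (hν : 0 < ν)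
    (hT : 4 * (q : ℝ) / ν ≤ (T : ℝ)) (hq0 : 0 < q) (n : ℕ) (hn : n ≤ k) :
    (((Finset.univ.filter (fun x => T ≤ uN hk q T R σ n x)) : Finset (Fin k)).card : ℝ)
      ≤ ν * k / 4 := by
  set B := (Finset.univ.filter (fun x => T ≤ uN hk q T R σ n x)) with hB
  have h1 : B.card * T ≤ ∑ x ∈ B, uN hk q T R σ n x := by
    have := Finset.card_nsmul_le_sum B (uN hk q T R σ n) T
      (fun x hx => (Finset.mem_filter.1 hx).2)
    simpa [smul_eq_mul] using this
  have h2 : ∑ x ∈ B, uN hk q T R σ n x ≤ ∑ x : Fin k, uN hk q T R σ n x :=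
    Finset.sum_le_sum_of_subset (Finset.subset_univ B)
  have h3 : ∑ x : Fin k, uN hk q T R σ n x = n * (q - 1) := uN_total hk q T R σ n
  have h4 : (B.card : ℝ) * T ≤ (k : ℝ) * q := by
    have : B.card * T ≤ k * q := by
      calc B.card * T ≤ n * (q - 1) := by omega
        _ ≤ k * q := Nat.mul_le_mul hn (by omega)
    exact_mod_cast this
  have hT0 : (0:ℝ) < T := by
    have : (0:ℝ) < 4 * q / ν := by positivity
    linarith
  have hq0' : (0:ℝ) < q := by exact_mod_cast hq0
  have h5 : (B.card : ℝ) * (4 * q / ν) ≤ (B.card : ℝ) * T :=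
    mul_le_mul_of_nonneg_left hT (Nat.cast_nonneg _)
  have h6 : (B.card : ℝ) * (4 * q) ≤ (k : ℝ) * q * ν := by
    have h7 : (B.card : ℝ) * (4 * q) / ν ≤ (k : ℝ) * q := by
      calc (B.card : ℝ) * (4 * q) / ν = (B.card : ℝ) * (4 * q / ν) := by ring
        _ ≤ (B.card : ℝ) * T := h5
        _ ≤ (k : ℝ) * q := h4
    calc (B.card : ℝ) * (4 * q) = (B.card : ℝ) * (4 * q) / ν * ν := by field_simp
      _ ≤ (k : ℝ) * q * ν := mul_le_mul_of_nonneg_right h7 (le_of_lt hν)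
  nlinarith [Nat.cast_nonneg (α := ℝ) B.card]

lemma gF_good (hk : 0 < k) (q T : ℕ) (R : Fin k → Fin k → Prop) (σ : Equiv.Perm (Fin k))
    (ν τ α : ℝ)
    (hν : 0 < ν) (hτ : 0 < τ) (hτα : τ ≤ α / 2) (hτhalf : τ ≤ 1 / 2) (hτltα : τ < α)
    (hνα : ν ≤ α) (hνk : 1 ≤ ν * k)
    (hexp : IsRobustOutexpander R ν τ)
    (hdeg : ∀ x, α * (k : ℝ) ≤ (outDeg R x : ℝ) ∧ α * (k : ℝ) ≤ (inDeg R x : ℝ))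
    (hC : ∀ x, R x (σ x))
    (hq : q = ⌈(2:ℝ)/ν⌉₊ + 2) (hT : 4 * (q : ℝ) / ν ≤ (T : ℝ))
    (n : ℕ) (hn : n ≤ k) :
    gF hk q T R σ n 0 = ⟨n % k, Nat.mod_lt n hk⟩ ∧
    gF hk q T R σ n q = σ ⟨n % k, Nat.mod_lt n hk⟩ ∧
    (∀ i < q, R (σ.symm (gF hk q T R σ n i)) (gF hk q T R σ n (i+1))) ∧
    (∀ j, 1 ≤ j → j < q → ¬ (T ≤ uN hk q T R σ n (gF hk q T R σ n j))) := by
  have hBcard := ban_card hk q T R σ ν hν hT (by omega) n hn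
  have hex := chord_seq_exists R σ ν τ α hν hτ hτα hτhalf hτltα hνα hk hνk hexp hdeg hC
    (Finset.univ.filter (fun x => T ≤ uN hk q T R σ n x)) hBcard ⟨n % k, Nat.mod_lt n hk⟩
  rw [← hq] at hex
  have hban := pick_ban hk q T R σ n
  have hcond : ∃ f : ℕ → Fin k, f 0 = ⟨n % k, Nat.mod_lt n hk⟩ ∧
      f q = σ ⟨n % k, Nat.mod_lt n hk⟩ ∧ (∀ i < q, R (σ.symm (f i)) (f (i+1))) ∧
      (∀ j, 1 ≤ j → j < q →
        f j ∉ Finset.univ.filter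
          (fun x => T ≤ ((greedyL hk q T R σ n).map (fun g => cnt q g x)).sum)) := by
    obtain ⟨f, h1, h2, h3, h4⟩ := hex
    refine ⟨f, h1, h2, h3, fun j hj1 hj2 => ?_⟩
    rw [hban]
    intro hmem
    exact (h4 j hj1 hj2) hmem
  have hgF : gF hk q T R σ n = hcond.choose := by
    rw [gF, pick, dif_pos hcond]
  obtain ⟨h1, h2, h3, h4⟩ := hcond.choose_spec
  refine ⟨hgF ▸ h1, hgF ▸ h2, ?_, ?_⟩
  · intro i hi
    rw [hgF]
    exact h3 i hi
  · intro j hj1 hj2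
    rw [hgF]
    intro hmem
    apply h4 j hj1 hj2
    exact (Finset.ext_iff.1 hban _).2 (Finset.mem_filter.2 ⟨Finset.mem_univ _, hmem⟩)

lemma uN_bound (hk : 0 < k) (q T : ℕ) (R : Fin k → Fin k → Prop) (σ : Equiv.Perm (Fin k))
    (ν τ α : ℝ)
    (hν : 0 < ν) (hτ : 0 < τ) (hτα : τ ≤ α / 2) (hτhalf : τ ≤ 1 / 2) (hτltα : τ < α)
    (hνα : ν ≤ α) (hνk : 1 ≤ ν * k)
    (hexp : IsRobustOutexpander R ν τ)
    (hdeg : ∀ x, α * (k : ℝ) ≤ (outDeg R x : ℝ) ∧ α * (k : ℝ) ≤ (inDeg R x : ℝ))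
    (hC : ∀ x, R x (σ x))
    (hq : q = ⌈(2:ℝ)/ν⌉₊ + 2) (hT : 4 * (q : ℝ) / ν ≤ (T : ℝ)) :
    ∀ n, n ≤ k → ∀ x, uN hk q T R σ n x + 2 ≤ T + q := by
  intro n
  induction n with
  | zero =>
    intro _ x
    simp only [uN, Finset.range_zero, Finset.sum_empty]
    omega
  | succ n ih =>
    intro hn x
    have hstep : uN hk q T R σ (n+1) x = uN hk q T R σ n x + cnt q (gF hk q T R σ n) x := by
      rw [uN, Finset.sum_range_succ]; rfl
    have hcntle : cnt q (gF hk q T R σ n) x ≤ q - 1 := by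
      calc cnt q (gF hk q T R σ n) x ≤ (Finset.Ico 1 q).card :=
            Finset.card_le_card (Finset.filter_subset _ _)
        _ = q - 1 := Nat.card_Ico 1 q
    have hprev := ih (by omega) x
    by_cases hcase : T ≤ uN hk q T R σ n x
    · have hgood := (gF_good hk q T R σ ν τ α hν hτ hτα hτhalf hτltα hνα hνk hexp hdeg hC
        hq hT n (by omega)).2.2.2
      have hcnt0 : cnt q (gF hk q T R σ n) x = 0 := by
        rw [cnt, Finset.card_eq_zero, Finset.filter_eq_empty_iff]
        intro j hj
        obtain ⟨hj1, hj2⟩ := Finset.mem_Ico.1 hj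
        intro hjx
        exact hgood j hj1 hj2 (hjx ▸ hcase)
      omega
    · omega

end UW



namespace UW

variable {V : Type*}

lemma outC_sum {ι : Type*} (s : Finset ι) (g : ι → Multiset (V × V)) (x : V) :
    outC (∑ i ∈ s, g i) x = ∑ i ∈ s, outC (g i) x := by
  induction s using Finset.cons_induction with
  | empty => simp [outC]
  | cons i s hi ih => rw [Finset.sum_cons, Finset.sum_cons, outC_add, ih]

lemma inC_sum {ι : Type*} (s : Finset ι) (g : ι → Multiset (V × V)) (x : V) :
    inC (∑ i ∈ s, g i) x = ∑ i ∈ s, inC (g i) x := by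
  induction s using Finset.cons_induction with
  | empty => simp [inC]
  | cons i s hi ih => rw [Finset.sum_cons, Finset.sum_cons, inC_add, ih]

lemma outC_replicate (n : ℕ) (e : V × V) (x : V) :
    outC (Multiset.replicate n e) x = if e.1 = x then n else 0 := by
  induction n with
  | zero => simp [outC]
  | succ n ih =>
    rw [Multiset.replicate_succ, outC_cons, ih]
    split <;> omega

lemma inC_replicate (n : ℕ) (e : V × V) (x : V) :
    inC (Multiset.replicate n e) x = if e.2 = x then n else 0 := by
  induction n with
  | zero => simp [inC]
  | succ n ih =>
    rw [Multiset.replicate_succ, inC_cons, ih]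
    split <;> omega

lemma isWalk_getElem_zero {a b : V} {l : List (V × V)} (h : IsWalk a l b)
    (hl : 0 < l.length) : (l[0]'hl).1 = a := by
  cases l with
  | nil => simp at hl
  | cons e t => exact h.1

lemma isWalk_getElem_succ {a b : V} {l : List (V × V)} (h : IsWalk a l b) :
    ∀ i (hi : i + 1 < l.length), (l[i]'(by omega)).2 = (l[i+1]'hi).1 := by
  induction l generalizing a with
  | nil => intro i hi; simp at hi
  | cons e t ih =>
    intro i hi
    cases i with
    | zero =>
      have h2 := h.2
      have ht : 0 < t.length := by
        simp only [List.length_cons] at hi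
        omega
      simpa using (isWalk_getElem_zero h2 ht).symm
    | succ i =>
      have hi' : i + 1 < t.length := by
        simp only [List.length_cons] at hi
        omega
      simpa using ih h.2 i hi'

lemma isWalk_getLast {a b : V} {l : List (V × V)} (h : IsWalk a l b) (hl : l ≠ []) :
    (l.getLast hl).2 = b := by
  induction l generalizing a with
  | nil => exact absurd rfl hl
  | cons e t ih =>
    cases t with
    | nil =>
      have : e.2 = b := h.2
      simpa [List.getLast] using this
    | cons f t' =>
      rw [List.getLast_cons (by simp)]
      exact ih h.2 (by simp)

lemma card_filter_congr {β : Type*} {p q2 : β → Prop} (i1 : DecidablePred p)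
    (i2 : DecidablePred q2) (s : Multiset β) (h : ∀ a, p a ↔ q2 a) :
    Multiset.card (@Multiset.filter _ p i1 s) = Multiset.card (@Multiset.filter _ q2 i2 s) := by
  have hpq : p = q2 := funext fun a => propext (h a)
  subst hpq
  congr

lemma outC_map_range [DecidableEq V] (n : ℕ) (g1 g2 : ℕ → V) (x : V) :
    outC ((Finset.range n).val.map (fun i => (g1 i, g2 i))) x
      = ((Finset.range n).filter (fun i => g1 i = x)).card := by
  rw [outC, Multiset.filter_map, Multiset.card_map, Finset.card_def, Finset.filter_val]
  exact card_filter_congr _ _ _ (fun a => Iff.rfl)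

lemma inC_map_range [DecidableEq V] (n : ℕ) (g1 g2 : ℕ → V) (x : V) :
    inC ((Finset.range n).val.map (fun i => (g1 i, g2 i))) x
      = ((Finset.range n).filter (fun i => g2 i = x)).card := by
  rw [inC, Multiset.filter_map, Multiset.card_map, Finset.card_def, Finset.filter_val]
  exact card_filter_congr _ _ _ (fun a => Iff.rfl)

end UW

/-- Lemma: existence of universal walks.
With the hierarchy `0 < 1/k ≪ ν ≪ τ ≪ α < 1`: let `R` be a robust `(ν,τ)`-outexpander on
`k` vertices with `δ⁰(R) ≥ αk` and let `C` be a Hamilton cycle of `R`, encoded by its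
successor permutation `σ` (a single cycle all of whose edges lie in `R`). Then there is a
universal walk `U` for `C` with parameter `ℓ' = 36/ν²`, encoded as a closed walk
`W 0, W 1, …, W L = W 0` in `R` such that:
(U3) `U` leaves (and hence enters) every vertex exactly `ℓ'` times;
(U1)–(U2) there are elementary chord sequences, one from each `v` to `σ v` (encoded by
`Wc v 0 = v, …, Wc v (t v) = σ v` with chord edges `σ⁻¹(Wc v i) → Wc v (i+1) ∈ E(R)`),
each with at most `√ℓ'/2` edges, such that the multiset of edges of `U` is the sum of the
multiset of all these chord edges and a multiset of edges of `C`. -/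
theorem stmt13 : ∀ α : ℝ, 0 < α → α < 1 →
    ∃ τ₀ : ℝ, 0 < τ₀ ∧ ∀ τ : ℝ, 0 < τ → τ ≤ τ₀ →
    ∃ ν₀ : ℝ, 0 < ν₀ ∧ ∀ ν : ℝ, 0 < ν → ν ≤ ν₀ →
    ∃ k₀ : ℕ, ∀ k : ℕ, k₀ ≤ k →
    ∀ R : Fin k → Fin k → Prop,
    IsRobustOutexpander R ν τ →
    (∀ x, α * (k : ℝ) ≤ (outDeg R x : ℝ) ∧ α * (k : ℝ) ≤ (inDeg R x : ℝ)) →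
    ∀ σ : Equiv.Perm (Fin k), (∀ x, R x (σ x)) → (∀ x y, σ.SameCycle x y) →
    ∀ l' : ℕ, (l' : ℝ) = 36 / ν ^ 2 →
    ∃ (L : ℕ) (W : ℕ → Fin k) (t : Fin k → ℕ) (Wc : Fin k → ℕ → Fin k),
      0 < L ∧ W L = W 0 ∧
      (∀ i < L, R (W i) (W (i + 1))) ∧
      (∀ v : Fin k, ((Finset.range L).filter (fun i => W i = v)).card = l') ∧
      (∀ v : Fin k, Wc v 0 = v ∧ Wc v (t v) = σ v ∧
        (∀ i < t v, R (σ.symm (Wc v i)) (Wc v (i + 1))) ∧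
        ((t v : ℝ) ≤ Real.sqrt (l' : ℝ) / 2)) ∧
      (∃ Cedges : Multiset (Fin k × Fin k),
        (∀ e ∈ Cedges, e.2 = σ e.1) ∧
        ((Finset.range L).val.map (fun i => (W i, W (i + 1)))) =
          (∑ v : Fin k, ((Finset.range (t v)).val.map
            (fun i => (σ.symm (Wc v i), Wc v (i + 1))))) + Cedges) := by
  intro α hα0 hα1
  refine ⟨α / 4, by positivity, ?_⟩
  intro τ hτ0 hττ0
  refine ⟨min τ (1/6), by positivity, ?_⟩
  intro ν hν0 hνν0
  refine ⟨⌈(4:ℝ)/ν⌉₊ + 1, ?_⟩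
  intro k hkk R hexp hdeg σ hC hcyc l' hl'
  have hν6 : ν ≤ 1/6 := le_trans hνν0 (min_le_right _ _)
  have hντ : ν ≤ τ := le_trans hνν0 (min_le_left _ _)
  have hτα : τ ≤ α / 2 := by linarith
  have hτhalf : τ ≤ 1 / 2 := by linarith
  have hτltα : τ < α := by linarith
  have hνα : ν ≤ α := by linarith
  have hk : 0 < k := by omega
  have hkR : (4:ℝ)/ν ≤ (k:ℝ) := by
    have h1 : ((⌈(4:ℝ)/ν⌉₊ : ℕ) : ℝ) ≤ (k:ℝ) := by exact_mod_cast (by omega : ⌈(4:ℝ)/ν⌉₊ ≤ k)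
    exact le_trans (Nat.le_ceil _) h1
  have hνk : 1 ≤ ν * k := by
    have h2 : (4:ℝ) ≤ ν * k := by
      have := mul_le_mul_of_nonneg_left hkR (le_of_lt hν0)
      rw [mul_div_cancel₀ _ (ne_of_gt hν0)] at this
      linarith
    linarith
  -- parameters
  set q : ℕ := ⌈(2:ℝ)/ν⌉₊ + 2 with hqdef
  set T : ℕ := ⌈4*(q:ℝ)/ν⌉₊ with hTdef
  have hq2 : 2 ≤ q := by omega
  have hT : 4 * (q : ℝ) / ν ≤ (T : ℝ) := Nat.le_ceil _
  have hq3ν : (q:ℝ) ≤ 3/ν := by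
    have h1 : (⌈(2:ℝ)/ν⌉₊ : ℝ) < 2/ν + 1 := Nat.ceil_lt_add_one (by positivity)
    have h2 : (q:ℝ) = (⌈(2:ℝ)/ν⌉₊ : ℝ) + 2 := by rw [hqdef]; push_cast; ring
    have h3 : (3:ℝ) ≤ 1/ν := by
      rw [le_div_iff₀ hν0]; linarith
    have h4 : 2/ν + 3 ≤ 3/ν := by
      have : (1:ℝ)/ν + 2/ν = 3/ν := by ring
      linarith
    linarith
  have hl'pos : 0 < l' := by
    by_contra h
    have : l' = 0 := by omega
    rw [this] at hl'
    have : (0:ℝ) < 36 / ν^2 := by positivity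
    simp at hl'
    linarith [hl'.symm ▸ this]
  have hsqrt : Real.sqrt (l' : ℝ) = 6/ν := by
    rw [hl', show (36:ℝ)/ν^2 = (6/ν)^2 by rw [div_pow]; norm_num]
    exact Real.sqrt_sq (by positivity)
  have htbound : (q : ℝ) ≤ Real.sqrt (l' : ℝ) / 2 := by
    rw [hsqrt]
    have : (6:ℝ)/ν/2 = 3/ν := by ring
    linarith
  have hTq : T + q ≤ l' := by
    have hq'ν : (q:ℝ) * ν ≤ 3 := by
      have := mul_le_mul_of_nonneg_right hq3ν (le_of_lt hν0)
      rwa [div_mul_cancel₀ _ (ne_of_gt hν0)] at this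
    have hT'ν : (T:ℝ) * ν ≤ 4*q + ν := by
      have h1 : (T:ℝ) < 4*(q:ℝ)/ν + 1 := Nat.ceil_lt_add_one (by positivity)
      have := mul_le_mul_of_nonneg_right (le_of_lt h1) (le_of_lt hν0)
      rw [add_mul, div_mul_cancel₀ _ (ne_of_gt hν0), one_mul] at this
      linarith
    have hgoal : ((T:ℝ) + q) * ν^2 ≤ 36 := by
      nlinarith [hν0, hν6, Nat.cast_nonneg (α := ℝ) q, Nat.cast_nonneg (α := ℝ) T,
        sq_nonneg ν, mul_le_mul_of_nonneg_right hq'ν (le_of_lt hν0)]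
    have : ((T:ℝ) + q) ≤ (l' : ℝ) := by
      rw [hl', le_div_iff₀ (by positivity : (0:ℝ) < ν^2)]
      exact hgoal
    exact_mod_cast this
  -- the chord sequences
  set Wc : Fin k → ℕ → Fin k := fun v => UW.gF hk q T R σ v.val with hWcdef
  have hgood : ∀ v : Fin k, Wc v 0 = v ∧ Wc v q = σ v ∧
      (∀ i < q, R (σ.symm (Wc v i)) (Wc v (i+1))) := by
    intro v
    have := UW.gF_good hk q T R σ ν τ α hν0 hτ0 hτα hτhalf hτltα hνα hνk hexp hdeg hC
      rfl hT v.val (le_of_lt v.isLt)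
    have hvv : (⟨v.val % k, Nat.mod_lt v.val hk⟩ : Fin k) = v := by
      apply Fin.ext
      simp [Nat.mod_eq_of_lt v.isLt]
    rw [hvv] at this
    exact ⟨this.1, this.2.1, this.2.2.1⟩
  set U : Fin k → ℕ := fun x => UW.uN hk q T R σ k x with hUdef
  have hUb : ∀ x, U x + 2 ≤ T + q :=
    UW.uN_bound hk q T R σ ν τ α hν0 hτ0 hτα hτhalf hτltα hνα hνk hexp hdeg hC rfl hT k le_rfl
  -- edge multisets
  set chordM : Multiset (Fin k × Fin k) :=
    ∑ v : Fin k, ((Finset.range q).val.map (fun i => (σ.symm (Wc v i), Wc v (i + 1))))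
    with hchordM
  set m : Fin k → ℕ := fun x => l' - (1 + U (σ x)) with hmdef
  set CedgesM : Multiset (Fin k × Fin k) :=
    ∑ x : Fin k, Multiset.replicate (m x) (x, σ x) with hCedgesM
  set M : Multiset (Fin k × Fin k) := chordM + CedgesM with hM
  have hm1 : ∀ x, 1 ≤ m x := by
    intro x
    have := hUb (σ x)
    rw [hmdef]
    simp only
    omega
  have hmsum : ∀ x, 1 + U (σ x) + m x = l' := by
    intro x
    have := hUb (σ x)
    rw [hmdef]
    simp only
    omega
  -- counting helpers
  have hsplit0 : ∀ (p : ℕ → Prop) (inst : DecidablePred p), ((Finset.range q).filter p).card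
      = (if p 0 then 1 else 0) + ((Finset.Ico 1 q).filter p).card := by
    intro p inst
    rw [Finset.range_eq_Ico, ← Finset.Ico_union_Ico_eq_Ico (Nat.zero_le 1) (by omega : 1 ≤ q),
      Finset.filter_union, Finset.card_union_of_disjoint
        (Finset.disjoint_filter_filter (Finset.Ico_disjoint_Ico_consecutive 0 1 q))]
    congr 1
    rw [show Finset.Ico 0 1 = {0} from Nat.Ico_succ_singleton 0, Finset.filter_singleton]
    split <;> simp
  have hsplitq : ∀ (p : ℕ → Prop) (inst : DecidablePred p), ((Finset.Ico 1 (q+1)).filter p).card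
      = ((Finset.Ico 1 q).filter p).card + (if p q then 1 else 0) := by
    intro p inst
    rw [← Finset.Ico_union_Ico_eq_Ico (by omega : 1 ≤ q) (by omega : q ≤ q + 1),
      Finset.filter_union, Finset.card_union_of_disjoint
        (Finset.disjoint_filter_filter (Finset.Ico_disjoint_Ico_consecutive 1 q (q+1)))]
    congr 1
    rw [show Finset.Ico q (q+1) = {q} from Nat.Ico_succ_singleton q, Finset.filter_singleton]
    split <;> simp
  have hshift : ∀ (p : ℕ → Prop) (inst : DecidablePred p),
      ((Finset.range q).filter (fun i => p (i+1))).card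
      = ((Finset.Ico 1 (q+1)).filter p).card := by
    intro p inst
    have himg : Finset.Ico 1 (q+1) = (Finset.range q).image (· + 1) := by
      rw [Finset.range_eq_Ico]
      ext j
      simp only [Finset.mem_Ico, Finset.mem_image]
      constructor
      · intro hj
        exact ⟨j - 1, ⟨by omega, by omega⟩, by omega⟩
      · rintro ⟨i, ⟨_, h2⟩, rfl⟩
        omega
    rw [himg, Finset.filter_image, Finset.card_image_of_injective _ (add_left_injective 1)]
  have hUsum : ∀ y, ∑ v : Fin k, UW.cnt q (Wc v) y = U y := by
    intro y
    simp only [hWcdef, hUdef]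
    exact Fin.sum_univ_eq_sum_range (fun m => UW.cnt q (UW.gF hk q T R σ m) y) k
  -- degrees of the chord part
  have houtChord : ∀ x, UW.outC chordM x = 1 + U (σ x) := by
    intro x
    rw [hchordM, UW.outC_sum]
    have hv : ∀ v : Fin k, UW.outC ((Finset.range q).val.map
        (fun i => (σ.symm (Wc v i), Wc v (i + 1)))) x
        = (if v = σ x then 1 else 0) + UW.cnt q (Wc v) (σ x) := by
      intro v
      rw [UW.outC_map_range q (fun i => σ.symm (Wc v i)) (fun i => Wc v (i+1)) x]
      have e1 : ((Finset.range q).filter (fun i => σ.symm (Wc v i) = x)).card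
          = ((Finset.range q).filter (fun i => Wc v i = σ x)).card := by
        apply congrArg Finset.card
        apply Finset.filter_congr
        intro i _
        simp [Equiv.symm_apply_eq]
      rw [e1, hsplit0 (fun i => Wc v i = σ x) _]
      have e2 : (if Wc v 0 = σ x then 1 else 0) = (if v = σ x then 1 else 0) :=
        if_congr (by rw [(hgood v).1]) rfl rfl
      rw [e2]
      rfl
    rw [Finset.sum_congr rfl (fun v _ => hv v), Finset.sum_add_distrib]
    have e4 : (∑ v : Fin k, if v = σ x then 1 else 0) = 1 := by
      rw [Finset.sum_ite_eq' Finset.univ (σ x) (fun _ => 1)]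
      simp
    rw [e4, hUsum (σ x)]
  have hinChord : ∀ x, UW.inC chordM x = U x + 1 := by
    intro x
    rw [hchordM, UW.inC_sum]
    have hv : ∀ v : Fin k, UW.inC ((Finset.range q).val.map
        (fun i => (σ.symm (Wc v i), Wc v (i + 1)))) x
        = UW.cnt q (Wc v) x + (if v = σ.symm x then 1 else 0) := by
      intro v
      rw [UW.inC_map_range q (fun i => σ.symm (Wc v i)) (fun i => Wc v (i+1)) x]
      have e1 : ((Finset.range q).filter (fun i => Wc v (i + 1) = x)).card
          = ((Finset.Ico 1 (q+1)).filter (fun j => Wc v j = x)).card :=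
        hshift (fun j => Wc v j = x) _
      rw [e1, hsplitq (fun j => Wc v j = x) _]
      have e2 : (if Wc v q = x then 1 else 0) = (if v = σ.symm x then 1 else 0) :=
        if_congr (by rw [(hgood v).2.1]; exact Equiv.apply_eq_iff_eq_symm_apply σ) rfl rfl
      rw [e2]
      rfl
    rw [Finset.sum_congr rfl (fun v _ => hv v), Finset.sum_add_distrib]
    have e4 : (∑ v : Fin k, if v = σ.symm x then 1 else 0) = 1 := by
      rw [Finset.sum_ite_eq' Finset.univ (σ.symm x) (fun _ => 1)]
      simp
    rw [e4, hUsum x]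
  -- degrees of the cycle-edge part
  have houtCed : ∀ x, UW.outC CedgesM x = m x := by
    intro x
    rw [hCedgesM, UW.outC_sum]
    simp only [UW.outC_replicate]
    rw [Finset.sum_eq_single x]
    · simp
    · intro y _ hyx
      simp [hyx]
    · intro hx
      exact absurd (Finset.mem_univ x) hx
  have hinCed : ∀ x, UW.inC CedgesM x = m (σ.symm x) := by
    intro x
    rw [hCedgesM, UW.inC_sum]
    simp only [UW.inC_replicate]
    rw [Finset.sum_eq_single (σ.symm x)]
    · simp
    · intro y _ hyx
      have : ¬ (σ y = x) := by
        rw [Equiv.apply_eq_iff_eq_symm_apply]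
        exact hyx
      simp [this]
    · intro hx
      exact absurd (Finset.mem_univ (σ.symm x)) hx
  -- degrees of M
  have hMout : ∀ x, UW.outC M x = l' := by
    intro x
    rw [hM, UW.outC_add, houtChord, houtCed]
    exact hmsum x
  have hMin : ∀ x, UW.inC M x = l' := by
    intro x
    rw [hM, UW.inC_add, hinChord, hinCed]
    have := hmsum (σ.symm x)
    rw [Equiv.apply_symm_apply] at this
    omega
  have hbal : ∀ x, UW.inC M x = UW.outC M x := fun x => by rw [hMout, hMin]
  -- edges of M lie in R
  have hedges : ∀ e ∈ M, R e.1 e.2 := by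
    intro e he
    rw [hM] at he
    rcases Multiset.mem_add.1 he with h | h
    · rw [hchordM] at h
      obtain ⟨v, _, hv⟩ := Multiset.mem_sum.1 h
      obtain ⟨i, hi, rfl⟩ := Multiset.mem_map.1 hv
      have hi' : i < q := by
        have : i ∈ Finset.range q := hi
        simpa using this
      exact (hgood v).2.2 i hi'
    · rw [hCedgesM] at h
      obtain ⟨y, _, hy⟩ := Multiset.mem_sum.1 h
      have := Multiset.eq_of_mem_replicate hy
      rw [this]
      exact hC y
  -- the Hamilton cycle as a base closed walk
  set a : Fin k := ⟨0, hk⟩ with hadef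
  have hpowit : ∀ (n : ℕ) (y : Fin k), (σ ^ n) y = (⇑σ)^[n] y := by
    intro n y
    rw [Equiv.Perm.iterate_eq_pow]
  have hper : a ∈ Function.periodicPts ⇑σ := by
    obtain ⟨i, hi0, _, hia⟩ := Equiv.Perm.SameCycle.exists_pow_eq σ (hcyc a a)
    exact ⟨i, hi0, by rw [Function.IsPeriodicPt, Function.IsFixedPt, ← hpowit]; exact hia⟩
  set d : ℕ := Function.minimalPeriod ⇑σ a with hddef
  have hd0 : 0 < d := Function.minimalPeriod_pos_of_mem_periodicPts hper
  have hsurj : ∀ y : Fin k, ∃ j, j < d ∧ (⇑σ)^[j] a = y := by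
    intro y
    obtain ⟨i, _, _, hia⟩ := Equiv.Perm.SameCycle.exists_pow_eq σ (hcyc a y)
    refine ⟨i % d, Nat.mod_lt _ hd0, ?_⟩
    rw [hddef, Function.iterate_mod_minimalPeriod_eq, ← hpowit]
    exact hia
  have hinj : ∀ i, i < d → ∀ j, j < d → (⇑σ)^[i] a = (⇑σ)^[j] a → i = j := by
    intro i hi j hj h
    exact Function.iterate_injOn_Iio_minimalPeriod (Set.mem_Iio.2 hi) (Set.mem_Iio.2 hj) h
  have hdk : d = k := by
    have himg : (Finset.range d).image (fun j => (⇑σ)^[j] a) = Finset.univ := by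
      apply Finset.eq_univ_of_forall
      intro y
      obtain ⟨j, hj, hy⟩ := hsurj y
      exact Finset.mem_image.2 ⟨j, Finset.mem_range.2 hj, hy⟩
    have hcard : ((Finset.range d).image (fun j => (⇑σ)^[j] a)).card = d := by
      rw [Finset.card_image_of_injOn, Finset.card_range]
      intro i hi j hj h
      exact hinj i (Finset.mem_range.1 (Finset.mem_coe.1 hi)) j
        (Finset.mem_range.1 (Finset.mem_coe.1 hj)) h
    rw [himg] at hcard
    rw [← hcard, Finset.card_univ, Fintype.card_fin]
  have hka : (⇑σ)^[k] a = a := by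
    have h := Function.iterate_minimalPeriod (f := ⇑σ) (x := a)
    rw [← hddef, hdk] at h
    exact h
  set base : List (Fin k × Fin k) :=
    (List.range k).map (fun j => ((⇑σ)^[j] a, (⇑σ)^[j+1] a)) with hbasedef
  have hbasewalk0 : ∀ n : ℕ, UW.IsWalk a
      ((List.range n).map (fun j => ((⇑σ)^[j] a, (⇑σ)^[j+1] a))) ((⇑σ)^[n] a) := by
    intro n
    induction n with
    | zero => exact rfl
    | succ n ih =>
      rw [List.range_succ, List.map_append]
      exact UW.isWalk_append ih ⟨rfl, rfl⟩
  have hbasewalk : UW.IsWalk a base a := by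
    have := hbasewalk0 k
    rwa [hka] at this
  have hbasene : base ≠ [] := by
    rw [hbasedef]
    simp only [ne_eq, List.map_eq_nil_iff, List.range_eq_nil]
    omega
  have hbaseform : ∀ e ∈ base, e.2 = σ e.1 := by
    intro e he
    rw [hbasedef] at he
    obtain ⟨j, _, rfl⟩ := List.mem_map.1 he
    exact Function.iterate_succ_apply' (⇑σ) j a
  have hbasend : base.Nodup := by
    rw [hbasedef]
    apply List.Nodup.map_on ?_ List.nodup_range
    intro x hx y hy hxy
    have h1 : (⇑σ)^[x] a = (⇑σ)^[y] a := congrArg Prod.fst hxy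
    exact hinj x (hdk ▸ List.mem_range.1 hx) y (hdk ▸ List.mem_range.1 hy) h1
  have hmemM : ∀ e ∈ base, e ∈ M := by
    intro e he
    have h2 : e ∈ CedgesM := by
      rw [hCedgesM]
      apply Multiset.mem_sum.2
      refine ⟨e.1, Finset.mem_univ _, ?_⟩
      rw [show e = (e.1, σ e.1) from Prod.ext rfl (hbaseform e he)]
      exact Multiset.mem_replicate.2 ⟨Nat.one_le_iff_ne_zero.1 (hm1 e.1), rfl⟩
    rw [hM]
    exact Multiset.mem_add.2 (Or.inr h2)
  have hsubM : (↑base : Multiset (Fin k × Fin k)) ≤ M := by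
    rw [Multiset.le_iff_count]
    intro e
    by_cases he : e ∈ base
    · calc Multiset.count e ↑base ≤ 1 :=
            (Multiset.nodup_iff_count_le_one.1 (Multiset.coe_nodup.2 hbasend)) e
        _ ≤ Multiset.count e M := Multiset.one_le_count_iff_mem.2 (hmemM e he)
    · rw [Multiset.count_eq_zero_of_notMem (by simpa using he)]
      exact Nat.zero_le _
  have hcov : ∀ e ∈ M, ∃ f ∈ base, f.1 = e.1 := by
    intro e _
    obtain ⟨j, hj, hy⟩ := hsurj e.1
    exact ⟨((⇑σ)^[j] a, (⇑σ)^[j+1] a),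
      List.mem_map.2 ⟨j, List.mem_range.2 (hdk ▸ hj), rfl⟩, hy⟩
  obtain ⟨l, hlne, hlwalk, hlM⟩ := UW.euler_circuit M a base hbasene hbasewalk hsubM hbal hcov
  have hL0 : 0 < l.length := List.length_pos_iff.2 hlne
  set W : ℕ → Fin k := fun i => if h : i < l.length then (l[i]'h).1 else a with hWdef
  have hWeq : ∀ i (hi : i < l.length), W i = (l[i]'hi).1 := by
    intro i hi
    rw [hWdef]
    exact dif_pos hi
  have hWout : ∀ i, l.length ≤ i → W i = a := by
    intro i hi
    rw [hWdef]
    exact dif_neg (by omega)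
  have hpair : ∀ i (hi : i < l.length), (W i, W (i+1)) = l[i]'hi := by
    intro i hi
    by_cases h2 : i + 1 < l.length
    · have h4 := UW.isWalk_getElem_succ hlwalk i h2
      rw [hWeq i hi, hWeq (i+1) h2, ← h4]
    · have h3 : W (i+1) = a := hWout (i+1) (by omega)
      have h5 : i = l.length - 1 := by omega
      subst h5
      have h6 : (l[l.length - 1]'hi).2 = a := by
        rw [← List.getLast_eq_getElem hlne]
        exact UW.isWalk_getLast hlwalk hlne
      rw [hWeq _ hi, h3, ← h6]
  have hlist : (List.range l.length).map (fun i => (W i, W (i+1))) = l := by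
    apply List.ext_getElem
    · simp
    · intro i h1 h2
      simp only [List.getElem_map, List.getElem_range]
      exact hpair i h2
  have hmapms : (Finset.range l.length).val.map (fun i => (W i, W (i+1)))
      = (↑l : Multiset (Fin k × Fin k)) := by
    have h0 : (Finset.range l.length).val
        = ((List.range l.length : List ℕ) : Multiset ℕ) := rfl
    rw [h0]
    rw [Multiset.map_coe]
    exact congrArg _ hlist
  refine ⟨l.length, W, fun _ => q, Wc, hL0, ?_, ?_, ?_, ?_, ⟨CedgesM, ?_, ?_⟩⟩
  · -- W L = W 0
    have hW0 : W 0 = a := by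
      rw [hWeq 0 hL0]
      exact UW.isWalk_getElem_zero hlwalk hL0
    rw [hW0]
    exact hWout l.length le_rfl
  · -- edges of the walk
    intro i hi
    have hm : l[i]'hi ∈ M := by
      rw [← hlM]
      exact Multiset.mem_coe.2 (l.getElem_mem hi)
    have h := hedges _ hm
    have h1 : W i = (l[i]'hi).1 := congrArg Prod.fst (hpair i hi)
    have h2 : W (i+1) = (l[i]'hi).2 := congrArg Prod.snd (hpair i hi)
    rw [h1, h2]
    exact h
  · -- visit counts
    intro v
    have e2 : UW.outC M v = l' := hMout v
    rw [← hlM, ← hmapms] at e2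
    rw [UW.outC, Multiset.filter_map, Multiset.card_map] at e2
    rw [Finset.card_def, Finset.filter_val]
    exact (UW.card_filter_congr _ _ _ (fun i => Iff.rfl)).trans e2
  · -- chord sequences
    intro v
    exact ⟨(hgood v).1, (hgood v).2.1, (hgood v).2.2, htbound⟩
  · -- C-edges have the right form
    intro e he
    rw [hCedgesM] at he
    obtain ⟨y, _, hy⟩ := Multiset.mem_sum.1 he
    have := Multiset.eq_of_mem_replicate hy
    rw [this]
  · -- the edge multiset identity
    exact hmapms.trans (hlM.trans hM)
end

section
/- Let B₁, B₂, B₃ be edge-disjoint bicycles (1-regular digraphs with exactly two cycles each) on a common vertex set which are triply-switchable with switch K*_{2,3} (i.e., for each i there are independent edges ℓᵢ = x xᵢ and rᵢ = y yᵢ lying on different cycles of Bᵢ such that the six edges form a copy of K_{2,3} oriented from {x,y} to {x₁,x₂,x₃} or analogously). Then the digraphs obtained from each Bᵢ by deleting ℓᵢ = xxᵢ and rᵢ = yyᵢ and adding xyᵢ and yxᵢ are each Hamilton cycles on the common vertex set. Consequently, B₁ ∪ B₂ ∪ B₃ has a decomposition into three edge-disjoint Hamilton cycles. -/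
open Finset
open scoped Classical

noncomputable def numCycles {V : Type*} [Fintype V] (σ : Equiv.Perm V) : ℕ :=
  (Finset.univ.image (fun x : V => Finset.univ.filter (fun y => σ.SameCycle x y))).card

lemma merge_lemma {V : Type*} [Fintype V] (σ : Equiv.Perm V) (x y : V)
    (h2 : numCycles σ = 2) (hd : ¬ σ.SameCycle x y) :
    ∀ z w : V, (σ * Equiv.swap x y).SameCycle z w := by
  set τ := σ * Equiv.swap x y with hτdef
  have hτx : τ x = σ y := by simp [hτdef, Equiv.Perm.mul_apply]
  have hτy : τ y = σ x := by simp [hτdef, Equiv.Perm.mul_apply]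
  have hτz : ∀ z, z ≠ x → z ≠ y → τ z = σ z := by
    intro z h1 h2
    simp [hτdef, Equiv.Perm.mul_apply, Equiv.swap_apply_of_ne_of_ne h1 h2]
  -- key1 : all positive powers of σ applied to y are in the τ-cycle of x
  have key1 : ∀ k : ℕ, τ.SameCycle x ((σ ^ (k + 1)) y) := by
    intro k
    induction k with
    | zero =>
      rw [pow_one, ← hτx]
      exact (Equiv.Perm.sameCycle_apply_right).mpr (Equiv.Perm.SameCycle.refl τ x)
    | succ k ih =>
      by_cases hy : (σ ^ (k + 1)) y = y
      · have : (σ ^ (k + 2)) y = σ y := by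
          rw [show k + 2 = 1 + (k+1) by ring, pow_add, Equiv.Perm.mul_apply, hy, pow_one]
        rw [this, ← hτx]
        exact (Equiv.Perm.sameCycle_apply_right).mpr (Equiv.Perm.SameCycle.refl τ x)
      · have hx : (σ ^ (k + 1)) y ≠ x := by
          intro h
          exact hd (Equiv.Perm.SameCycle.symm ⟨((k + 1 : ℕ) : ℤ), by rw [zpow_natCast, h]⟩)
        have : (σ ^ (k + 2)) y = τ ((σ ^ (k + 1)) y) := by
          rw [hτz _ hx hy, show k + 2 = 1 + (k+1) by ring, pow_add, Equiv.Perm.mul_apply,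
            pow_one]
        rw [this]
        exact (Equiv.Perm.sameCycle_apply_right).mpr ih
  have hord : 0 < orderOf σ := orderOf_pos σ
  obtain ⟨m, hm⟩ : ∃ m, orderOf σ = m + 1 := ⟨orderOf σ - 1, (Nat.succ_pred_eq_of_pos hord).symm⟩
  have hxy' : τ.SameCycle x y := by
    have := key1 m
    rwa [← hm, pow_orderOf_eq_one, Equiv.Perm.one_apply] at this
  have key2 : ∀ k : ℕ, τ.SameCycle x ((σ ^ (k + 1)) x) := by
    intro k
    induction k with
    | zero =>
      rw [pow_one, ← hτy]
      exact (Equiv.Perm.sameCycle_apply_right).mpr hxy'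
    | succ k ih =>
      by_cases hx : (σ ^ (k + 1)) x = x
      · have : (σ ^ (k + 2)) x = σ x := by
          rw [show k + 2 = 1 + (k+1) by ring, pow_add, Equiv.Perm.mul_apply, hx, pow_one]
        rw [this, ← hτy]
        exact (Equiv.Perm.sameCycle_apply_right).mpr hxy'
      · have hy : (σ ^ (k + 1)) x ≠ y := by
          intro h
          exact hd ⟨((k + 1 : ℕ) : ℤ), by rw [zpow_natCast, h]⟩
        have : (σ ^ (k + 2)) x = τ ((σ ^ (k + 1)) x) := by
          rw [hτz _ hx hy, show k + 2 = 1 + (k+1) by ring, pow_add, Equiv.Perm.mul_apply,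
            pow_one]
        rw [this]
        exact (Equiv.Perm.sameCycle_apply_right).mpr ih
  -- every vertex is in σ-cycle of x or of y
  set O : V → Finset V := fun z => Finset.univ.filter (fun w => σ.SameCycle z w) with hO
  have horbits : ∀ z : V, σ.SameCycle x z ∨ σ.SameCycle y z := by
    intro z
    have hOne : O x ≠ O y := by
      intro h
      apply hd
      have : y ∈ O y := by simp [hO]; exact Equiv.Perm.SameCycle.refl σ y
      rw [← h] at this
      simpa [hO] using this
    have hsub : ({O x, O y} : Finset (Finset V)) ⊆ Finset.univ.image O := by
      intro s hs
      simp only [Finset.mem_insert, Finset.mem_singleton] at hs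
      rcases hs with rfl | rfl
      · exact Finset.mem_image_of_mem O (Finset.mem_univ x)
      · exact Finset.mem_image_of_mem O (Finset.mem_univ y)
    have hcard : ({O x, O y} : Finset (Finset V)).card = 2 := by
      rw [Finset.card_insert_of_notMem (by simpa using hOne), Finset.card_singleton]
    have heq : ({O x, O y} : Finset (Finset V)) = Finset.univ.image O := by
      apply Finset.eq_of_subset_of_card_le hsub
      rw [hcard]
      exact le_of_eq h2
    have hz : O z ∈ ({O x, O y} : Finset (Finset V)) := by
      rw [heq]; exact Finset.mem_image_of_mem O (Finset.mem_univ z)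
    have hzz : z ∈ O z := by simp [hO]; exact Equiv.Perm.SameCycle.refl σ z
    simp only [Finset.mem_insert, Finset.mem_singleton] at hz
    rcases hz with h | h
    · left; rw [h] at hzz; simpa [hO] using hzz
    · right; rw [h] at hzz; simpa [hO] using hzz
  have hall : ∀ z : V, τ.SameCycle x z := by
    intro z
    rcases horbits z with h | h
    · obtain ⟨i, hi, _, hiz⟩ := h.exists_pow_eq''
      obtain ⟨j, hj⟩ : ∃ j, i = j + 1 := ⟨i - 1, (Nat.succ_pred_eq_of_pos hi).symm⟩
      rw [← hiz, hj]
      exact key2 j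
    · obtain ⟨i, hi, _, hiz⟩ := h.exists_pow_eq''
      obtain ⟨j, hj⟩ : ∃ j, i = j + 1 := ⟨i - 1, (Nat.succ_pred_eq_of_pos hi).symm⟩
      rw [← hiz, hj]
      exact key1 j
  intro z w
  exact (hall z).symm.trans (hall w)

/-- triple switches turn three bicycles into three Hamilton cycles.
`B 0, B 1, B 2` are edge-disjoint bicycles (1-regular digraphs, encoded as permutations,
with exactly two cycles each) on a common vertex set, which are triply-switchable: there
are vertices `x ≠ y` such that for each `i` the edges `ℓᵢ = x → B i x` and
`rᵢ = y → B i y` are independent (the five vertices `x, y, B i x, B i y` involved are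
suitably distinct) and lie on different cycles of `B i`, the heads `B 0 x, B 1 x, B 2 x`
are pairwise distinct, the heads `B 0 y, B 1 y, B 2 y` are pairwise distinct, and
`{B 0 y, B 1 y, B 2 y} ⊆ {B 0 x, B 1 x, B 2 x}` (so the six edges form a copy of
`K_{2,3}` oriented from `{x,y}` towards the size-3 class). Then the digraphs
`B i * swap x y` obtained from each `B i` by deleting `ℓᵢ, rᵢ` and adding
`x → B i y`, `y → B i x` are Hamilton cycles; moreover they are pairwise edge-disjoint
and have the same edge set as `B 0 ∪ B 1 ∪ B 2`, i.e. they decompose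
`B 0 ∪ B 1 ∪ B 2` into three edge-disjoint Hamilton cycles. -/
theorem stmt14 {V : Type*} [Fintype V] (B : Fin 3 → Equiv.Perm V) (x y : V)
    (hbic : ∀ i, numCycles (B i) = 2)
    (hdiff : ∀ i, ¬ (B i).SameCycle x y)
    (hedis : ∀ i j, i ≠ j → ∀ z, B i z ≠ B j z)
    (hxy : x ≠ y)
    (hxinj : Function.Injective (fun i => B i x))
    (hyinj : Function.Injective (fun i => B i y))
    (hsets : ∀ i, ∃ j, B i y = B j x)
    (hK : ∀ i, B i x ≠ x ∧ B i x ≠ y ∧ B i y ≠ x ∧ B i y ≠ y ∧ B i x ≠ B i y) :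
    (∀ i, ∀ z w : V, ((B i) * Equiv.swap x y).SameCycle z w) ∧
    (∀ i j, i ≠ j → ∀ z, ((B i) * Equiv.swap x y) z ≠ ((B j) * Equiv.swap x y) z) ∧
    (∀ z w : V, (∃ i, B i z = w) ↔ ∃ i, ((B i) * Equiv.swap x y) z = w) := by
  -- the map g : i ↦ j with B i y = B j x, and its surjectivity
  have hg : ∀ j, ∃ i, B j x = B i y := by
    choose g hgspec using hsets
    have hginj : Function.Injective g := by
      intro i i' h
      apply hyinj
      show B i y = B i' y
      rw [hgspec i, hgspec i', h]
    have hgsurj : Function.Surjective g := Finite.surjective_of_injective hginj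
    intro j
    obtain ⟨i, rfl⟩ := hgsurj j
    exact ⟨i, (hgspec i).symm⟩
  have happx : ∀ i, ((B i) * Equiv.swap x y) x = B i y := by
    intro i; simp [Equiv.Perm.mul_apply]
  have happy : ∀ i, ((B i) * Equiv.swap x y) y = B i x := by
    intro i; simp [Equiv.Perm.mul_apply]
  have happz : ∀ i z, z ≠ x → z ≠ y → ((B i) * Equiv.swap x y) z = B i z := by
    intro i z h1 h2
    simp [Equiv.Perm.mul_apply, Equiv.swap_apply_of_ne_of_ne h1 h2]
  refine ⟨fun i => merge_lemma (B i) x y (hbic i) (hdiff i), ?_, ?_⟩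
  · intro i j hij z
    by_cases hzx : z = x
    · subst hzx
      rw [happx, happx]
      intro h
      exact hij (hyinj h)
    by_cases hzy : z = y
    · subst hzy
      rw [happy, happy]
      intro h
      exact hij (hxinj h)
    · rw [happz i z hzx hzy, happz j z hzx hzy]
      exact hedis i j hij z
  · intro z w
    by_cases hzx : z = x
    · subst hzx
      constructor
      · rintro ⟨i, rfl⟩
        obtain ⟨j, hj⟩ := hg i
        exact ⟨j, by rw [happx, ← hj]⟩
      · rintro ⟨i, hi⟩
        rw [happx] at hi
        obtain ⟨j, hj⟩ := hsets i
        exact ⟨j, by rw [← hj, hi]⟩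
    by_cases hzy : z = y
    · subst hzy
      constructor
      · rintro ⟨i, rfl⟩
        obtain ⟨j, hj⟩ := hsets i
        exact ⟨j, by rw [happy, ← hj]⟩
      · rintro ⟨i, hi⟩
        rw [happy] at hi
        obtain ⟨j, hj⟩ := hg i
        exact ⟨j, by rw [← hj, hi]⟩
    · constructor
      · rintro ⟨i, rfl⟩
        exact ⟨i, happz i z hzx hzy⟩
      · rintro ⟨i, hi⟩
        rw [happz i z hzx hzy] at hi
        exact ⟨i, hi⟩
end
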